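/- arXiv:2009.10713 — 7 statements merged into one kernel-verified Lean document; each statement's English description precedes it below -/
import Mathlib

section
/- Let π₀ be a probability measure on a measurable space Ω, let φ : [0,1]^d × Ω → ℝ be jointly measurable with |φ(x; w)| ≤ 1 for all x and w, and let P be a probability measure on [0,1]^d. Suppose f(x) = ∫_Ω a(w) φ(x; w) dπ₀(w) for all x ∈ [0,1]^d, where a ∈ L²(π₀). If w₁, …, w_m are i.i.d. samples from π₀ and f_m(x) = (1/m) Σ_{j=1}^m a(w_j) φ(x; w_j), then E_{w₁,…,w_m}[ ‖f_m − f‖²_{L²(P)} ] ≤ (∫_Ω a(w)² dπ₀(w)) / m. -/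
open MeasureTheory ProbabilityTheory

section AuxiliaryLemmas
open Set


lemma measurePreserving_eval_pi {ι : Type*} [Fintype ι] {Ω : Type*} [MeasurableSpace Ω]
    (μ : Measure Ω) [IsProbabilityMeasure μ] (i : ι) :
    MeasurePreserving (Function.eval i) (Measure.pi fun _ : ι => μ) μ := by
  classical
  refine ⟨measurable_pi_apply i, ?_⟩
  ext s hs
  rw [Measure.map_apply (measurable_pi_apply i) hs]
  have hpre : (fun f : ι → Ω => f i) ⁻¹' s
      = Set.pi Set.univ (fun j => if j = i then s else Set.univ) := by
    ext W
    simp only [Set.mem_preimage, Set.mem_pi, Set.mem_univ, true_implies]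
    constructor
    · intro h j; split <;> simp_all
    · intro h; have := h i; simpa using this
  rw [show Function.eval i ⁻¹' s = (fun f : ι → Ω => f i) ⁻¹' s from rfl, hpre, Measure.pi_pi]
  simp [apply_ite μ]

lemma iIndepFun_eval_pi {ι : Type*} [Fintype ι] {Ω : Type*} [mΩ : MeasurableSpace Ω]
    (μ : Measure Ω) [IsProbabilityMeasure μ] :
    iIndepFun (fun i (W : ι → Ω) => W i) (Measure.pi fun _ : ι => μ) := by
  classical
  rw [iIndepFun_iff_measure_inter_preimage_eq_mul]
  intro S sets hsets
  have h1 : (⋂ i ∈ S, (fun W : ι → Ω => W i) ⁻¹' sets i)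
      = Set.pi Set.univ (fun i => if i ∈ S then sets i else Set.univ) := by
    ext W
    simp only [Set.mem_iInter, Set.mem_preimage, Set.mem_pi, Set.mem_univ, true_implies]
    constructor
    · intro h i; split <;> simp_all
    · intro h i hi; have := h i; simp [hi] at this; exact this
  rw [h1, Measure.pi_pi]
  have h2 : ∀ i ∈ S, (Measure.pi fun _ : ι => μ) ((fun W : ι → Ω => W i) ⁻¹' sets i)
      = μ (sets i) := fun i hi =>
    (measurePreserving_eval_pi μ i).measure_preimage (hsets i hi).nullMeasurableSet
  rw [Finset.prod_congr rfl h2]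
  simp only [apply_ite μ, measure_univ]
  rw [Finset.prod_ite_mem Finset.univ S (fun i => μ (sets i)), Finset.univ_inter]

lemma sample_mean_sq_le {Ω : Type*} [mΩ : MeasurableSpace Ω] (μ : Measure Ω)
    [IsProbabilityMeasure μ] (g : Ω → ℝ) (hgm : Measurable g) (hg : MemLp g 2 μ)
    (m : ℕ) (hm : 0 < m) :
    ∫ W : Fin m → Ω, ((1 / (m : ℝ)) * ∑ j, g (W j) - ∫ w, g w ∂μ) ^ 2
        ∂(Measure.pi fun _ : Fin m => μ)
      ≤ (∫ w, g w ^ 2 ∂μ) / m := by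
  have hm' : (m : ℝ) ≠ 0 := Nat.cast_ne_zero.mpr hm.ne'
  set ν := Measure.pi fun _ : Fin m => μ with hν
  haveI : IsProbabilityMeasure ν := by rw [hν]; infer_instance
  set c := ∫ w, g w ∂μ with hc
  set X : Fin m → (Fin m → Ω) → ℝ := fun j W => g (W j) with hX
  have hmp : ∀ j : Fin m, MeasurePreserving (Function.eval j) ν μ :=
    fun j => measurePreserving_eval_pi μ j
  have hXℒ : ∀ j, MemLp (X j) 2 ν := fun j => hg.comp_measurePreserving (hmp j)
  -- integral of each X j
  have hint : ∀ (h : Ω → ℝ), Measurable h → ∀ j : Fin m,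
      ∫ W, h (W j) ∂ν = ∫ w, h w ∂μ := by
    intro h hh j
    have h1 : ∫ y, h y ∂(Measure.map (Function.eval j) ν) = ∫ W, h (Function.eval j W) ∂ν :=
      integral_map (hmp j).measurable.aemeasurable
        (by rw [(hmp j).map_eq]; exact hh.aestronglyMeasurable)
    rw [(hmp j).map_eq] at h1
    exact h1.symm
  have hSℒ : MemLp (∑ j, X j) 2 ν := memLp_finset_sum' _ (fun j _ => hXℒ j)
  have hES : ∫ W, (∑ j, X j) W ∂ν = m * c := by
    simp only [Finset.sum_apply]
    rw [integral_finset_sum _ fun j _ => (hXℒ j).integrable one_le_two]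
    simp only [hX]
    rw [Finset.sum_congr rfl fun j _ => hint g hgm j]
    simp [hc, Finset.sum_const, mul_comm]
  -- independence
  have hind : iIndepFun (fun j (W : Fin m → Ω) => W j) ν :=
    iIndepFun_eval_pi μ
  have hindX := hind.comp (fun _ : Fin m => g) (fun _ => hgm)
  have hpair : Set.Pairwise ↑(Finset.univ : Finset (Fin m))
      (fun i j => IndepFun (X i) (X j) ν) :=
    fun i _ j _ hij => hindX.indepFun hij
  have hvar : variance (∑ j, X j) ν = ∑ j, variance (X j) ν :=
    IndepFun.variance_sum (fun j _ => hXℒ j) hpair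
  have hvb : ∀ j, variance (X j) ν ≤ ∫ w, g w ^ 2 ∂μ := by
    intro j
    have h1 := variance_le_expectation_sq (X := X j) (hXℒ j).aestronglyMeasurable
    have h2 : (∫ W, (X j ^ 2) W ∂ν) = ∫ w, g w ^ 2 ∂μ := by
      simp only [Pi.pow_apply, hX]
      exact hint (fun w => g w ^ 2) (hgm.pow_const 2) j
    calc variance (X j) ν ≤ ∫ W, (X j ^ 2) W ∂ν := h1
      _ = ∫ w, g w ^ 2 ∂μ := h2
  have key : ∀ W : Fin m → Ω, ((1 / (m : ℝ)) * ∑ j, g (W j) - c) ^ 2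
      = (1 / (m : ℝ)) ^ 2 * ((∑ j, X j) W - ∫ W', (∑ j, X j) W' ∂ν) ^ 2 := by
    intro W
    rw [hES]
    simp only [Finset.sum_apply, hX]
    field_simp
  calc ∫ W, ((1 / (m : ℝ)) * ∑ j, g (W j) - c) ^ 2 ∂ν
      = ∫ W, (1 / (m : ℝ)) ^ 2 * ((∑ j, X j) W - ∫ W', (∑ j, X j) W' ∂ν) ^ 2 ∂ν := by
        exact integral_congr_ae (Filter.Eventually.of_forall fun W => key W)
    _ = (1 / (m : ℝ)) ^ 2 * ∫ W, ((∑ j, X j) W - ∫ W', (∑ j, X j) W' ∂ν) ^ 2 ∂ν := by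
        rw [integral_const_mul]
    _ = (1 / (m : ℝ)) ^ 2 * variance (∑ j, X j) ν := by
        rw [variance_eq_integral hSℒ.aestronglyMeasurable.aemeasurable]
    _ ≤ (1 / (m : ℝ)) ^ 2 * (m * ∫ w, g w ^ 2 ∂μ) := by
        apply mul_le_mul_of_nonneg_left _ (sq_nonneg _)
        rw [hvar]
        calc ∑ j, variance (X j) ν ≤ ∑ _j : Fin m, ∫ w, g w ^ 2 ∂μ :=
              Finset.sum_le_sum (fun j _ => hvb j)
          _ = m * ∫ w, g w ^ 2 ∂μ := by simp [Finset.sum_const, mul_comm]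
    _ = (∫ w, g w ^ 2 ∂μ) / m := by field_simp

end AuxiliaryLemmas

/-- Direct approximation theorem for the random feature model: if
`f(x) = ∫ a(w) φ(x;w) dπ₀(w)` with `a ∈ L²(π₀)` and `|φ| ≤ 1`, then the expected
`L²(P)` error of the `m`-feature model with i.i.d. features is at most `(∫ a² dπ₀)/m`. -/
theorem random_feature_direct_approximation
    (d : ℕ) {Ω : Type*} [MeasurableSpace Ω] (π₀ : Measure Ω) [IsProbabilityMeasure π₀]
    (φ : (Fin d → ℝ) → Ω → ℝ)
    (hφmeas : Measurable (fun p : (Fin d → ℝ) × Ω => φ p.1 p.2))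
    (hφbdd : ∀ x w, |φ x w| ≤ 1)
    (P : Measure (Fin d → ℝ)) [IsProbabilityMeasure P]
    (hP : P (Set.Icc (0 : Fin d → ℝ) 1) = 1)
    (a : Ω → ℝ) (hameas : Measurable a) (haL2 : MemLp a 2 π₀)
    (f : (Fin d → ℝ) → ℝ)
    (hf : ∀ x ∈ Set.Icc (0 : Fin d → ℝ) 1, f x = ∫ w, a w * φ x w ∂π₀)
    (m : ℕ) (hm : 0 < m) :
    (∫ W : Fin m → Ω,
        (∫ x, ((1 / m) * ∑ j, a (W j) * φ x (W j) - f x) ^ 2 ∂P)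
      ∂(Measure.pi fun _ : Fin m => π₀))
      ≤ (∫ w, (a w) ^ 2 ∂π₀) / m := by
  classical
  have hm0 : (0:ℝ) < (m:ℝ) := by exact_mod_cast hm
  set ν := Measure.pi fun _ : Fin m => π₀ with hν
  haveI : IsProbabilityMeasure ν := by rw [hν]; infer_instance
  set g : (Fin d → ℝ) → Ω → ℝ := fun x w => a w * φ x w with hg
  set F : (Fin d → ℝ) → ℝ := fun x => ∫ w, g x w ∂π₀ with hF
  have hintm : Measurable (fun p : (Fin d → ℝ) × Ω => a p.2 * φ p.1 p.2) :=
    (hameas.comp measurable_snd).mul hφmeas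
  have hFm : StronglyMeasurable F :=
    hintm.stronglyMeasurable.integral_prod_right'
  have haint : Integrable a π₀ := haL2.integrable one_le_two
  have ha2 : Integrable (fun w => a w ^ 2) π₀ := haL2.integrable_sq
  set C : ℝ := ∫ w, |a w| ∂π₀ with hC
  have hgm : ∀ x, Measurable (g x) := fun x =>
    hameas.mul (hφmeas.comp (measurable_prodMk_left))
  have hgabs : ∀ x w, |g x w| ≤ |a w| := by
    intro x w
    rw [hg]
    calc |a w * φ x w| = |a w| * |φ x w| := abs_mul _ _
      _ ≤ |a w| * 1 := mul_le_mul_of_nonneg_left (hφbdd x w) (abs_nonneg _)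
      _ = |a w| := mul_one _
  have hgℒ : ∀ x, MemLp (g x) 2 π₀ := fun x =>
    haL2.of_le (hgm x).aestronglyMeasurable
      (Filter.Eventually.of_forall fun w => by
        simpa [Real.norm_eq_abs] using hgabs x w)
  have hgint : ∀ x, Integrable (g x) π₀ := fun x => (hgℒ x).integrable one_le_two
  have hFb : ∀ x, |F x| ≤ C := by
    intro x
    calc |F x| ≤ ∫ w, |g x w| ∂π₀ := by
          simpa [Real.norm_eq_abs] using norm_integral_le_integral_norm (μ := π₀) (g x)
      _ ≤ ∫ w, |a w| ∂π₀ := integral_mono (hgint x).abs haint.abs (fun w => hgabs x w)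
  have hIccMeas : MeasurableSet (Set.Icc (0 : Fin d → ℝ) 1) := measurableSet_Icc
  have hae : ∀ᵐ x ∂P, x ∈ Set.Icc (0 : Fin d → ℝ) 1 := by
    rw [ae_iff]
    have h0 : P (Set.Icc (0 : Fin d → ℝ) 1)ᶜ = 0 := by
      rw [measure_compl hIccMeas (measure_ne_top P _), hP, measure_univ, tsub_self]
    exact h0
  have hfF : f =ᵐ[P] F := by
    filter_upwards [hae] with x hx
    rw [hf x hx, hF]
  set q : (Fin m → Ω) → (Fin d → ℝ) → ℝ :=
    fun W x => ((1 / (m:ℝ)) * ∑ j, g x (W j) - F x) ^ 2 with hq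
  have hinner : ∀ W : Fin m → Ω,
      (∫ x, ((1 / (m:ℝ)) * ∑ j, a (W j) * φ x (W j) - f x) ^ 2 ∂P)
      = ∫ x, q W x ∂P := by
    intro W
    apply integral_congr_ae
    filter_upwards [hfF] with x hx
    rw [hx, hq]
  have hqmeas : Measurable (Function.uncurry q) := by
    rw [hq]
    apply Measurable.pow_const
    apply Measurable.sub
    · apply Measurable.const_mul
      apply Finset.measurable_sum
      intro j _
      exact (hameas.comp ((measurable_pi_apply j).comp measurable_fst)).mul
        (hφmeas.comp (measurable_snd.prodMk ((measurable_pi_apply j).comp measurable_fst)))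
    · exact hFm.measurable.comp measurable_snd
  set H : (Fin m → Ω) → ℝ := fun W => (2 / (m:ℝ)) * ∑ j, a (W j) ^ 2 + 2 * C ^ 2 with hH
  have hHmeas : Measurable H := by
    rw [hH]
    exact ((Finset.measurable_sum _ fun j _ =>
      ((hameas.comp (measurable_pi_apply j)).pow_const 2)).const_mul _).add measurable_const
  have hHint : Integrable H ν := by
    rw [hH]
    apply Integrable.add _ (integrable_const _)
    apply Integrable.const_mul
    apply integrable_finset_sum
    intro j _
    exact memLp_one_iff_integrable.mp
      ((memLp_one_iff_integrable.mpr ha2).comp_measurePreserving (measurePreserving_eval_pi π₀ j))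
  have hbound : ∀ (W : Fin m → Ω) (x : Fin d → ℝ), |q W x| ≤ H W := by
    intro W x
    have hu2 : ((1 / (m:ℝ)) * ∑ j, g x (W j)) ^ 2 ≤ (1 / (m:ℝ)) * ∑ j, a (W j) ^ 2 := by
      have h1 : (∑ j, g x (W j)) ^ 2 ≤ (m:ℝ) * ∑ j, (g x (W j)) ^ 2 := by
        have h := sq_sum_le_card_mul_sum_sq (s := (Finset.univ : Finset (Fin m)))
          (f := fun j : Fin m => g x (W j))
        simpa using h
      have h2 : ∑ j, (g x (W j)) ^ 2 ≤ ∑ j, a (W j) ^ 2 :=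
        Finset.sum_le_sum fun j _ => by
          nlinarith [hgabs x (W j), abs_nonneg (g x (W j)), abs_nonneg (a (W j)),
            sq_abs (g x (W j)), sq_abs (a (W j))]
      calc ((1 / (m:ℝ)) * ∑ j, g x (W j)) ^ 2
          = (1/(m:ℝ))^2 * (∑ j, g x (W j))^2 := by rw [mul_pow]
        _ ≤ (1/(m:ℝ))^2 * ((m:ℝ) * ∑ j, a (W j)^2) := by
            apply mul_le_mul_of_nonneg_left _ (sq_nonneg _)
            exact h1.trans (mul_le_mul_of_nonneg_left h2 (le_of_lt hm0))
        _ = (1/(m:ℝ)) * ∑ j, a (W j)^2 := by field_simp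
    have hv2 : (F x)^2 ≤ C^2 := by nlinarith [hFb x, abs_nonneg (F x), sq_abs (F x)]
    have hqH : q W x ≤ H W := by
      rw [hq, hH]
      dsimp only
      have h3 : (2 / (m:ℝ)) * ∑ j, a (W j) ^ 2
          = 2 * ((1/(m:ℝ)) * ∑ j, a (W j) ^ 2) := by ring
      nlinarith [hu2, hv2, sq_nonneg ((1 / (m:ℝ)) * ∑ j, g x (W j) + F x), h3]
    calc |q W x| = q W x := abs_of_nonneg (by rw [hq]; exact sq_nonneg _)
      _ ≤ H W := hqH
  have hqprod : Integrable (Function.uncurry q) (ν.prod P) := by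
    have hfst : Integrable (fun p : (Fin m → Ω) × (Fin d → ℝ) => H p.1) (ν.prod P) := by
      have h1 : Integrable H (Measure.map Prod.fst (ν.prod P)) := by
        rw [Measure.map_fst_prod]; simpa using hHint
      exact (integrable_map_measure hHmeas.aestronglyMeasurable
        measurable_fst.aemeasurable).mp h1
    exact Integrable.mono' hfst hqmeas.aestronglyMeasurable
      (Filter.Eventually.of_forall fun p => by
        simpa [Real.norm_eq_abs, Function.uncurry_def] using hbound p.1 p.2)
  have hswap : (∫ W, (∫ x, q W x ∂P) ∂ν) = ∫ x, (∫ W, q W x ∂ν) ∂P :=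
    integral_integral_swap hqprod
  have hmono : (∫ x, (∫ W, q W x ∂ν) ∂P) ≤ ∫ x, ((∫ w, a w ^ 2 ∂π₀) / m) ∂P := by
    apply integral_mono_of_nonneg
    · exact Filter.Eventually.of_forall fun x => integral_nonneg fun W => by
        rw [hq]; exact sq_nonneg _
    · exact integrable_const _
    · apply Filter.Eventually.of_forall
      intro x
      have h1 := sample_mean_sq_le π₀ (g x) (hgm x) (hgℒ x) m hm
      have h2 : (∫ w, (g x w) ^ 2 ∂π₀) ≤ ∫ w, a w ^ 2 ∂π₀ :=
        integral_mono (hgℒ x).integrable_sq ha2 (fun w => by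
          nlinarith [hgabs x w, abs_nonneg (g x w), abs_nonneg (a w),
            sq_abs (g x w), sq_abs (a w)])
      calc ∫ W, q W x ∂ν = ∫ W : Fin m → Ω,
            ((1 / (m : ℝ)) * ∑ j, g x (W j) - ∫ w, g x w ∂π₀) ^ 2 ∂ν := by rw [hq]
        _ ≤ (∫ w, g x w ^ 2 ∂π₀) / m := h1
        _ ≤ (∫ w, a w ^ 2 ∂π₀) / m := by
            exact (div_le_div_iff_of_pos_right hm0).mpr h2
  calc (∫ W : Fin m → Ω,
        (∫ x, ((1 / (m:ℝ)) * ∑ j, a (W j) * φ x (W j) - f x) ^ 2 ∂P) ∂ν)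
      = ∫ W, (∫ x, q W x ∂P) ∂ν :=
        integral_congr_ae (Filter.Eventually.of_forall fun W => hinner W)
    _ = ∫ x, (∫ W, q W x ∂ν) ∂P := hswap
    _ ≤ ∫ x, ((∫ w, a w ^ 2 ∂π₀) / m) ∂P := hmono
    _ = (∫ w, (a w) ^ 2 ∂π₀) / m := by simp
end

section
/- Let σ(z) = max(z,0) be the ReLU activation and, for x ∈ [0,1]^d, write x̃ = (xᵀ,1)ᵀ ∈ ℝ^{d+1}. For 1 ≤ p ≤ ∞ and a function f : [0,1]^d → ℝ, define ‖f‖_{𝓑_p} = inf_ρ ( ∫ |a|^p ‖w‖₁^p dρ(a,w) )^{1/p} (with the essential supremum of |a|‖w‖₁ when p = ∞), where the infimum is over all probability measures ρ on ℝ × ℝ^{d+1} such that f(x) = ∫ a σ(wᵀ x̃) dρ(a,w) for all x ∈ [0,1]^d. Then for every f admitting at least one such representation and all 1 ≤ p ≤ q ≤ ∞, one has ‖f‖_{𝓑_p} = ‖f‖_{𝓑_q}. -/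
open MeasureTheory ProbabilityTheory ENNReal

/-- `x̃ = (xᵀ, 1)ᵀ ∈ ℝ^{d+1}` for `x ∈ ℝ^d`. -/
def tilde {d : ℕ} (x : Fin d → ℝ) : Fin (d + 1) → ℝ := Fin.snoc x 1

/-- The set of probability measures `ρ` on `ℝ × ℝ^{d+1}` representing
`f(x) = ∫ a σ(wᵀ x̃) dρ(a,w)` on `[0,1]^d`, where `σ` is the ReLU. -/
def barronReps (d : ℕ) (f : (Fin d → ℝ) → ℝ) :
    Set (Measure (ℝ × (Fin (d + 1) → ℝ))) :=
  {ρ | IsProbabilityMeasure ρ ∧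
    ∀ x ∈ Set.Icc (0 : Fin d → ℝ) 1,
      f x = ∫ p, p.1 * max (∑ i, p.2 i * tilde x i) 0 ∂ρ}

/-- The `p`-Barron norm: `inf_ρ ‖ a‖w‖₁ ‖_{L^p(ρ)}` over representing measures `ρ`
(with the essential supremum when `p = ∞`). -/
noncomputable def barronNorm (p : ℝ≥0∞) (d : ℕ) (f : (Fin d → ℝ) → ℝ) : ℝ≥0∞ :=
  ⨅ ρ ∈ barronReps d f, eLpNorm (fun q : ℝ × (Fin (d + 1) → ℝ) => q.1 * ∑ i, |q.2 i|) p ρ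

lemma abs_tilde_le {d : ℕ} {x : Fin d → ℝ} (hx : x ∈ Set.Icc (0 : Fin d → ℝ) 1)
    (i : Fin (d + 1)) : |tilde x i| ≤ 1 := by
  unfold tilde
  induction i using Fin.lastCases with
  | last => simp
  | cast i =>
      rw [Fin.snoc_castSucc, abs_le]
      refine ⟨?_, hx.2 i⟩
      have := hx.1 i
      simp only [Pi.zero_apply] at this
      linarith

lemma abs_integrand_le {d : ℕ} {x : Fin d → ℝ} (hx : x ∈ Set.Icc (0 : Fin d → ℝ) 1)
    (q : ℝ × (Fin (d + 1) → ℝ)) :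
    |q.1 * max (∑ i, q.2 i * tilde x i) 0| ≤ |q.1| * ∑ i, |q.2 i| := by
  rw [abs_mul]
  refine mul_le_mul_of_nonneg_left ?_ (abs_nonneg _)
  have h1 : |max (∑ i, q.2 i * tilde x i) 0| ≤ |∑ i, q.2 i * tilde x i| := by
    rw [abs_of_nonneg (le_max_right _ _)]
    exact max_le (le_abs_self _) (abs_nonneg _)
  refine h1.trans ((Finset.abs_sum_le_sum_abs _ _).trans ?_)
  apply Finset.sum_le_sum
  intro i _
  rw [abs_mul]
  calc |q.2 i| * |tilde x i| ≤ |q.2 i| * 1 := by gcongr; exact abs_tilde_le hx i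
    _ = |q.2 i| := mul_one _

lemma barron_key (d : ℕ) (f : (Fin d → ℝ) → ℝ)
    (ρ : Measure (ℝ × (Fin (d + 1) → ℝ))) (hρ : ρ ∈ barronReps d f) (r : ℝ≥0∞) :
    ∃ ρ' ∈ barronReps d f,
      eLpNorm (fun q : ℝ × (Fin (d + 1) → ℝ) => q.1 * ∑ i, |q.2 i|) r ρ'
        ≤ eLpNorm (fun q : ℝ × (Fin (d + 1) → ℝ) => q.1 * ∑ i, |q.2 i|) 1 ρ := by
  haveI : IsProbabilityMeasure ρ := hρ.1
  set F : ℝ × (Fin (d + 1) → ℝ) → ℝ := fun q => q.1 * ∑ i, |q.2 i| with hFdef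
  have hFcont : Continuous F := by fun_prop
  by_cases hfin : eLpNorm F 1 ρ = ⊤
  · exact ⟨ρ, hρ, hfin ▸ le_top⟩
  have hFint : Integrable F ρ :=
    memLp_one_iff_integrable.mp ⟨hFcont.aestronglyMeasurable, lt_top_iff_ne_top.mpr hfin⟩
  set g : ℝ × (Fin (d + 1) → ℝ) → ℝ := fun q => |q.1| * ∑ i, |q.2 i| with hgdef
  have hsum_nonneg : ∀ w : Fin (d + 1) → ℝ, (0:ℝ) ≤ ∑ i, |w i| :=
    fun w => Finset.sum_nonneg fun i _ => abs_nonneg _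
  have hg_eq : ∀ q, g q = |F q| := by
    intro q
    simp only [hgdef, hFdef, abs_mul]
    rw [abs_of_nonneg (hsum_nonneg q.2)]
  have hg_nonneg : ∀ q, 0 ≤ g q := fun q => (hg_eq q) ▸ abs_nonneg _
  have hgcont : Continuous g := by fun_prop
  have hgmeas : Measurable g := hgcont.measurable
  have hg_int : Integrable g ρ := by
    have h := hFint.abs
    have : g = fun q => |F q| := funext hg_eq
    rw [this]
    exact h
  set Z : ℝ := ∫ q, g q ∂ρ with hZdef
  have hZnn : 0 ≤ Z := integral_nonneg hg_nonneg
  have hZeq : ENNReal.ofReal Z = eLpNorm F 1 ρ := by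
    rw [eLpNorm_one_eq_lintegral_enorm, hZdef]
    have hge : ∀ q, g q = ‖F q‖ := fun q => by rw [hg_eq q, Real.norm_eq_abs]
    rw [funext hge,
      ofReal_integral_eq_lintegral_ofReal hFint.norm (ae_of_all _ fun q => norm_nonneg _)]
    simp [Real.enorm_eq_ofReal_abs, Real.norm_eq_abs]
  by_cases hZ : Z = 0
  · -- f is 0 a.e.-represented; use the Dirac mass at the origin
    have hg0 : g =ᵐ[ρ] 0 := (integral_eq_zero_iff_of_nonneg hg_nonneg hg_int).mp hZ
    refine ⟨Measure.dirac 0, ⟨by infer_instance, ?_⟩, ?_⟩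
    · intro x hx
      have h0 : ∫ q : ℝ × (Fin (d + 1) → ℝ), q.1 * max (∑ i, q.2 i * tilde x i) 0 ∂ρ = 0 := by
        apply integral_eq_zero_of_ae
        filter_upwards [hg0] with q hq
        have hq0 : g q = 0 := hq
        have hle := abs_integrand_le hx q
        rw [show |q.1| * ∑ i, |q.2 i| = g q from rfl, hq0] at hle
        show q.1 * max (∑ i, q.2 i * tilde x i) 0 = 0
        exact abs_eq_zero.mp (le_antisymm hle (abs_nonneg _))
      rw [hρ.2 x hx, h0, integral_dirac]
      simp
    · have hF0 : F =ᵐ[Measure.dirac (0 : ℝ × (Fin (d + 1) → ℝ))] 0 := by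
        rw [Filter.EventuallyEq, ae_dirac_eq]
        refine Filter.eventually_pure.mpr ?_
        simp [hFdef]
      rw [eLpNorm_congr_ae hF0, eLpNorm_zero]
      exact zero_le'
  have hZpos : 0 < Z := hZnn.lt_of_ne (Ne.symm hZ)
  -- the normalizing map
  set T : ℝ × (Fin (d + 1) → ℝ) → ℝ × (Fin (d + 1) → ℝ) :=
    fun q => if 0 < g q then (Z * (q.1 / |q.1|), (∑ i, |q.2 i|)⁻¹ • q.2) else 0 with hTdef
  have hScont : Continuous fun q : ℝ × (Fin (d + 1) → ℝ) => ∑ j, |q.2 j| := by fun_prop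
  have hTmeas : Measurable T := by
    refine Measurable.ite (measurableSet_lt measurable_const hgmeas) ?_ measurable_const
    apply Measurable.prod
    · exact measurable_const.mul (measurable_fst.div measurable_fst.abs)
    · apply measurable_pi_lambda
      intro i
      exact (hScont.measurable.inv).mul ((measurable_pi_apply i).comp measurable_snd)
  have hfacts : ∀ q : ℝ × (Fin (d + 1) → ℝ), 0 < g q → 0 < |q.1| ∧ 0 < ∑ i, |q.2 i| := by
    intro q hq
    have h1 : |q.1| ≠ 0 := by
      intro h
      rw [hgdef] at hq
      simp only [h, zero_mul] at hq
      exact lt_irrefl 0 hq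
    have h2 : (∑ i, |q.2 i|) ≠ 0 := by
      intro h
      rw [hgdef] at hq
      simp only [h, mul_zero] at hq
      exact lt_irrefl 0 hq
    exact ⟨(abs_nonneg _).lt_of_ne (Ne.symm h1), (hsum_nonneg _).lt_of_ne (Ne.symm h2)⟩
  have hsum_one : ∀ q : ℝ × (Fin (d + 1) → ℝ), 0 < g q →
      ∑ i, |((∑ j, |q.2 j|)⁻¹ • q.2) i| = 1 := by
    intro q hq
    obtain ⟨h1, h2⟩ := hfacts q hq
    simp only [Pi.smul_apply, smul_eq_mul, abs_mul, abs_inv, abs_of_nonneg (hsum_nonneg q.2)]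
    rw [← Finset.mul_sum]
    exact inv_mul_cancel₀ h2.ne'
  have hFT : ∀ q, 0 < g q → |F (T q)| = Z := by
    intro q hq
    obtain ⟨h1, h2⟩ := hfacts q hq
    simp only [hTdef, if_pos hq, hFdef]
    rw [hsum_one q hq, mul_one, abs_mul, abs_of_nonneg hZnn, abs_div, abs_abs,
      div_self h1.ne', mul_one]
  -- the reweighted measure
  set ν : Measure (ℝ × (Fin (d + 1) → ℝ)) :=
    ρ.withDensity (fun q => ((g q / Z).toNNReal : ℝ≥0∞)) with hν
  have hdens_meas : Measurable fun q => (g q / Z).toNNReal :=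
    continuous_real_toNNReal.measurable.comp (hgmeas.div_const Z)
  have hν_univ : ν Set.univ = 1 := by
    rw [hν, withDensity_apply _ MeasurableSet.univ, setLIntegral_univ]
    have hco : ∀ q : ℝ × (Fin (d + 1) → ℝ),
        ((g q / Z).toNNReal : ℝ≥0∞) = ENNReal.ofReal (g q / Z) := fun q => rfl
    rw [funext hco, ← ofReal_integral_eq_lintegral_ofReal (hg_int.div_const Z)
      (ae_of_all _ fun q => div_nonneg (hg_nonneg q) hZnn)]
    rw [integral_div, div_self hZ, ofReal_one]
  haveI hνprob : IsProbabilityMeasure ν := ⟨hν_univ⟩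
  haveI hρ'prob : IsProbabilityMeasure (ν.map T) := Measure.isProbabilityMeasure_map hTmeas.aemeasurable
  refine ⟨ν.map T, ⟨hρ'prob, ?_⟩, ?_⟩
  · intro x hx
    have hhcont : Continuous fun q : ℝ × (Fin (d + 1) → ℝ) =>
        q.1 * max (∑ i, q.2 i * tilde x i) 0 := by fun_prop
    rw [hρ.2 x hx, integral_map hTmeas.aemeasurable hhcont.aestronglyMeasurable, hν,
      integral_withDensity_eq_integral_smul hdens_meas]
    refine (integral_congr_ae (ae_of_all _ fun q => ?_)).symm
    -- pointwise identity
    rw [NNReal.smul_def, smul_eq_mul, Real.coe_toNNReal _ (div_nonneg (hg_nonneg q) hZnn)]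
    by_cases hq : 0 < g q
    · obtain ⟨h1, h2⟩ := hfacts q hq
      simp only [hTdef, if_pos hq]
      have hmax : max (∑ i, ((∑ j, |q.2 j|)⁻¹ • q.2) i * tilde x i) 0
          = (∑ j, |q.2 j|)⁻¹ * max (∑ i, q.2 i * tilde x i) 0 := by
        rw [mul_max_of_nonneg _ _ (inv_nonneg.mpr (hsum_nonneg q.2)), mul_zero,
          Finset.mul_sum]
        congr 1
        apply Finset.sum_congr rfl
        intro i _
        simp only [Pi.smul_apply, smul_eq_mul]
        ring
      rw [hmax]
      rw [hgdef]
      field_simp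
    · have hg0 : g q = 0 := le_antisymm (not_lt.mp hq) (hg_nonneg q)
      have hle := abs_integrand_le hx q
      rw [show |q.1| * ∑ i, |q.2 i| = g q from rfl, hg0] at hle
      have hzero : q.1 * max (∑ i, q.2 i * tilde x i) 0 = 0 :=
        abs_eq_zero.mp (le_antisymm hle (abs_nonneg _))
      rw [hg0, hzero, zero_div, zero_mul]
  · have hbound : ∀ᵐ y ∂(ν.map T), ‖F y‖ ≤ Z := by
      rw [ae_map_iff hTmeas.aemeasurable
        (measurableSet_le hFcont.measurable.norm measurable_const)]
      apply ae_of_all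
      intro q
      by_cases hq : 0 < g q
      · exact le_of_eq (by rw [Real.norm_eq_abs, hFT q hq])
      · simp only [hTdef, if_neg hq, hFdef]
        simpa using hZnn
    calc eLpNorm F r (ν.map T)
        ≤ (ν.map T) Set.univ ^ r.toReal⁻¹ * ENNReal.ofReal Z := eLpNorm_le_of_ae_bound hbound
      _ = ENNReal.ofReal Z := by rw [measure_univ, ENNReal.one_rpow, one_mul]
      _ = eLpNorm F 1 ρ := hZeq


/-- For the ReLU activation, all `p`-Barron norms coincide: for every `f` admitting at
least one representing measure and all `1 ≤ p ≤ q ≤ ∞`, `‖f‖_{𝓑_p} = ‖f‖_{𝓑_q}`. -/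
theorem barronNorm_eq_of_le (d : ℕ) (f : (Fin d → ℝ) → ℝ)
    (hf : (barronReps d f).Nonempty)
    (p q : ℝ≥0∞) (hp : 1 ≤ p) (hpq : p ≤ q) :
    barronNorm p d f = barronNorm q d f := by
  have hFcont : Continuous (fun q : ℝ × (Fin (d + 1) → ℝ) => q.1 * ∑ i, |q.2 i|) := by fun_prop
  apply le_antisymm
  · -- p-norm ≤ q-norm : Jensen on each representing measure
    refine le_iInf₂ fun ρ hρ => ?_
    haveI : IsProbabilityMeasure ρ := hρ.1
    refine iInf₂_le_of_le ρ hρ ?_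
    exact eLpNorm_le_eLpNorm_of_exponent_le hpq hFcont.aestronglyMeasurable
  · -- q-norm ≤ p-norm : renormalize
    refine le_iInf₂ fun ρ hρ => ?_
    haveI : IsProbabilityMeasure ρ := hρ.1
    obtain ⟨ρ', hρ', hle⟩ := barron_key d f ρ hρ q
    calc barronNorm q d f ≤ _ := iInf₂_le ρ' hρ'
      _ ≤ eLpNorm (fun q : ℝ × (Fin (d + 1) → ℝ) => q.1 * ∑ i, |q.2 i|) 1 ρ := hle
      _ ≤ eLpNorm (fun q : ℝ × (Fin (d + 1) → ℝ) => q.1 * ∑ i, |q.2 i|) p ρ :=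
        eLpNorm_le_eLpNorm_of_exponent_le hp hFcont.aestronglyMeasurable
end

section
/- Let σ(z) = max(z,0) be the ReLU activation and, for x ∈ [0,1]^d, write x̃ = (xᵀ,1)ᵀ ∈ ℝ^{d+1}. There exists an absolute constant C (independent of d, m, f and P) such that the following holds. Let P be any probability measure on [0,1]^d and let f : [0,1]^d → ℝ satisfy f(x) = ∫ a σ(wᵀ x̃) dρ(a,w) for a probability measure ρ on ℝ × ℝ^{d+1} with B := ∫ |a| ‖w‖₁ dρ(a,w) < ∞. Then for every m ∈ ℕ there exist (a₁,w₁), …, (a_m,w_m) ∈ ℝ × ℝ^{d+1} such that ‖ f − (1/m) Σ_{j=1}^m a_j σ(w_jᵀ ·̃) ‖_{L²(P)} ≤ C B / √m. -/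
open MeasureTheory
open scoped ENNReal NNReal

lemma tilde_mem {d : ℕ} {x : Fin d → ℝ} (hx : x ∈ Set.Icc (0 : Fin d → ℝ) 1)
    (i : Fin (d + 1)) : 0 ≤ tilde x i ∧ tilde x i ≤ 1 := by
  obtain ⟨h0, h1⟩ := hx
  induction i using Fin.lastCases with
  | last => simp [tilde]
  | cast j => simpa [tilde] using ⟨h0 j, h1 j⟩

lemma relu_le {d : ℕ} {x : Fin d → ℝ} (hx : x ∈ Set.Icc (0 : Fin d → ℝ) 1)
    (w : Fin (d + 1) → ℝ) :
    max (∑ i, w i * tilde x i) 0 ≤ ∑ i, |w i| := by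
  refine max_le (Finset.sum_le_sum fun i _ => ?_) (Finset.sum_nonneg fun i _ => abs_nonneg _)
  obtain ⟨h0, h1⟩ := tilde_mem hx i
  calc w i * tilde x i ≤ |w i * tilde x i| := le_abs_self _
    _ = |w i| * |tilde x i| := abs_mul _ _
    _ ≤ |w i| * 1 :=
        mul_le_mul_of_nonneg_left (by rw [abs_of_nonneg h0]; exact h1) (abs_nonneg _)
    _ = |w i| := mul_one _

lemma abs_g_le {d : ℕ} {x : Fin d → ℝ} (hx : x ∈ Set.Icc (0 : Fin d → ℝ) 1)
    (p : ℝ × (Fin (d + 1) → ℝ)) :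
    |p.1 * max (∑ i, p.2 i * tilde x i) 0| ≤ |p.1| * ∑ i, |p.2 i| := by
  rw [abs_mul, abs_of_nonneg (le_max_right (∑ i, p.2 i * tilde x i) 0)]
  exact mul_le_mul_of_nonneg_left (relu_le hx p.2) (abs_nonneg _)

lemma continuous_tilde {d : ℕ} : Continuous fun x : Fin d → ℝ => tilde x := by
  refine continuous_pi fun i => ?_
  induction i using Fin.lastCases with
  | last => simpa [tilde] using continuous_const
  | cast j => simpa [tilde] using continuous_apply j

lemma continuous_g {d : ℕ} :
    Continuous fun z : (ℝ × (Fin (d + 1) → ℝ)) × (Fin d → ℝ) =>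
      z.1.1 * max (∑ i, z.1.2 i * tilde z.2 i) 0 := by
  refine (continuous_fst.fst).mul (Continuous.max ?_ continuous_const)
  exact continuous_finset_sum _ fun i _ =>
    ((continuous_apply i).comp continuous_fst.snd).mul
      (((continuous_apply i).comp continuous_tilde).comp continuous_snd)

lemma continuous_g1 {d : ℕ} (x : Fin d → ℝ) :
    Continuous fun q : ℝ × (Fin (d + 1) → ℝ) => q.1 * max (∑ i, q.2 i * tilde x i) 0 :=
  continuous_fst.mul ((continuous_finset_sum _ fun i _ =>
    ((continuous_apply i).comp continuous_snd).mul continuous_const).max continuous_const)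

lemma continuous_g2 {d : ℕ} (aj : ℝ) (wj : Fin (d + 1) → ℝ) :
    Continuous fun x : Fin d → ℝ => aj * max (∑ i, wj i * tilde x i) 0 :=
  continuous_const.mul ((continuous_finset_sum _ fun i _ =>
    continuous_const.mul ((continuous_apply i).comp continuous_tilde)).max continuous_const)

lemma maurey_alg {c t A F e : ℝ} (hid : A - c * F = t * e) :
    A ^ 2 - 2 * c * A * F ≤ t ^ 2 * e ^ 2 := by
  have h : (A - c * F) ^ 2 = t ^ 2 * e ^ 2 := by rw [hid]; ring
  nlinarith [h, sq_nonneg (c * F)]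

lemma ae_prod_of_ae_ae {α β : Type*} [MeasurableSpace α] [MeasurableSpace β]
    (μ : Measure α) (ν : Measure β) [SFinite ν] {p : α → Prop} {q : β → Prop}
    (hp : ∀ᵐ a ∂μ, p a) (hq : ∀ᵐ b ∂ν, q b) :
    ∀ᵐ z ∂μ.prod ν, p z.1 ∧ q z.2 := by
  rw [ae_iff] at hp hq ⊢
  refine measure_mono_null (fun z hz => ?_)
    (measure_union_null (s := {a | ¬ p a} ×ˢ Set.univ) (t := Set.univ ×ˢ {b | ¬ q b}) ?_ ?_)
  · show z ∈ _ ∪ _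
    simp only [Set.mem_setOf_eq, not_and_or] at hz
    rcases hz with h | h
    · exact Or.inl ⟨h, Set.mem_univ _⟩
    · exact Or.inr ⟨Set.mem_univ _, h⟩
  · rw [Measure.prod_prod, hp, zero_mul]
  · rw [Measure.prod_prod, hq, mul_zero]

set_option maxHeartbeats 2000000 in
/-- Direct approximation theorem for Barron functions, `L²` version: there is an absolute
constant `C` such that for every probability measure `P` on `[0,1]^d`, every Barron
function `f` with representing measure `ρ` and `B = ∫ |a|‖w‖₁ dρ`, and every `m ≥ 1`,
there is a two-layer ReLU network of width `m` with
`‖f - f_m‖_{L²(P)} ≤ C B / √m`. -/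
theorem barron_direct_approximation_L2 :
    ∃ C : ℝ, 0 < C ∧
      ∀ (d : ℕ) (P : Measure (Fin d → ℝ)) [IsProbabilityMeasure P],
        P (Set.Icc (0 : Fin d → ℝ) 1) = 1 →
        ∀ (f : (Fin d → ℝ) → ℝ) (ρ : Measure (ℝ × (Fin (d + 1) → ℝ)))
          [IsProbabilityMeasure ρ],
          (∀ x ∈ Set.Icc (0 : Fin d → ℝ) 1,
            f x = ∫ p, p.1 * max (∑ i, p.2 i * tilde x i) 0 ∂ρ) →
          Integrable (fun p : ℝ × (Fin (d + 1) → ℝ) => |p.1| * ∑ i, |p.2 i|) ρ →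
          ∀ m : ℕ, 0 < m →
            ∃ (a : Fin m → ℝ) (w : Fin m → (Fin (d + 1) → ℝ)),
              Real.sqrt (∫ x,
                  (f x - (1 / m : ℝ) * ∑ j, a j * max (∑ i, w j i * tilde x i) 0) ^ 2 ∂P)
                ≤ C * (∫ p, |p.1| * ∑ i, |p.2 i| ∂ρ) / Real.sqrt m := by
  refine ⟨1, one_pos, ?_⟩
  intro d P _ hP f ρ _ hf hint
  set N : ℝ × (Fin (d + 1) → ℝ) → ℝ := fun p => |p.1| * ∑ i, |p.2 i| with hNdef
  have hNnonneg : ∀ p, 0 ≤ N p := fun p =>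
    mul_nonneg (abs_nonneg _) (Finset.sum_nonneg fun i _ => abs_nonneg _)
  have hNmeas : Measurable N :=
    (measurable_fst.abs).mul
      (Finset.measurable_sum _ fun i _ => ((measurable_pi_apply i).comp measurable_snd).abs)
  set B : ℝ := ∫ p, N p ∂ρ with hBdef
  have hB0 : 0 ≤ B := integral_nonneg hNnonneg
  have hcube : MeasurableSet (Set.Icc (0 : Fin d → ℝ) 1) := measurableSet_Icc
  have hPae : ∀ᵐ x ∂P, x ∈ Set.Icc (0 : Fin d → ℝ) 1 := by
    rw [ae_iff]
    have : {x | ¬ x ∈ Set.Icc (0 : Fin d → ℝ) 1} = (Set.Icc (0 : Fin d → ℝ) 1)ᶜ := rfl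
    rw [this, prob_compl_eq_zero_iff hcube]
    exact hP
  set f' : (Fin d → ℝ) → ℝ := Set.indicator (Set.Icc (0 : Fin d → ℝ) 1)
      (fun x => ∫ p, p.1 * max (∑ i, p.2 i * tilde x i) 0 ∂ρ) with hf'def
  have hf'meas : Measurable f' := by
    apply Measurable.indicator _ hcube
    have hcont : Continuous fun z : (Fin d → ℝ) × (ℝ × (Fin (d + 1) → ℝ)) =>
        z.2.1 * max (∑ i, z.2.2 i * tilde z.1 i) 0 :=
      continuous_g.comp (continuous_snd.prodMk continuous_fst)
    exact (hcont.stronglyMeasurable.integral_prod_right').measurable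
  have hgρint : ∀ x ∈ Set.Icc (0 : Fin d → ℝ) 1,
      Integrable (fun p : ℝ × (Fin (d + 1) → ℝ) => p.1 * max (∑ i, p.2 i * tilde x i) 0) ρ := by
    intro x hx
    refine Integrable.mono' hint ?_ (ae_of_all _ fun p => ?_)
    · exact (continuous_g.comp (continuous_id.prodMk continuous_const)).aestronglyMeasurable
    · simpa only [Real.norm_eq_abs] using abs_g_le hx p
  have hf'bound : ∀ x, |f' x| ≤ B := by
    intro x
    by_cases hx : x ∈ Set.Icc (0 : Fin d → ℝ) 1
    · rw [hf'def, Set.indicator_of_mem hx]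
      calc |∫ p, p.1 * max (∑ i, p.2 i * tilde x i) 0 ∂ρ|
          ≤ ∫ p, |p.1 * max (∑ i, p.2 i * tilde x i) 0| ∂ρ := by
            simpa only [Real.norm_eq_abs] using
              norm_integral_le_integral_norm
                (fun p : ℝ × (Fin (d + 1) → ℝ) => p.1 * max (∑ i, p.2 i * tilde x i) 0) (μ := ρ)
        _ ≤ ∫ p, N p ∂ρ :=
            integral_mono ((hgρint x hx).abs) hint fun p => abs_g_le hx p
        _ = B := hBdef.symm
    · rw [hf'def, Set.indicator_of_notMem hx]
      simpa using hB0
  have hff' : f =ᵐ[P] f' := by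
    filter_upwards [hPae] with x hx
    rw [hf'def, Set.indicator_of_mem hx, hf x hx]
  have hf'sqint : Integrable (fun x => (f' x) ^ 2) P := by
    refine Integrable.mono' (integrable_const (B ^ 2))
      ((hf'meas.pow_const 2).aestronglyMeasurable) (ae_of_all _ fun x => ?_)
    rw [Real.norm_eq_abs, abs_of_nonneg (sq_nonneg _), ← sq_abs]
    exact pow_le_pow_left₀ (abs_nonneg _) (hf'bound x) 2
  -- main induction
  have key : ∀ k : ℕ, 0 < k → ∃ (a : Fin k → ℝ) (w : Fin k → (Fin (d + 1) → ℝ)),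
      (∀ j, |a j| * ∑ i, |w j i| ≤ B) ∧
      ∫ x, (f' x - (1 / k : ℝ) * ∑ j, a j * max (∑ i, w j i * tilde x i) 0) ^ 2 ∂P
        ≤ B ^ 2 / k := by
    rcases hB0.eq_or_lt with hB | hBpos
    · -- B = 0
      intro k hk
      have hf0 : ∀ x, f' x = 0 := by
        intro x
        have h := hf'bound x
        rw [← hB] at h
        exact abs_nonpos_iff.mp h
      refine ⟨0, 0, fun j => by simpa using hB0, ?_⟩
      simp only [hf0, Pi.zero_apply, zero_mul, Finset.sum_const_zero, mul_zero, sub_zero,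
        ne_eq, OfNat.ofNat_ne_zero, not_false_eq_true, zero_pow, integral_zero]
      positivity
    -- B > 0 : Maurey sampling argument
    set T : ℝ × (Fin (d + 1) → ℝ) → ℝ × (Fin (d + 1) → ℝ) :=
      fun p => (B * p.1 / N p, p.2) with hTdef
    have hTmeas : Measurable T :=
      ((measurable_const.mul measurable_fst).div hNmeas).prodMk measurable_snd
    have hNT : ∀ p, N (T p) ≤ B := by
      intro p
      show |B * p.1 / (|p.1| * ∑ i, |p.2 i|)| * ∑ i, |p.2 i| ≤ B
      rcases eq_or_ne p.1 0 with h1 | h1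
      · simp [h1, hB0]
      rcases eq_or_ne (∑ i, |p.2 i|) 0 with h2 | h2
      · simp [h2, hB0]
      have hS : 0 < ∑ i, |p.2 i| :=
        lt_of_le_of_ne (Finset.sum_nonneg fun i _ => abs_nonneg _) (Ne.symm h2)
      have hp1 : 0 < |p.1| := abs_pos.mpr h1
      have : |B * p.1 / (|p.1| * ∑ i, |p.2 i|)| * ∑ i, |p.2 i| = B := by
        rw [abs_div, abs_mul, abs_mul, abs_abs, abs_of_pos hBpos, abs_of_pos hS]
        field_simp
      rw [this]
    have hBne : B ≠ 0 := hBpos.ne'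
    have hφmeas : Measurable fun p : ℝ × (Fin (d + 1) → ℝ) => (N p / B).toNNReal :=
      (hNmeas.div_const B).real_toNNReal
    set ρw : Measure (ℝ × (Fin (d + 1) → ℝ)) :=
      ρ.withDensity (fun p => ((N p / B).toNNReal : ℝ≥0∞)) with hρwdef
    have hone : ∫ p, N p / B ∂ρ = 1 := by
      rw [integral_div, ← hBdef, div_self hBne]
    haveI hρwprob : IsProbabilityMeasure ρw := by
      constructor
      rw [hρwdef, withDensity_apply _ MeasurableSet.univ, setLIntegral_univ]
      have hcoe : ∀ p : ℝ × (Fin (d + 1) → ℝ),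
          (((N p / B).toNNReal : ℝ≥0) : ℝ≥0∞) = ENNReal.ofReal (N p / B) := fun _ => rfl
      simp_rw [hcoe]
      rw [← ofReal_integral_eq_lintegral_ofReal (hint.div_const B)
        (ae_of_all _ fun p => div_nonneg (hNnonneg p) hB0), hone, ENNReal.ofReal_one]
    set μ : Measure (ℝ × (Fin (d + 1) → ℝ)) := ρw.map T with hμdef
    haveI hμprob : IsProbabilityMeasure μ := Measure.isProbabilityMeasure_map hTmeas.aemeasurable
    have hqae : ∀ᵐ q ∂μ, N q ≤ B := by
      rw [hμdef, ae_map_iff hTmeas.aemeasurable (measurableSet_le hNmeas measurable_const)]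
      exact ae_of_all _ hNT
    set g0 : (ℝ × (Fin (d + 1) → ℝ)) → (Fin d → ℝ) → ℝ :=
      fun q x => q.1 * max (∑ i, q.2 i * tilde x i) 0 with hg0def
    have hrep : ∀ x ∈ Set.Icc (0 : Fin d → ℝ) 1, ∫ q, g0 q x ∂μ = f' x := by
      intro x hx
      have hgc : Continuous fun q : ℝ × (Fin (d + 1) → ℝ) => g0 q x := continuous_g1 x
      rw [hμdef, integral_map hTmeas.aemeasurable hgc.aestronglyMeasurable, hρwdef,
        integral_withDensity_eq_integral_smul hφmeas]
      have hpt : ∀ p : ℝ × (Fin (d + 1) → ℝ),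
          (N p / B).toNNReal • g0 (T p) x = p.1 * max (∑ i, p.2 i * tilde x i) 0 := by
        intro p
        rw [NNReal.smul_def, Real.coe_toNNReal _ (div_nonneg (hNnonneg p) hB0)]
        show N p / B * (B * p.1 / N p * max (∑ i, p.2 i * tilde x i) 0)
            = p.1 * max (∑ i, p.2 i * tilde x i) 0
        rcases eq_or_ne (N p) 0 with h0 | h0
        · have hz : p.1 * max (∑ i, p.2 i * tilde x i) 0 = 0 := by
            rcases mul_eq_zero.mp h0 with h | h
            · rw [abs_eq_zero.mp h, zero_mul]
            · have hzz : ∀ i, p.2 i = 0 := fun i =>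
                abs_eq_zero.mp (le_antisymm (h ▸ Finset.single_le_sum
                  (f := fun i => |p.2 i|) (fun i _ => abs_nonneg _) (Finset.mem_univ i))
                  (abs_nonneg _))
              simp [hzz]
          rw [hz, h0]
          simp
        · field_simp
      simp_rw [hpt]
      rw [hf'def, Set.indicator_of_mem hx]
    intro k
    induction k with
    | zero => exact fun h => absurd h (lt_irrefl 0)
    | succ k ih =>
      intro _
      rcases Nat.eq_zero_or_pos k with rfl | hk
      · -- base case: width 1
        refine ⟨0, 0, fun j => by simpa using hB0, ?_⟩
        simp only [Pi.zero_apply, zero_mul, Finset.sum_const_zero, mul_zero, sub_zero]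
        have hle : ∫ x, (f' x) ^ 2 ∂P ≤ B ^ 2 := by
          calc ∫ x, (f' x) ^ 2 ∂P ≤ ∫ _x, B ^ 2 ∂P :=
              integral_mono hf'sqint (integrable_const _) (fun x => by
                rw [← sq_abs]; exact pow_le_pow_left₀ (abs_nonneg _) (hf'bound x) 2)
            _ = B ^ 2 := by simp
        simpa using hle
      -- inductive step
      obtain ⟨a, w, hbnd, herr⟩ := ih hk
      have hkpos : (0 : ℝ) < (k : ℝ) := by exact_mod_cast hk
      have hcast : ((k + 1 : ℕ) : ℝ) = (k : ℝ) + 1 := by push_cast; ring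
      have hk1pos : (0 : ℝ) < (k : ℝ) + 1 := by linarith
      set S : (Fin d → ℝ) → ℝ :=
        fun x => ∑ j, a j * max (∑ i, w j i * tilde x i) 0 with hSdef
      have hScont : Continuous S := by
        exact continuous_finset_sum _ fun j _ => continuous_g2 (a j) (w j)
      have hSb : ∀ x ∈ Set.Icc (0 : Fin d → ℝ) 1, |S x| ≤ (k : ℝ) * B := by
        intro x hx
        calc |S x| ≤ ∑ j, |a j * max (∑ i, w j i * tilde x i) 0| :=
            Finset.abs_sum_le_sum_abs _ _
          _ ≤ ∑ _j : Fin k, B := Finset.sum_le_sum fun j _ =>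
              (abs_g_le hx (a j, w j)).trans (hbnd j)
          _ = (k : ℝ) * B := by simp [Finset.sum_const, nsmul_eq_mul]
      set G : (ℝ × (Fin (d + 1) → ℝ)) → (Fin d → ℝ) → ℝ :=
        fun q x => (f' x - 1 / ((k : ℝ) + 1) * (S x + g0 q x)) ^ 2 with hGdef
      have huncurry : Function.uncurry G = fun z : (ℝ × (Fin (d + 1) → ℝ)) × (Fin d → ℝ) =>
          (f' z.2 - 1 / ((k : ℝ) + 1) * (S z.2 + z.1.1 * max (∑ i, z.1.2 i * tilde z.2 i) 0)) ^ 2 :=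
        rfl
      have hGmeas : StronglyMeasurable (Function.uncurry G) := by
        rw [huncurry]
        exact (((hf'meas.comp measurable_snd).sub
          ((((hScont.measurable).comp measurable_snd).add continuous_g.measurable).const_mul
            _)).pow_const 2).stronglyMeasurable
      have hGb : ∀ᵐ z ∂(μ.prod P), ‖Function.uncurry G z‖ ≤ (2 * B) ^ 2 := by
        filter_upwards [ae_prod_of_ae_ae μ P hqae hPae] with z hz
        obtain ⟨hq, hx⟩ := hz
        have h1 := hf'bound z.2
        have h2 := hSb z.2 hx
        have h3 : |g0 z.1 z.2| ≤ B := (abs_g_le hx z.1).trans hq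
        have habs : |S z.2 + g0 z.1 z.2| ≤ (k : ℝ) * B + B :=
          (abs_add_le _ _).trans (add_le_add h2 h3)
        have hd : 1 / ((k : ℝ) + 1) * |S z.2 + g0 z.1 z.2| ≤ B := by
          rw [div_mul_eq_mul_div, one_mul, div_le_iff₀ hk1pos]
          calc |S z.2 + g0 z.1 z.2| ≤ (k : ℝ) * B + B := habs
            _ = B * ((k : ℝ) + 1) := by ring
        have hX : |f' z.2 - 1 / ((k : ℝ) + 1) * (S z.2 + g0 z.1 z.2)| ≤ 2 * B := by
          calc |f' z.2 - 1 / ((k : ℝ) + 1) * (S z.2 + g0 z.1 z.2)|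
              ≤ |f' z.2| + |1 / ((k : ℝ) + 1) * (S z.2 + g0 z.1 z.2)| := abs_sub _ _
            _ ≤ B + B := add_le_add h1 (by
                rw [abs_mul, abs_of_pos (by positivity : (0 : ℝ) < 1 / ((k : ℝ) + 1))]
                exact hd)
            _ = 2 * B := by ring
        simp only [huncurry, Real.norm_eq_abs]
        rw [abs_of_nonneg (sq_nonneg _), ← sq_abs]
        exact pow_le_pow_left₀ (abs_nonneg _) hX 2
      have hGint : Integrable (Function.uncurry G) (μ.prod P) :=
        Integrable.mono' (integrable_const ((2 * B) ^ 2)) hGmeas.aestronglyMeasurable hGb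
      have hinner : ∀ᵐ x ∂P, ∫ q, G q x ∂μ ≤
          ((k : ℝ) / ((k : ℝ) + 1)) ^ 2 * (f' x - 1 / (k : ℝ) * S x) ^ 2
            + B ^ 2 / ((k : ℝ) + 1) ^ 2 := by
        filter_upwards [hPae] with x hx
        have hgc : Continuous fun q : ℝ × (Fin (d + 1) → ℝ) => g0 q x := continuous_g1 x
        have hgb : ∀ᵐ q ∂μ, ‖g0 q x‖ ≤ B := by
          filter_upwards [hqae] with q hq
          rw [Real.norm_eq_abs]
          exact (abs_g_le hx q).trans hq
        have hgi : Integrable (fun q => g0 q x) μ :=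
          Integrable.mono' (integrable_const B) hgc.aestronglyMeasurable hgb
        have hg2b : ∀ᵐ q ∂μ, ‖(g0 q x) ^ 2‖ ≤ B ^ 2 := by
          filter_upwards [hgb] with q hq
          rw [Real.norm_eq_abs] at hq
          rw [Real.norm_eq_abs, abs_of_nonneg (sq_nonneg _), ← sq_abs]
          exact pow_le_pow_left₀ (abs_nonneg _) hq 2
        have hg2i : Integrable (fun q => (g0 q x) ^ 2) μ :=
          Integrable.mono' (integrable_const (B ^ 2)) ((hgc.pow 2).aestronglyMeasurable) hg2b
        have hmean : ∫ q, g0 q x ∂μ = f' x := hrep x hx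
        have h2m : ∫ q, (g0 q x) ^ 2 ∂μ ≤ B ^ 2 := by
          have hmono : ∫ q, (g0 q x) ^ 2 ∂μ ≤ ∫ _q, B ^ 2 ∂μ := by
            refine integral_mono_ae hg2i (integrable_const _) ?_
            filter_upwards [hg2b] with q hq
            rw [Real.norm_eq_abs, abs_of_nonneg (sq_nonneg _)] at hq
            exact hq
          simpa using hmono
        have hexp : ∫ q, G q x ∂μ =
            (f' x - 1 / ((k : ℝ) + 1) * S x) ^ 2
              - (2 * (1 / ((k : ℝ) + 1)) * (f' x - 1 / ((k : ℝ) + 1) * S x)) * f' x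
              + (1 / ((k : ℝ) + 1)) ^ 2 * ∫ q, (g0 q x) ^ 2 ∂μ := by
          have hptw : ∀ q, G q x =
              ((f' x - 1 / ((k : ℝ) + 1) * S x) ^ 2
                - (2 * (1 / ((k : ℝ) + 1)) * (f' x - 1 / ((k : ℝ) + 1) * S x)) * g0 q x)
                + (1 / ((k : ℝ) + 1)) ^ 2 * (g0 q x) ^ 2 := by
            intro q
            show (f' x - 1 / ((k : ℝ) + 1) * (S x + g0 q x)) ^ 2 = _
            ring
          have e1 : Integrable (fun q : ℝ × (Fin (d + 1) → ℝ) =>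
              (f' x - 1 / ((k : ℝ) + 1) * S x) ^ 2
                - (2 * (1 / ((k : ℝ) + 1)) * (f' x - 1 / ((k : ℝ) + 1) * S x)) * g0 q x) μ :=
            (integrable_const _).sub (hgi.const_mul _)
          have e2 : Integrable (fun q : ℝ × (Fin (d + 1) → ℝ) =>
              (f' x - 1 / ((k : ℝ) + 1) * S x) ^ 2) μ := integrable_const _
          simp_rw [hptw]
          rw [integral_add e1 (hg2i.const_mul _)]
          rw [integral_sub e2 (hgi.const_mul _)]
          rw [integral_const_mul]
          rw [integral_const_mul]
          rw [integral_const]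
          rw [hmean]
          simp
        have hkeyineq : (f' x - 1 / ((k : ℝ) + 1) * S x) ^ 2
            - (2 * (1 / ((k : ℝ) + 1)) * (f' x - 1 / ((k : ℝ) + 1) * S x)) * f' x
            ≤ ((k : ℝ) / ((k : ℝ) + 1)) ^ 2 * (f' x - 1 / (k : ℝ) * S x) ^ 2 := by
          have hid : (f' x - 1 / ((k : ℝ) + 1) * S x) - 1 / ((k : ℝ) + 1) * f' x
              = ((k : ℝ) / ((k : ℝ) + 1)) * (f' x - 1 / (k : ℝ) * S x) := by
            field_simp
            ring
          have halg := maurey_alg hid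
          linarith [halg]
        have h3' : (1 / ((k : ℝ) + 1)) ^ 2 * ∫ q, (g0 q x) ^ 2 ∂μ
            ≤ B ^ 2 / ((k : ℝ) + 1) ^ 2 := by
          calc (1 / ((k : ℝ) + 1)) ^ 2 * ∫ q, (g0 q x) ^ 2 ∂μ
              ≤ (1 / ((k : ℝ) + 1)) ^ 2 * B ^ 2 :=
                mul_le_mul_of_nonneg_left h2m (sq_nonneg _)
            _ = B ^ 2 / ((k : ℝ) + 1) ^ 2 := by
                rw [div_pow, one_pow, one_div, inv_mul_eq_div]
        rw [hexp]
        linarith [hkeyineq, h3']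
      have heint : Integrable (fun x => (f' x - 1 / (k : ℝ) * S x) ^ 2) P := by
        refine Integrable.mono' (integrable_const ((2 * B) ^ 2))
          ((hf'meas.sub (hScont.measurable.const_mul _)).pow_const 2).aestronglyMeasurable ?_
        filter_upwards [hPae] with x hx
        have hd : |1 / (k : ℝ) * S x| ≤ B := by
          rw [abs_mul, abs_of_pos (by positivity : (0 : ℝ) < 1 / (k : ℝ)),
            div_mul_eq_mul_div, one_mul, div_le_iff₀ hkpos]
          calc |S x| ≤ (k : ℝ) * B := hSb x hx
            _ = B * (k : ℝ) := by ring
        have hX : |f' x - 1 / (k : ℝ) * S x| ≤ 2 * B := by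
          calc |f' x - 1 / (k : ℝ) * S x| ≤ |f' x| + |1 / (k : ℝ) * S x| := abs_sub _ _
            _ ≤ B + B := add_le_add (hf'bound x) hd
            _ = 2 * B := by ring
        rw [Real.norm_eq_abs, abs_of_nonneg (sq_nonneg _), ← sq_abs]
        exact pow_le_pow_left₀ (abs_nonneg _) hX 2
      have hUint : Integrable (fun x =>
          ((k : ℝ) / ((k : ℝ) + 1)) ^ 2 * (f' x - 1 / (k : ℝ) * S x) ^ 2
            + B ^ 2 / ((k : ℝ) + 1) ^ 2) P :=
        (heint.const_mul _).add (integrable_const _)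
      have hout : ∫ q, (∫ x, G q x ∂P) ∂μ ≤ B ^ 2 / ((k : ℝ) + 1) := by
        rw [integral_integral_swap hGint]
        calc ∫ x, ∫ q, G q x ∂μ ∂P
            ≤ ∫ x, (((k : ℝ) / ((k : ℝ) + 1)) ^ 2 * (f' x - 1 / (k : ℝ) * S x) ^ 2
                + B ^ 2 / ((k : ℝ) + 1) ^ 2) ∂P :=
              integral_mono_ae hGint.integral_prod_right hUint hinner
          _ = ((k : ℝ) / ((k : ℝ) + 1)) ^ 2 * (∫ x, (f' x - 1 / (k : ℝ) * S x) ^ 2 ∂P)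
                + B ^ 2 / ((k : ℝ) + 1) ^ 2 := by
              rw [integral_add (heint.const_mul _) (integrable_const _), integral_const_mul,
                integral_const]
              simp
          _ ≤ ((k : ℝ) / ((k : ℝ) + 1)) ^ 2 * (B ^ 2 / (k : ℝ)) + B ^ 2 / ((k : ℝ) + 1) ^ 2 := by
              gcongr
          _ = B ^ 2 / ((k : ℝ) + 1) := by
              field_simp
      have hμint : Integrable (fun q => ∫ x, G q x ∂P) μ := hGint.integral_prod_left
      have hTint : Integrable ((fun q => ∫ x, G q x ∂P) ∘ T) ρw :=
        (integrable_map_measure hμint.aestronglyMeasurable hTmeas.aemeasurable).mp hμint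
      obtain ⟨p, hp⟩ := exists_le_integral hTint
      have hmapint : ∫ p', ((fun q => ∫ x, G q x ∂P) ∘ T) p' ∂ρw = ∫ q, ∫ x, G q x ∂P ∂μ :=
        (integral_map hTmeas.aemeasurable hμint.aestronglyMeasurable).symm
      have hfinal : ∫ x, G (T p) x ∂P ≤ B ^ 2 / ((k : ℝ) + 1) := by
        calc ∫ x, G (T p) x ∂P ≤ ∫ p', ((fun q => ∫ x, G q x ∂P) ∘ T) p' ∂ρw := hp
          _ = ∫ q, ∫ x, G q x ∂P ∂μ := hmapint
          _ ≤ B ^ 2 / ((k : ℝ) + 1) := hout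
      refine ⟨Fin.snoc a (T p).1, Fin.snoc w (T p).2, ?_, ?_⟩
      · intro j
        induction j using Fin.lastCases with
        | last => simpa [Fin.snoc_last, hNdef] using hNT p
        | cast j => simpa [Fin.snoc_castSucc] using hbnd j
      · have heq : ∀ x : Fin d → ℝ,
            (f' x - (1 / ((k + 1 : ℕ) : ℝ)) * ∑ j : Fin (k + 1),
              (Fin.snoc a (T p).1 : Fin (k + 1) → ℝ) j *
                max (∑ i, (Fin.snoc w (T p).2 : Fin (k + 1) → Fin (d + 1) → ℝ) j i * tilde x i) 0) ^ 2
            = G (T p) x := by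
          intro x
          rw [Fin.sum_univ_castSucc]
          simp only [Fin.snoc_castSucc, Fin.snoc_last, hcast]
          rfl
        have hfin := hfinal
        rw [← hcast] at hfin
        refine le_trans (le_of_eq ?_) hfin
        exact integral_congr_ae (ae_of_all _ heq)
  intro m hm
  obtain ⟨a, w, _, herr⟩ := key m hm
  refine ⟨a, w, ?_⟩
  have hcongr : ∫ x, (f x - (1 / m : ℝ) * ∑ j, a j * max (∑ i, w j i * tilde x i) 0) ^ 2 ∂P
      = ∫ x, (f' x - (1 / m : ℝ) * ∑ j, a j * max (∑ i, w j i * tilde x i) 0) ^ 2 ∂P := by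
    refine integral_congr_ae ?_
    filter_upwards [hff'] with x hx
    rw [hx]
  rw [hcongr, one_mul]
  calc Real.sqrt (∫ x, (f' x - (1 / m : ℝ) * ∑ j, a j * max (∑ i, w j i * tilde x i) 0) ^ 2 ∂P)
      ≤ Real.sqrt (B ^ 2 / m) := Real.sqrt_le_sqrt herr
    _ = B / Real.sqrt m := by
        rw [Real.sqrt_div (sq_nonneg B), Real.sqrt_sq hB0]
end

section
/- Let σ(z) = max(z,0) be the ReLU activation and, for x ∈ [0,1]^d, write x̃ = (xᵀ,1)ᵀ ∈ ℝ^{d+1}. Fix C > 0 and let 𝓝_C be the set of all finite two-layer ReLU networks x ↦ (1/m) Σ_{j=1}^m a_j σ(w_jᵀ x̃) (m ∈ ℕ, a_j ∈ ℝ, w_j ∈ ℝ^{d+1}) whose path norm satisfies (1/m) Σ_{j=1}^m |a_j| ‖w_j‖₁ ≤ C. Suppose f* : [0,1]^d → ℝ is continuous and there is a sequence f_m ∈ 𝓝_C with f_m(x) → f*(x) for every x ∈ [0,1]^d. Then there exists a probability measure ρ* on ℝ × ℝ^{d+1} such that f*(x) = ∫ a σ(wᵀ x̃) dρ*(a,w)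 for all x ∈ [0,1]^d and ∫ |a| ‖w‖₁ dρ*(a,w) ≤ C. -/
open MeasureTheory

open Filter Metric Set

lemma geom_half : ∑' k : ℕ, ((1:ℝ) / 2 ^ (k + 1)) = 1 := by
  have := tsum_geometric_of_lt_one (by norm_num : (0:ℝ) ≤ 1/2) (by norm_num : (1:ℝ)/2 < 1)
  calc ∑' k : ℕ, ((1:ℝ) / 2 ^ (k + 1)) = ∑' k : ℕ, (1/2) * (1/2)^k := by
        refine tsum_congr fun k => by rw [pow_succ, one_div_pow]; ring
    _ = (1/2) * (1 - 1/2)⁻¹ := by rw [tsum_mul_left, this]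
    _ = 1 := by norm_num

lemma summable_half : Summable (fun k : ℕ => (1:ℝ) / 2 ^ (k + 1)) := by
  have : Summable (fun k : ℕ => (1/2:ℝ) * (1/2)^k) :=
    (summable_geometric_of_lt_one (by norm_num) (by norm_num)).mul_left _
  refine this.congr fun k => by rw [pow_succ, one_div_pow]; ring

lemma geom_third : ∑' k : ℕ, ((1:ℝ) / 3 ^ (k + 1)) = 1/2 := by
  have := tsum_geometric_of_lt_one (by norm_num : (0:ℝ) ≤ 1/3) (by norm_num : (1:ℝ)/3 < 1)
  calc ∑' k : ℕ, ((1:ℝ) / 3 ^ (k + 1)) = ∑' k : ℕ, (1/3) * (1/3)^k := by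
        refine tsum_congr fun k => by rw [pow_succ, one_div_pow]; ring
    _ = (1/3) * (1 - 1/3)⁻¹ := by rw [tsum_mul_left, this]
    _ = 1/2 := by norm_num

lemma summable_third : Summable (fun k : ℕ => (1:ℝ) / 3 ^ (k + 1)) := by
  have : Summable (fun k : ℕ => (1/3:ℝ) * (1/3)^k) :=
    (summable_geometric_of_lt_one (by norm_num) (by norm_num)).mul_left _
  refine this.congr fun k => by rw [pow_succ, one_div_pow]; ring

lemma exists_binary_digits {y : ℝ} (hy : y ∈ Icc (0:ℝ) 1) :
    ∃ b : ℕ → ℝ, (∀ k, b k = 0 ∨ b k = 1) ∧ ∑' k, b k / 2 ^ (k + 1) = y := by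
  rcases eq_or_lt_of_le hy.2 with h1 | h1
  · exact ⟨fun _ => 1, fun _ => Or.inr rfl, by rw [h1]; simpa using geom_half⟩
  · set a : ℕ → ℤ := fun M => ⌊y * 2 ^ M⌋ with ha
    have ha0 : a 0 = 0 := by simp [ha, Int.floor_eq_zero_iff, hy.1, h1]
    have hlb : ∀ M, (a M : ℝ) ≤ y * 2 ^ M := fun M => Int.floor_le _
    have hub : ∀ M, y * 2 ^ M < a M + 1 := fun M => Int.lt_floor_add_one _
    have hstep : ∀ M, a (M+1) = 2 * a M ∨ a (M+1) = 2 * a M + 1 := by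
      intro M
      have h1' : 2 * a M ≤ a (M+1) := by
        rw [ha]; refine Int.le_floor.2 ?_
        push_cast
        calc (2:ℝ) * a M ≤ 2 * (y * 2 ^ M) := by linarith [hlb M]
          _ = y * 2 ^ (M+1) := by ring
      have h2' : a (M+1) < 2 * a M + 2 := by
        rw [ha]; refine Int.floor_lt.2 ?_
        push_cast
        calc y * 2 ^ (M+1) = 2 * (y * 2 ^ M) := by ring
          _ < 2 * (a M + 1) := by linarith [hub M]
          _ = 2 * a M + 2 := by ring
      omega
    set b : ℕ → ℝ := fun M => ((a (M+1) - 2 * a M : ℤ) : ℝ) with hb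
    have hb01 : ∀ k, b k = 0 ∨ b k = 1 := by
      intro k; rcases hstep k with h | h <;> [left; right] <;> simp [hb, h]
    refine ⟨b, hb01, ?_⟩
    have hpartial : ∀ M, ∑ m ∈ Finset.range M, b m / 2 ^ (m + 1) = (a M : ℝ) / 2 ^ M := by
      intro M; induction M with
      | zero => simp [ha0]
      | succ M ih =>
        rw [Finset.sum_range_succ, ih, hb]
        push_cast
        field_simp
        ring
    have hnn : ∀ k, 0 ≤ b k := fun k => by rcases hb01 k with h | h <;> simp [h]
    have htend : Tendsto (fun M => ∑ m ∈ Finset.range M, b m / 2 ^ (m + 1)) atTop (nhds y) := by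
      simp only [hpartial]
      have h1 : Tendsto (fun M : ℕ => y - (1/2) ^ M) atTop (nhds y) := by
        have := tendsto_pow_atTop_nhds_zero_of_lt_one (by norm_num : (0:ℝ) ≤ 1/2)
          (by norm_num : (1:ℝ)/2 < 1)
        simpa using (tendsto_const_nhds (x := y)).sub this
      refine tendsto_of_tendsto_of_tendsto_of_le_of_le h1 (tendsto_const_nhds) ?_ ?_
      · intro M
        have h2 : (0:ℝ) < 2 ^ M := by positivity
        rw [le_div_iff₀ h2]
        have hpow : ((1:ℝ)/2) ^ M * 2 ^ M = 1 := by
          rw [← mul_pow]; norm_num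
        nlinarith [hub M]
      · intro M
        have h2 : (0:ℝ) < 2 ^ M := by positivity
        rw [div_le_iff₀ h2]
        exact hlb M
    have := (hasSum_iff_tendsto_nat_of_nonneg (fun k => div_nonneg (hnn k) (by positivity)) y).2 htend
    exact this.tsum_eq

noncomputable def saw (u : ℝ) : ℝ :=
  min 1 (max 0 (3 * Metric.infDist u (Set.range fun k : ℤ => (2 * k : ℝ)) - 1))

lemma saw_continuous : Continuous saw := by
  unfold saw
  exact continuous_const.min ((continuous_const.max
    (((Metric.continuous_infDist_pt _).const_smul (3:ℝ)).sub continuous_const)))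

lemma saw_mem (u : ℝ) : saw u ∈ Icc (0:ℝ) 1 := by
  unfold saw
  constructor
  · exact le_min (by norm_num) (le_max_left _ _)
  · exact min_le_left _ _

lemma saw_periodic : Function.Periodic saw 2 := by
  intro u
  unfold saw
  have : Metric.infDist (u + 2) (Set.range fun k : ℤ => (2 * k : ℝ))
      = Metric.infDist u (Set.range fun k : ℤ => (2 * k : ℝ)) := by
    have hiso : Isometry (fun v : ℝ => v + 2) := Isometry.of_dist_eq fun a b => by
      simp [Real.dist_eq]
    have himg : (fun v : ℝ => v + 2) '' (Set.range fun k : ℤ => (2 * k : ℝ))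
        = Set.range fun k : ℤ => (2 * k : ℝ) := by
      ext v
      simp only [Set.mem_image, Set.mem_range]
      constructor
      · rintro ⟨_, ⟨k, rfl⟩, rfl⟩; exact ⟨k + 1, by push_cast; ring⟩
      · rintro ⟨k, rfl⟩; exact ⟨2 * (k - 1), ⟨k - 1, by push_cast; ring⟩, by push_cast; ring⟩
    calc Metric.infDist (u + 2) (Set.range fun k : ℤ => (2 * k : ℝ))
        = Metric.infDist ((fun v : ℝ => v + 2) u)
            ((fun v : ℝ => v + 2) '' (Set.range fun k : ℤ => (2 * k : ℝ))) := by rw [himg]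
      _ = _ := Metric.infDist_image hiso
  rw [this]

lemma saw_nat_mul (u : ℝ) (A : ℕ) : saw (2 * A + u) = saw u := by
  induction A with
  | zero => simp
  | succ A ih =>
    push_cast
    have : (2 : ℝ) * (A + 1) + u = (2 * A + u) + 2 := by ring
    rw [this, saw_periodic (2 * A + u)]
    push_cast at ih
    exact ih

lemma infDist_even_eq {u : ℝ} (hu : u ∈ Icc (0:ℝ) 1) :
    Metric.infDist u (Set.range fun k : ℤ => (2 * k : ℝ)) = u := by
  apply le_antisymm
  · have : (0:ℝ) ∈ Set.range fun k : ℤ => (2 * k : ℝ) := ⟨0, by norm_num⟩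
    simpa [Real.dist_eq, abs_of_nonneg hu.1] using Metric.infDist_le_dist_of_mem (x := u) this
  · by_contra h
    push_neg at h
    obtain ⟨v, hvmem, hv⟩ := (Metric.infDist_lt_iff (show (Set.range fun k : ℤ => (2*k:ℝ)).Nonempty from ⟨0, 0, by norm_num⟩)).1 h
    obtain ⟨k, rfl⟩ := hvmem
    rw [Real.dist_eq, abs_lt] at hv
    obtain ⟨hv1, hv2⟩ := hv
    simp only at hv1 hv2
    have h1 := hu.1; have h2 := hu.2
    have hk0 : (0:ℝ) < 2 * k := by linarith
    have hk1 : (2:ℝ) * k < 2 * u := by linarith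
    have hk : (0:ℤ) < k := by exact_mod_cast (by linarith : (0:ℝ) < (k:ℝ))
    have : (1:ℝ) ≤ (k:ℝ) := by exact_mod_cast hk
    linarith

lemma saw_eval0 {u : ℝ} (hu : u ∈ Icc (0:ℝ) (1/3)) : saw u = 0 := by
  unfold saw
  rw [infDist_even_eq ⟨hu.1, by linarith [hu.2]⟩]
  have h : 3 * u - 1 ≤ 0 := by linarith [hu.2]
  rw [max_eq_left h, min_eq_right (by norm_num : (0:ℝ) ≤ 1)]

lemma saw_eval1 {u : ℝ} (hu : u ∈ Icc (2/3:ℝ) 1) : saw u = 1 := by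
  unfold saw
  rw [infDist_even_eq ⟨by linarith [hu.1], hu.2⟩]
  have : (1:ℝ) ≤ 3 * u - 1 := by linarith [hu.1]
  rw [min_eq_left (le_max_of_le_right this)]

lemma digit_bounds {c : ℕ → ℝ} (hc : ∀ l, c l = 0 ∨ c l = 1) (l : ℕ) :
    0 ≤ c l ∧ c l ≤ 1 := by rcases hc l with h | h <;> simp [h]

lemma summable_digits {c : ℕ → ℝ} (hc : ∀ l, c l = 0 ∨ c l = 1) :
    Summable (fun l : ℕ => c l / 3 ^ (l + 1)) := by
  refine Summable.of_nonneg_of_le (fun l => ?_) (fun l => ?_) summable_third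
  · exact div_nonneg (digit_bounds hc l).1 (by positivity)
  · exact (div_le_div_iff_of_pos_right (by positivity)).2 (digit_bounds hc l).2

lemma digits_tsum_mem {c : ℕ → ℝ} (hc : ∀ l, c l = 0 ∨ c l = 1) :
    (∑' l, c l / 3 ^ (l + 1)) ∈ Icc (0:ℝ) (1/2) := by
  constructor
  · exact tsum_nonneg fun l => div_nonneg (digit_bounds hc l).1 (by positivity)
  · rw [← geom_third]
    refine Summable.tsum_le_tsum (fun l => ?_) (summable_digits hc) summable_third
    exact (div_le_div_iff_of_pos_right (by positivity)).2 (digit_bounds hc l).2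

set_option maxHeartbeats 1000000 in
lemma saw_key {c : ℕ → ℝ} (hc : ∀ l, c l = 0 ∨ c l = 1) (j : ℕ) :
    saw (3 ^ j * (2 * ∑' l, c l / 3 ^ (l + 1))) = c j := by
  have hsum := summable_digits hc
  -- split the sum at j+1
  have hsplit := Summable.sum_add_tsum_nat_add (f := fun l => c l / 3 ^ (l + 1)) (j + 1) hsum
  -- the tail
  set ρ : ℝ := 2 * 3 ^ j * ∑' i, c (i + (j + 1)) / 3 ^ (i + (j + 1) + 1) with hρ
  have htail_nn : 0 ≤ ∑' i, c (i + (j + 1)) / 3 ^ (i + (j + 1) + 1) :=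
    tsum_nonneg fun i => div_nonneg (digit_bounds hc _).1 (by positivity)
  have htail_sum : Summable (fun i => c (i + (j + 1)) / 3 ^ (i + (j + 1) + 1)) :=
    (summable_nat_add_iff (j+1)).2 hsum
  have hρ_nn : 0 ≤ ρ := by
    rw [hρ]; positivity
  have hρ_le : ρ ≤ 1 / 3 := by
    rw [hρ]
    have : ∑' i, c (i + (j + 1)) / 3 ^ (i + (j + 1) + 1)
        ≤ ∑' i : ℕ, (1 / 3 ^ (j + 1)) * (1/3) * (1/3)^i := by
      refine Summable.tsum_le_tsum (fun i => ?_) htail_sum ?_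
      · have hle : c (i + (j + 1)) / 3 ^ (i + (j + 1) + 1) ≤ 1 / 3 ^ (i + (j + 1) + 1) :=
          (div_le_div_iff_of_pos_right (by positivity)).2 (digit_bounds hc _).2
        refine hle.trans (le_of_eq ?_)
        rw [show i + (j + 1) + 1 = (j + 1) + 1 + i from by ring]
        simp [pow_add, div_eq_mul_inv, mul_inv]
        ring
      · exact ((summable_geometric_of_lt_one (by norm_num) (by norm_num)).mul_left _)
    have hg : ∑' i : ℕ, (1 / 3 ^ (j + 1) : ℝ) * (1/3) * (1/3)^i
        = (1 / 3 ^ (j + 1)) * (1/3) * (1 - 1/3)⁻¹ := by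
      rw [tsum_mul_left, tsum_geometric_of_lt_one (by norm_num) (by norm_num)]
    have h3 : (1:ℝ) ≤ 3 ^ j := one_le_pow₀ (by norm_num)
    calc 2 * 3 ^ j * ∑' i, c (i + (j + 1)) / 3 ^ (i + (j + 1) + 1)
        ≤ 2 * 3 ^ j * ((1 / 3 ^ (j + 1)) * (1/3) * (1 - 1/3)⁻¹) := by
          rw [hg] at this
          exact mul_le_mul_of_nonneg_left this (by positivity)
      _ = 1 / 3 := by
          rw [pow_succ]
          field_simp
          ring
  -- head: A is an integer
  set A : ℕ := ∑ l ∈ Finset.range j, (if c l = 1 then 3 ^ (j - l - 1) else 0) with hA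
  have hhead : 3 ^ j * (2 * ∑ l ∈ Finset.range (j + 1), c l / 3 ^ (l + 1))
      = 2 * A + 2 * c j / 3 := by
    rw [Finset.sum_range_succ, mul_add, mul_add]
    congr 1
    · rw [hA]
      push_cast
      simp only [Finset.mul_sum]
      refine Finset.sum_congr rfl fun l hl => ?_
      have hl' : l < j := Finset.mem_range.1 hl
      rcases hc l with h | h
      · simp [h]
      · rw [h, if_pos rfl]
        have h3 : (3:ℝ) ^ j = 3 ^ (l + 1) * 3 ^ (j - l - 1) := by
          rw [← pow_add]
          congr 1
          omega
        rw [h3]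
        field_simp
    · have : (3:ℝ) ^ j * (2 * (c j / 3 ^ (j + 1))) = 2 * c j * (3 ^ j / 3 ^ (j + 1)) := by ring
      rw [this, pow_succ]
      field_simp
  have harg : 3 ^ j * (2 * ∑' l, c l / 3 ^ (l + 1)) = 2 * A + (2 * c j / 3 + ρ) := by
    rw [← hsplit, hρ]
    rw [mul_add, mul_add, hhead]
    ring
  rw [harg, saw_nat_mul]
  rcases hc j with h | h
  · rw [h]
    apply saw_eval0
    exact ⟨by linarith, by linarith⟩
  · rw [h]
    apply saw_eval1
    exact ⟨by linarith, by linarith⟩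

noncomputable def scurve (n : ℕ) (t : ℝ) : Fin n → ℝ :=
  fun i => ∑' k : ℕ, saw (3 ^ (n * k + i) * t) / 2 ^ (k + 1)

lemma scurve_continuous (n : ℕ) (i : Fin n) : Continuous (fun t => scurve n t i) := by
  refine continuous_tsum (fun k => ?_) summable_half (fun k t => ?_)
  · exact (saw_continuous.comp (continuous_const.mul continuous_id)).div_const _
  · rw [Real.norm_eq_abs, abs_div, abs_of_nonneg (saw_mem _).1, abs_of_nonneg (by positivity)]
    exact (div_le_div_iff_of_pos_right (by positivity)).2 (saw_mem _).2

lemma scurve_mem (n : ℕ) (t : ℝ) (i : Fin n) : scurve n t i ∈ Icc (0:ℝ) 1 := by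
  have hsum : Summable (fun k : ℕ => saw (3 ^ (n * k + i) * t) / 2 ^ (k + 1)) := by
    refine Summable.of_nonneg_of_le (fun k => div_nonneg (saw_mem _).1 (by positivity))
      (fun k => (div_le_div_iff_of_pos_right (by positivity)).2 (saw_mem _).2) summable_half
  constructor
  · exact tsum_nonneg fun k => div_nonneg (saw_mem _).1 (by positivity)
  · rw [← geom_half]
    exact Summable.tsum_le_tsum (fun k => (div_le_div_iff_of_pos_right (by positivity)).2 (saw_mem _).2)
      hsum summable_half

lemma scurve_surj {n : ℕ} (hn : 0 < n) {y : Fin n → ℝ} (hy : ∀ i, y i ∈ Icc (0:ℝ) 1) :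
    ∃ t ∈ Icc (0:ℝ) 1, ∀ i, scurve n t i = y i := by
  choose b hb01 hbsum using fun i => exists_binary_digits (hy i)
  set c : ℕ → ℝ := fun l => b ⟨l % n, Nat.mod_lt l hn⟩ (l / n) with hc
  have hc01 : ∀ l, c l = 0 ∨ c l = 1 := fun l => hb01 _ _
  refine ⟨2 * ∑' l, c l / 3 ^ (l + 1), ?_, ?_⟩
  · have := digits_tsum_mem hc01
    exact ⟨by linarith [this.1], by linarith [this.2]⟩
  · intro i
    have hkey : ∀ k : ℕ, saw (3 ^ (n * k + i) * (2 * ∑' l, c l / 3 ^ (l + 1))) = b i k := by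
      intro k
      rw [saw_key hc01 (n * k + i)]
      rw [hc]
      have h1 : (n * k + (i : ℕ)) % n = i := by
        rw [Nat.add_comm, Nat.add_mul_mod_self_left, Nat.mod_eq_of_lt i.isLt]
      have h2 : (n * k + (i : ℕ)) / n = k := by
        rw [Nat.add_comm, Nat.mul_comm, Nat.add_mul_div_right _ _ hn, Nat.div_eq_of_lt i.isLt,
          Nat.zero_add]
      simp only [h1, h2, Fin.eta]
    calc scurve n (2 * ∑' l, c l / 3 ^ (l + 1)) i
        = ∑' k : ℕ, b i k / 2 ^ (k + 1) := tsum_congr fun k => by rw [hkey k]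
      _ = y i := hbsum i

noncomputable def retr (d : ℕ) (p : ℝ × (Fin (d+1) → ℝ)) : ℝ × (Fin (d+1) → ℝ) :=
  (p.1 / max 1 |p.1|, fun i => p.2 i / max 1 (∑ j, |p.2 j|))

lemma retr_id {d : ℕ} {p : ℝ × (Fin (d+1) → ℝ)} (h1 : |p.1| ≤ 1) (h2 : ∑ j, |p.2 j| ≤ 1) :
    retr d p = p := by
  unfold retr
  rw [max_eq_left h1, max_eq_left h2]
  simp

lemma retr_mem {d : ℕ} (p : ℝ × (Fin (d+1) → ℝ)) :
    |(retr d p).1| ≤ 1 ∧ ∑ i, |(retr d p).2 i| ≤ 1 := by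
  unfold retr
  have hM1 : (0:ℝ) < max 1 |p.1| := lt_of_lt_of_le one_pos (le_max_left _ _)
  have hM2 : (0:ℝ) < max 1 (∑ j, |p.2 j|) := lt_of_lt_of_le one_pos (le_max_left _ _)
  constructor
  · rw [abs_div, abs_of_pos hM1, div_le_one hM1]
    exact le_max_right _ _
  · simp only
    have : ∀ i : Fin (d+1), |p.2 i / max 1 (∑ j, |p.2 j|)| = |p.2 i| / max 1 (∑ j, |p.2 j|) := by
      intro i; rw [abs_div, abs_of_pos hM2]
    rw [Finset.sum_congr rfl (fun i _ => this i), ← Finset.sum_div, div_le_one hM2]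
    exact le_max_right _ _

noncomputable def gmap (d : ℕ) (t : ℝ) : ℝ × (Fin (d+1) → ℝ) :=
  retr d (2 * scurve (d+2) t 0 - 1, fun i => 2 * scurve (d+2) t i.succ - 1)

lemma gmap_continuous (d : ℕ) : Continuous (gmap d) := by
  unfold gmap retr
  have h1 : Continuous fun t => 2 * scurve (d+2) t 0 - 1 :=
    ((continuous_const.mul (scurve_continuous (d+2) 0)).sub continuous_const)
  have h2 : ∀ i : Fin (d+1), Continuous fun t => 2 * scurve (d+2) t i.succ - 1 := fun i =>
    ((continuous_const.mul (scurve_continuous (d+2) i.succ)).sub continuous_const)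
  refine Continuous.prodMk ?_ ?_
  · exact h1.div (continuous_const.max h1.abs)
      (fun t => ne_of_gt (lt_of_lt_of_le one_pos (le_max_left _ _)))
  · refine continuous_pi fun i => ?_
    exact (h2 i).div (continuous_const.max (continuous_finset_sum _ fun j _ => (h2 j).abs))
      (fun t => ne_of_gt (lt_of_lt_of_le one_pos (le_max_left _ _)))

lemma gmap_mem (d : ℕ) (t : ℝ) : |(gmap d t).1| ≤ 1 ∧ ∑ i, |(gmap d t).2 i| ≤ 1 :=
  retr_mem _

lemma gmap_surj (d : ℕ) (p : ℝ × (Fin (d+1) → ℝ)) (h1 : |p.1| ≤ 1) (h2 : ∑ i, |p.2 i| ≤ 1) :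
    ∃ t ∈ Icc (0:ℝ) 1, gmap d t = p := by
  set y : Fin (d+2) → ℝ := Fin.cases ((p.1 + 1)/2) (fun i => (p.2 i + 1)/2) with hy
  have habs : ∀ i, |p.2 i| ≤ 1 := by
    intro i
    refine le_trans ?_ h2
    exact Finset.single_le_sum (f := fun j => |p.2 j|) (fun j _ => abs_nonneg _)
      (Finset.mem_univ i)
  have hym : ∀ i, y i ∈ Icc (0:ℝ) 1 := by
    intro i
    refine Fin.cases ?_ (fun j => ?_) i
    · rw [hy]; simp only [Fin.cases_zero]
      rw [abs_le] at h1
      exact ⟨by linarith [h1.1], by linarith [h1.2]⟩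
    · rw [hy]; simp only [Fin.cases_succ]
      have := habs j
      rw [abs_le] at this
      exact ⟨by linarith [this.1], by linarith [this.2]⟩
  obtain ⟨t, ht, hts⟩ := scurve_surj (by omega : 0 < d + 2) hym
  refine ⟨t, ht, ?_⟩
  have e0 : 2 * scurve (d+2) t 0 - 1 = p.1 := by
    rw [hts 0, hy]; simp only [Fin.cases_zero]; ring
  have es : ∀ i : Fin (d+1), 2 * scurve (d+2) t i.succ - 1 = p.2 i := by
    intro i
    rw [hts i.succ, hy]; simp only [Fin.cases_succ]; ring
  unfold gmap
  rw [show ((2 * scurve (d+2) t 0 - 1, fun i => 2 * scurve (d+2) t i.succ - 1) :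
      ℝ × (Fin (d+1) → ℝ)) = p from ?_]
  · exact retr_id h1 h2
  · exact Prod.ext e0 (funext es)

lemma integrable_of_bdd {μ : Measure ℝ} [IsFiniteMeasure μ] {g : ℝ → ℝ} {B : ℝ}
    (hg : Continuous g) (hB : ∀ t, |g t| ≤ B) : Integrable g μ := by
  refine Integrable.mono' (integrable_const B) hg.aestronglyMeasurable ?_
  exact Filter.Eventually.of_forall fun t => by rw [Real.norm_eq_abs]; exact hB t

lemma integral_ofReal_smul_dirac {r : ℝ} (hr : 0 ≤ r) (t : ℝ) (g : ℝ → ℝ) :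
    ∫ u, g u ∂((ENNReal.ofReal r) • Measure.dirac t) = r * g t := by
  rw [integral_smul_measure, integral_dirac, ENNReal.toReal_ofReal hr, smul_eq_mul]

/-- The function integrated against the parameter measure. -/
noncomputable def relnet (d : ℕ) (x : Fin d → ℝ) (t : ℝ) : ℝ :=
  (gmap d t).1 * max (∑ i, (gmap d t).2 i * tilde x i) 0

lemma relnet_continuous (d : ℕ) (x : Fin d → ℝ) : Continuous (relnet d x) := by
  unfold relnet
  have h := gmap_continuous d
  exact (continuous_fst.comp h).mul
    (((continuous_finset_sum _ fun i _ => ((continuous_apply i).comp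
      (continuous_snd.comp h)).mul continuous_const)).max continuous_const)

lemma relnet_bdd (d : ℕ) (x : Fin d → ℝ) (t : ℝ) :
    |relnet d x t| ≤ ∑ i, |tilde x i| := by
  unfold relnet
  obtain ⟨h1, h2⟩ := gmap_mem d t
  rw [abs_mul]
  have hmax : |max (∑ i, (gmap d t).2 i * tilde x i) 0| ≤ ∑ i, |tilde x i| := by
    rw [abs_le]
    constructor
    · refine le_trans (neg_nonpos_of_nonneg (by positivity)) (le_max_right _ _)
    · have hsingle : ∀ i, |(gmap d t).2 i| ≤ 1 := fun i =>
        le_trans (Finset.single_le_sum (f := fun j => |(gmap d t).2 j|)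
          (fun j _ => abs_nonneg _) (Finset.mem_univ i)) h2
      refine max_le ?_ (by positivity)
      calc ∑ i, (gmap d t).2 i * tilde x i
          ≤ ∑ i, 1 * |tilde x i| := by
            refine Finset.sum_le_sum fun i _ => ?_
            calc (gmap d t).2 i * tilde x i ≤ |(gmap d t).2 i * tilde x i| := le_abs_self _
              _ = |(gmap d t).2 i| * |tilde x i| := abs_mul _ _
              _ ≤ 1 * |tilde x i| := mul_le_mul_of_nonneg_right (hsingle i) (abs_nonneg _)
        _ = ∑ i, |tilde x i| := Finset.sum_congr rfl fun i _ => one_mul _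
    
  calc |(gmap d t).1| * |max (∑ i, (gmap d t).2 i * tilde x i) 0|
      ≤ 1 * (∑ i, |tilde x i|) := by
        refine mul_le_mul h1 hmax (abs_nonneg _) (by norm_num)
    _ = ∑ i, |tilde x i| := by ring

lemma network_measure (d : ℕ) {C : ℝ} (hC : 0 < C) {m : ℕ} (hm : 0 < m) (a : Fin m → ℝ)
    (w : Fin m → (Fin (d+1) → ℝ))
    (hpath : (1 / m : ℝ) * ∑ j, |a j| * ∑ i, |w j i| ≤ C) :
    ∃ μ : Measure ℝ, IsProbabilityMeasure μ ∧ μ (Set.Icc (0:ℝ) 1)ᶜ = 0 ∧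
      ∀ x : Fin d → ℝ,
        C * ∫ t, relnet d x t ∂μ
          = (1 / m : ℝ) * ∑ j, a j * max (∑ i, w j i * tilde x i) 0 := by
  classical
  -- normalized parameters
  set τ : Fin m → ℝ := fun j => |a j| * ∑ i, |w j i| with hτdef
  have hτnn : ∀ j, 0 ≤ τ j := fun j => mul_nonneg (abs_nonneg _)
    (Finset.sum_nonneg fun i _ => abs_nonneg _)
  set p : Fin m → ℝ × (Fin (d+1) → ℝ) := fun j =>
    if τ j = 0 then (0, 0)
    else ((if 0 ≤ a j then 1 else -1), fun i => w j i / (∑ i', |w j i'|)) with hpdef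
  have hpK : ∀ j, |(p j).1| ≤ 1 ∧ ∑ i, |(p j).2 i| ≤ 1 := by
    intro j
    simp only [hpdef]
    by_cases h : τ j = 0
    · simp [h]
    · have hn : 0 < ∑ i', |w j i'| := by
        rcases lt_or_eq_of_le (Finset.sum_nonneg fun i _ => abs_nonneg (w j i)) with h' | h'
        · exact h'
        · exfalso; apply h; rw [hτdef]; simp [← h']
      rw [if_neg h]
      constructor
      · by_cases ha : 0 ≤ a j <;> simp [ha]
      · simp only
        have : ∀ i : Fin (d+1), |w j i / (∑ i', |w j i'|)| = |w j i| / (∑ i', |w j i'|) := by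
          intro i; rw [abs_div, abs_of_pos hn]
        rw [Finset.sum_congr rfl fun i _ => this i, ← Finset.sum_div, div_self (ne_of_gt hn)]
  -- preimages
  have hpre : ∀ j, ∃ t ∈ Icc (0:ℝ) 1, gmap d t = p j := fun j =>
    gmap_surj d (p j) (hpK j).1 (hpK j).2
  choose t ht hgt using hpre
  obtain ⟨t0, ht0, hgt0⟩ := gmap_surj d (0, 0) (by norm_num) (by simp)
  -- masses
  set T : ℝ := ∑ j, τ j with hT
  have hTnn : 0 ≤ T := Finset.sum_nonneg fun j _ => hτnn j
  have hTle : T ≤ m * C := by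
    have hm' : (0:ℝ) < m := by exact_mod_cast hm
    rw [hT]
    calc (∑ j, τ j) = m * ((1/m) * ∑ j, τ j) := by field_simp
      _ ≤ m * C := by
          refine mul_le_mul_of_nonneg_left ?_ (le_of_lt hm')
          exact hpath
  have hmC : (0:ℝ) < m * C := by
    have hm' : (0:ℝ) < m := by exact_mod_cast hm
    positivity
  set μ : Measure ℝ :=
    (∑ j, (ENNReal.ofReal (τ j / (m * C))) • Measure.dirac (t j))
      + (ENNReal.ofReal (1 - T / (m * C))) • Measure.dirac t0 with hμ
  have hcnn : ∀ j, 0 ≤ τ j / (m * C) := fun j => div_nonneg (hτnn j) hmC.le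
  have hslack : 0 ≤ 1 - T / (m * C) := by
    rw [sub_nonneg, div_le_one hmC]
    exact hTle
  have hfin : ∀ j : Fin m, IsFiniteMeasure ((ENNReal.ofReal (τ j / (m * C))) • Measure.dirac (t j)) := by
    intro j
    constructor
    rw [Measure.smul_apply, smul_eq_mul]
    exact ENNReal.mul_lt_top ENNReal.ofReal_lt_top (by simp)
  have hfin0 : IsFiniteMeasure ((ENNReal.ofReal (1 - T / (m * C))) • Measure.dirac t0) := by
    constructor
    rw [Measure.smul_apply, smul_eq_mul]
    exact ENNReal.mul_lt_top ENNReal.ofReal_lt_top (by simp)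
  have hfinsum : IsFiniteMeasure (∑ j, (ENNReal.ofReal (τ j / (m * C))) • Measure.dirac (t j)) := by
    constructor
    rw [Measure.finset_sum_apply]
    refine ENNReal.sum_lt_top.2 fun j _ => ?_
    rw [Measure.smul_apply, smul_eq_mul]
    exact ENNReal.mul_lt_top ENNReal.ofReal_lt_top (by simp)
  have hprob : IsProbabilityMeasure μ := by
    constructor
    rw [hμ, Measure.add_apply, Measure.finset_sum_apply]
    have h1 : ∀ j ∈ Finset.univ, ((ENNReal.ofReal (τ j / (m * C))) • Measure.dirac (t j)) Set.univ
        = ENNReal.ofReal (τ j / (m * C)) := by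
      intro j _
      rw [Measure.smul_apply, smul_eq_mul]
      simp
    rw [Finset.sum_congr rfl h1, Measure.smul_apply, smul_eq_mul]
    simp only [measure_univ, mul_one]
    rw [← ENNReal.ofReal_sum_of_nonneg (fun j _ => hcnn j), ← ENNReal.ofReal_add
      (Finset.sum_nonneg fun j _ => hcnn j) hslack]
    rw [← Finset.sum_div]
    rw [← hT]
    norm_num
  refine ⟨μ, hprob, ?_, ?_⟩
  · rw [hμ, Measure.add_apply, Measure.finset_sum_apply]
    have h1 : ∀ j ∈ Finset.univ, ((ENNReal.ofReal (τ j / (m * C))) • Measure.dirac (t j))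
        (Set.Icc (0:ℝ) 1)ᶜ = 0 := by
      intro j _
      rw [Measure.smul_apply, smul_eq_mul, Measure.dirac_apply]
      have : t j ∉ (Set.Icc (0:ℝ) 1)ᶜ := by simp only [Set.notMem_compl_iff]; exact ht j
      simp [Set.indicator_of_notMem this]
    rw [Finset.sum_congr rfl h1, Measure.smul_apply, smul_eq_mul, Measure.dirac_apply]
    have : t0 ∉ (Set.Icc (0:ℝ) 1)ᶜ := by simp only [Set.notMem_compl_iff]; exact ht0
    simp [Set.indicator_of_notMem this]
  · intro x
    set g : ℝ → ℝ := relnet d x with hg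
    have hgc : Continuous g := relnet_continuous d x
    have hgb : ∀ u, |g u| ≤ ∑ i, |tilde x i| := relnet_bdd d x
    have hint : ∀ (ν : Measure ℝ) [IsFiniteMeasure ν], Integrable g ν := by
      intro ν hν
      exact integrable_of_bdd hgc hgb
    have hI : ∫ u, g u ∂μ
        = (∑ j, (τ j / (m * C)) * g (t j)) + (1 - T / (m * C)) * g t0 := by
      rw [hμ, integral_add_measure (@hint _ hfinsum) (@hint _ hfin0)]
      rw [integral_finset_sum_measure (fun j _ => @hint _ (hfin j))]
      rw [Finset.sum_congr rfl (fun j _ => integral_ofReal_smul_dirac (hcnn j) (t j) g)]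
      rw [integral_ofReal_smul_dirac hslack t0 g]
    -- evaluate g at atoms
    have hg0 : g t0 = 0 := by
      rw [hg]; unfold relnet; rw [hgt0]; simp
    have hgj : ∀ j, τ j * g (t j) = a j * max (∑ i, w j i * tilde x i) 0 := by
      intro j
      by_cases h : τ j = 0
      · rw [h]
        -- either a j = 0 or all w j i = 0
        rcases mul_eq_zero.1 (by rw [hτdef] at h; exact h) with h' | h'
        · have : a j = 0 := abs_eq_zero.1 h'
          rw [this]; ring
        · have hw : ∀ i, w j i = 0 := by
            intro i
            have := Finset.sum_eq_zero_iff_of_nonneg (fun i _ => abs_nonneg (w j i)) |>.1 h'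
              i (Finset.mem_univ i)
            exact abs_eq_zero.1 this
          have : (∑ i, w j i * tilde x i) = 0 := Finset.sum_eq_zero fun i _ => by rw [hw i]; ring
          rw [this]
          simp
      · have hn : 0 < ∑ i', |w j i'| := by
          rcases lt_or_eq_of_le (Finset.sum_nonneg fun i _ => abs_nonneg (w j i)) with h' | h'
          · exact h'
          · exfalso; apply h; rw [hτdef]; simp [← h']
        rw [hg]; unfold relnet
        rw [hgt j]
        simp only [hpdef, if_neg h]
        have hsum : (∑ i, (w j i / (∑ i', |w j i'|)) * tilde x i)
            = (∑ i, w j i * tilde x i) / (∑ i', |w j i'|) := by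
          refine Eq.trans (Finset.sum_congr rfl fun i _ => ?_) (Finset.sum_div _ _ _).symm
          ring
        rw [hsum]
        have hmax : max ((∑ i, w j i * tilde x i) / (∑ i', |w j i'|)) 0
            = (max (∑ i, w j i * tilde x i) 0) / (∑ i', |w j i'|) := by
          rcases le_or_gt (∑ i, w j i * tilde x i) 0 with hS | hS
          · rw [max_eq_right hS, max_eq_right (div_nonpos_of_nonpos_of_nonneg hS hn.le), zero_div]
          · rw [max_eq_left hS.le, max_eq_left (le_of_lt (div_pos hS hn))]
        rw [hmax]
        simp only [hτdef]
        by_cases ha : 0 ≤ a j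
        · rw [if_pos ha, abs_of_nonneg ha]
          field_simp
        · rw [if_neg ha, abs_of_neg (not_le.1 ha)]
          field_simp
    rw [hI, hg0]
    have hterm : ∀ j ∈ Finset.univ, (τ j / (m * C)) * g (t j)
        = (a j * max (∑ i, w j i * tilde x i) 0) / (m * C) := by
      intro j _
      rw [div_mul_eq_mul_div, hgj j]
    rw [Finset.sum_congr rfl hterm]
    rw [← Finset.sum_div]
    field_simp
    ring

lemma iUnion_Ioc_parts (q : ℕ → ℝ) (hmono : ∀ i, q i < q (i + 1)) (N : ℕ) :
    (⋃ i ∈ Finset.range N, Set.Ioc (q i) (q (i + 1))) = Set.Ioc (q 0) (q N) := by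
  induction N with
  | zero => simp
  | succ N ih =>
    rw [Finset.range_add_one]
    rw [Finset.set_biUnion_insert, ih, Set.union_comm]
    refine Set.Ioc_union_Ioc_eq_Ioc ?_ ?_
    · rcases Nat.eq_zero_or_pos N with h | h
      · rw [h]
      · exact le_of_lt ((strictMono_nat_of_lt_succ hmono) h)
    · exact (hmono N).le

lemma q_strict_mono {q : ℕ → ℝ} (hmono : ∀ i, q i < q (i + 1)) : StrictMono q :=
  strictMono_nat_of_lt_succ hmono

lemma riemann_approx {μ : Measure ℝ} [IsProbabilityMeasure μ] {g : ℝ → ℝ} {B ε : ℝ}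
    (hgc : Continuous g) (hgb : ∀ t, |g t| ≤ B) (hε : 0 ≤ ε)
    {N : ℕ} {q : ℕ → ℝ} (hmono : ∀ i, q i < q (i + 1))
    (hfull : μ (Set.Ioc (q 0) (q N))ᶜ = 0)
    (hclose : ∀ i < N, ∀ u ∈ Set.Ioc (q i) (q (i + 1)), |g u - g (q (i + 1))| ≤ ε) :
    |∫ t, g t ∂μ
      - ∑ i ∈ Finset.range N, g (q (i + 1)) * (μ (Set.Ioc (q i) (q (i + 1)))).toReal| ≤ ε := by
  have hsm := q_strict_mono hmono
  have hmeas : ∀ i : ℕ, MeasurableSet (Set.Ioc (q i) (q (i + 1))) := fun i => measurableSet_Ioc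
  have hdisj : (↑(Finset.range N) : Set ℕ).Pairwise
      (Function.onFun Disjoint fun i => Set.Ioc (q i) (q (i + 1))) := by
    intro i _ j _ hij
    unfold Function.onFun
    rcases lt_or_gt_of_ne hij with h | h
    · refine Set.Ioc_disjoint_Ioc.2 ?_
      have : q (i + 1) ≤ q j := hsm.le_iff_le.2 (by omega)
      exact le_trans (min_le_left _ _) (le_trans this (le_max_right _ _))
    · refine Set.Ioc_disjoint_Ioc.2 ?_
      have : q (j + 1) ≤ q i := hsm.le_iff_le.2 (by omega)
      exact le_trans (min_le_right _ _) (le_trans this (le_max_left _ _))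
  have hint : Integrable g μ := integrable_of_bdd hgc hgb
  have hrestrict : μ.restrict (Set.Ioc (q 0) (q N)) = μ :=
    Measure.restrict_eq_self_of_ae_mem (by
      rw [MeasureTheory.ae_iff]
      exact hfull)
  have hfullmeas : μ (Set.Ioc (q 0) (q N)) = 1 :=
    (prob_compl_eq_zero_iff measurableSet_Ioc).1 hfull
  have h1 : ∫ t, g t ∂μ = ∑ i ∈ Finset.range N, ∫ t in Set.Ioc (q i) (q (i + 1)), g t ∂μ := by
    conv_lhs => rw [← hrestrict]
    rw [← integral_biUnion_finset (Finset.range N) (fun i _ => hmeas i) hdisj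
      (fun i _ => hint.integrableOn)]
    rw [iUnion_Ioc_parts q hmono N]
  rw [h1, ← Finset.sum_sub_distrib]
  refine le_trans (Finset.abs_sum_le_sum_abs _ _) ?_
  have hterm : ∀ i ∈ Finset.range N,
      |∫ t in Set.Ioc (q i) (q (i + 1)), g t ∂μ
        - g (q (i + 1)) * (μ (Set.Ioc (q i) (q (i + 1)))).toReal|
      ≤ ε * (μ (Set.Ioc (q i) (q (i + 1)))).toReal := by
    intro i hi
    have hconst : ∫ t in Set.Ioc (q i) (q (i + 1)), g (q (i + 1)) ∂μ
        = (μ (Set.Ioc (q i) (q (i + 1)))).toReal * g (q (i + 1)) := by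
      rw [setIntegral_const]; rfl
    have : ∫ t in Set.Ioc (q i) (q (i + 1)), g t ∂μ
        - g (q (i + 1)) * (μ (Set.Ioc (q i) (q (i + 1)))).toReal
        = ∫ t in Set.Ioc (q i) (q (i + 1)), (g t - g (q (i + 1))) ∂μ := by
      rw [integral_sub hint.integrableOn (integrable_const _), hconst]
      ring
    rw [this]
    have := norm_setIntegral_le_of_norm_le_const (μ := μ) (s := Set.Ioc (q i) (q (i + 1)))
      (C := ε) (f := fun t => g t - g (q (i + 1)))
      (measure_lt_top μ _)
      (fun t ht => by rw [Real.norm_eq_abs]; exact hclose i (Finset.mem_range.1 hi) t ht)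
    rw [Real.norm_eq_abs] at this
    exact this
  refine le_trans (Finset.sum_le_sum hterm) ?_
  rw [← Finset.mul_sum]
  have hsum : ∑ i ∈ Finset.range N, (μ (Set.Ioc (q i) (q (i + 1)))).toReal = 1 := by
    rw [← ENNReal.toReal_sum (fun i _ => measure_ne_top μ _)]
    rw [← measure_biUnion_finset hdisj (fun i _ => hmeas i)]
    rw [iUnion_Ioc_parts q hmono N, hfullmeas]
    simp
  rw [hsum, mul_one]

lemma limit_measure (μ : ℕ → Measure ℝ) (hprob : ∀ k, IsProbabilityMeasure (μ k))
    (hsupp : ∀ k, μ k (Set.Icc (0:ℝ) 1)ᶜ = 0) (U : Ultrafilter ℕ) :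
    ∃ ν : Measure ℝ, IsProbabilityMeasure ν ∧
      ∀ g : ℝ → ℝ, Continuous g → (∃ B, ∀ t, |g t| ≤ B) →
        Tendsto (fun k => ∫ t, g t ∂μ k) (↑U) (nhds (∫ t, g t ∂ν)) := by
  classical
  -- CDFs
  set F : ℕ → ℝ → ℝ := fun k x => (μ k (Set.Iic x)).toReal with hF
  have hF01 : ∀ k x, F k x ∈ Icc (0:ℝ) 1 := by
    intro k x
    haveI := hprob k
    constructor
    · exact ENNReal.toReal_nonneg
    · rw [hF]
      simp only
      rw [← ENNReal.toReal_one]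
      exact ENNReal.toReal_mono (by simp) prob_le_one
  have hFmono : ∀ k, Monotone (F k) := by
    intro k x y hxy
    haveI := hprob k
    exact ENNReal.toReal_mono (measure_ne_top _ _) (measure_mono (Set.Iic_subset_Iic.2 hxy))
  have hIcc1 : ∀ k, μ k (Set.Icc (0:ℝ) 1) = 1 := by
    intro k
    haveI := hprob k
    exact (prob_compl_eq_zero_iff measurableSet_Icc).1 (hsupp k)
  have hF1 : ∀ k x, 1 ≤ x → F k x = 1 := by
    intro k x hx
    haveI := hprob k
    have h1 : μ k (Set.Iic x) = 1 := by
      refine le_antisymm prob_le_one ?_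
      rw [← hIcc1 k]
      exact measure_mono fun u hu => le_trans hu.2 hx
    rw [hF]; simp only [h1, ENNReal.toReal_one]
  have hF0 : ∀ k x, x < 0 → F k x = 0 := by
    intro k x hx
    have h1 : μ k (Set.Iic x) = 0 := by
      refine measure_mono_null ?_ (hsupp k)
      intro u hu
      simp only [Set.mem_compl_iff, Set.mem_Icc, not_and_or, not_le]
      left
      exact lt_of_le_of_lt (Set.mem_Iic.1 hu) hx
    rw [hF]; simp only [h1, ENNReal.toReal_zero]
  have hFIoc : ∀ k a b, a ≤ b → (μ k (Set.Ioc a b)).toReal = F k b - F k a := by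
    intro k a b hab
    haveI := hprob k
    have hdiff : Set.Ioc a b = Set.Iic b \ Set.Iic a := (Set.Iic_sdiff_Iic).symm
    rw [hdiff, measure_sdiff (Set.Iic_subset_Iic.2 hab) measurableSet_Iic.nullMeasurableSet
      (measure_ne_top _ _)]
    rw [ENNReal.toReal_sub_of_le (measure_mono (Set.Iic_subset_Iic.2 hab)) (measure_ne_top _ _)]
  -- ultrafilter limits of the CDFs
  have hLex : ∀ x : ℝ, ∃ l ∈ Icc (0:ℝ) 1, Tendsto (fun k => F k x) (↑U) (nhds l) := by
    intro x
    obtain ⟨l, hl, hle⟩ := isCompact_Icc.ultrafilter_le_nhds (U.map (fun k => F k x))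
      (le_principal_iff.2 (Filter.mem_map.2 (Filter.univ_mem' fun k => hF01 k x)))
    refine ⟨l, hl, ?_⟩
    rw [Filter.Tendsto, ← Ultrafilter.coe_map]
    exact hle
  choose L hL01 hLtend using hLex
  have hLmono : Monotone L := by
    intro x y hxy
    exact le_of_tendsto_of_tendsto' (hLtend x) (hLtend y) fun k => hFmono k hxy
  have hL1 : ∀ x, 1 ≤ x → L x = 1 := by
    intro x hx
    refine tendsto_nhds_unique (hLtend x) ?_
    have : (fun k => F k x) = fun _ => 1 := funext fun k => hF1 k x hx
    rw [this]
    exact tendsto_const_nhds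
  have hL0 : ∀ x, x < 0 → L x = 0 := by
    intro x hx
    refine tendsto_nhds_unique (hLtend x) ?_
    have : (fun k => F k x) = fun _ => 0 := funext fun k => hF0 k x hx
    rw [this]
    exact tendsto_const_nhds
  -- the limit CDF
  set f : ℝ → ℝ := fun t => sInf (L '' Set.Ioi t) with hfdef
  have hbdd : ∀ t, BddBelow (L '' Set.Ioi t) := by
    intro t
    exact ⟨0, fun y ⟨q, _, hq⟩ => hq ▸ (hL01 q).1⟩
  have hne : ∀ t : ℝ, (L '' Set.Ioi t).Nonempty := fun t =>
    ⟨L (t + 1), ⟨t + 1, by simp, rfl⟩⟩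
  have hf_le : ∀ {t q : ℝ}, t < q → f t ≤ L q := by
    intro t q h
    exact csInf_le (hbdd t) ⟨q, h, rfl⟩
  have hle_f : ∀ {t q : ℝ}, t ≤ q → L t ≤ f q := by
    intro t q h
    exact le_csInf (hne q) fun y ⟨r, hr, hy⟩ => hy ▸ hLmono (le_of_lt (lt_of_le_of_lt h hr))
  have hfmono : Monotone f := by
    intro s t hst
    exact le_csInf (hne t) fun y ⟨q, hq, hy⟩ =>
      hy ▸ csInf_le (hbdd s) ⟨q, lt_of_le_of_lt hst hq, rfl⟩
  have hfrc : ∀ x : ℝ, ContinuousWithinAt f (Set.Ici x) x := by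
    intro x
    rw [ContinuousWithinAt]
    rw [Metric.tendsto_nhdsWithin_nhds]
    intro ε hε
    have hlt : f x < f x + ε := by linarith
    obtain ⟨y, ⟨qq, hqq, rfl⟩, hy⟩ := (csInf_lt_iff (hbdd x) (hne x)).1 hlt
    refine ⟨qq - x, by simpa using hqq, fun t ht hdist => ?_⟩
    have h1 : f x ≤ f t := hfmono ht
    have h2 : f t ≤ L qq := by
      refine hf_le ?_
      rw [Real.dist_eq, abs_of_nonneg (by simpa using ht : 0 ≤ t - x)] at hdist
      linarith
    rw [Real.dist_eq, abs_of_nonneg (by linarith)]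
    linarith
  set Fs : StieltjesFunction ℝ := ⟨f, hfmono, hfrc⟩ with hFs
  have hFs_eval : ∀ t, Fs t = f t := fun t => rfl
  have hf1 : ∀ t, 1 ≤ t → f t = 1 := by
    intro t ht
    refine le_antisymm ?_ (le_csInf (hne t) fun y ⟨q, hq, hy⟩ => ?_)
    · have : f t ≤ L (t + 1) := hf_le (by linarith)
      rw [hL1 (t+1) (by linarith)] at this
      exact this
    · rw [← hy, hL1 q (le_trans ht (le_of_lt hq))]
  have hf0 : ∀ t, t < 0 → f t = 0 := by
    intro t ht
    refine le_antisymm ?_ (le_csInf (hne t) fun y ⟨q, hq, hy⟩ => hy ▸ (hL01 q).1)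
    · have : f t ≤ L (t / 2) := hf_le (by linarith)
      rw [hL0 (t/2) (by linarith)] at this
      exact this
  have hfL : ∀ q, ContinuousAt L q → f q = L q := by
    intro q hc
    refine le_antisymm ?_ (hle_f le_rfl)
    have htd : Tendsto L (nhdsWithin q (Set.Ioi q)) (nhds (L q)) :=
      hc.continuousWithinAt.tendsto
    refine ge_of_tendsto htd ?_
    refine eventually_mem_nhdsWithin.mono fun r hr => hf_le hr
  -- the limit measure
  set ν : Measure ℝ := Fs.measure with hν
  have hν_Ioc : ∀ a b : ℝ, a ≤ b → (ν (Set.Ioc a b)).toReal = f b - f a := by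
    intro a b hab
    rw [hν, StieltjesFunction.measure_Ioc]
    exact ENNReal.toReal_ofReal (by have := hfmono hab; simpa [hFs_eval] using sub_nonneg.2 this)
  have hνprob : IsProbabilityMeasure ν := by
    constructor
    rw [hν, StieltjesFunction.measure_univ (l := 0) (u := 1)]
    · norm_num
    · refine tendsto_const_nhds.congr' ?_
      refine (eventually_lt_atBot (0:ℝ)).mono fun t ht => ?_
      rw [hFs_eval, hf0 t ht]
    · refine tendsto_const_nhds.congr' ?_
      refine (eventually_ge_atTop (1:ℝ)).mono fun t ht => ?_
      rw [hFs_eval, hf1 t ht]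
  -- dense set of continuity points
  have hDcount : {x : ℝ | ¬ContinuousAt L x}.Countable := hLmono.countable_not_continuousAt
  have hDdense : Dense {x : ℝ | ContinuousAt L x} := by
    have := hDcount.dense_compl (𝕜 := ℝ)
    simpa only [Set.compl_setOf, not_not] using this
    
  refine ⟨ν, hνprob, ?_⟩
  intro g hgc ⟨B, hgb⟩
  haveI := hνprob
  rw [Metric.tendsto_nhds]
  intro ε hε
  -- uniform continuity on [-1,2]
  have hUC := (isCompact_Icc (a := (-1:ℝ)) (b := 2)).uniformContinuousOn_of_continuous
    hgc.continuousOn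
  rw [Metric.uniformContinuousOn_iff] at hUC
  obtain ⟨δ, hδ, hδ'⟩ := hUC (ε/4) (by linarith)
  set h : ℝ := min (δ/2) (1/2) with hh
  have hh0 : 0 < h := by
    rw [hh]
    exact lt_min (by linarith) (by norm_num)
  have hh12 : h ≤ 1/2 := min_le_right _ _
  have hhδ : 2 * h ≤ δ := by
    have : h ≤ δ/2 := min_le_left _ _
    linarith
  -- partition points at continuity points of L
  have hqex : ∀ i : ℕ, ∃ z, z ∈ {x : ℝ | ContinuousAt L x} ∧
      z ∈ Set.Ioo ((i:ℝ) * h - h) ((i:ℝ) * h) := by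
    intro i
    exact hDdense.exists_between (by linarith)
  choose q hqc hqio using hqex
  set N : ℕ := ⌈1/h⌉₊ + 1 with hN
  have hq_lt : ∀ i : ℕ, q i < q (i + 1) := by
    intro i
    have h1 : q i < (i:ℝ) * h := (hqio i).2
    have h2 : ((i:ℝ)+1) * h - h ≤ q (i+1) := by
      have := (hqio (i+1)).1
      push_cast at this
      linarith
    have : ((i:ℝ)+1) * h - h = (i:ℝ) * h := by ring
    linarith
  have hq0 : q 0 < 0 := by
    have := (hqio 0).2
    simpa using this
  have hqN : 1 ≤ q N := by
    have h1 : ((N:ℝ)) * h - h ≤ q N := le_of_lt (hqio N).1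
    have h2 : (1:ℝ)/h ≤ ⌈1/h⌉₊ := Nat.le_ceil _
    have h3 : ((N:ℝ)) = ⌈1/h⌉₊ + 1 := by rw [hN]; push_cast; ring
    have : (1:ℝ) ≤ ((N:ℝ) - 1) * h := by
      rw [h3]
      have : (1:ℝ)/h * h = 1 := by field_simp
      calc (1:ℝ) = 1/h * h := this.symm
        _ ≤ (⌈1/h⌉₊ : ℝ) * h := by
            refine mul_le_mul_of_nonneg_right h2 hh0.le
        _ = ((⌈1/h⌉₊:ℝ) + 1 - 1) * h := by ring
    calc (1:ℝ) ≤ (N:ℝ) * h - h := by linarith [this]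
      _ ≤ q N := h1
  have hqub : ∀ i ≤ N, q i < 2 := by
    intro i hi
    have h1 : q i < (i:ℝ) * h := (hqio i).2
    have h2 : ((i:ℝ)) ≤ (N:ℝ) := by exact_mod_cast hi
    have h3 : (⌈1/h⌉₊ : ℝ) < 1/h + 1 := Nat.ceil_lt_add_one (by positivity)
    have h4 : ((N:ℝ)) < 1/h + 2 := by
      rw [hN]; push_cast; linarith
    have h5 : (i:ℝ) * h ≤ (N:ℝ) * h := mul_le_mul_of_nonneg_right h2 hh0.le
    have h6 : (N:ℝ) * h < (1/h + 2) * h := mul_lt_mul_of_pos_right h4 hh0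
    have h7 : (1/h + 2) * h = 1 + 2 * h := by field_simp
    calc q i < (i:ℝ) * h := h1
      _ ≤ (N:ℝ) * h := h5
      _ < 1 + 2 * h := by rw [← h7]; exact h6
      _ ≤ 2 := by linarith
  have hqlb : ∀ i : ℕ, -1 < q i := by
    intro i
    have := (hqio i).1
    have h1 : (0:ℝ) ≤ (i:ℝ) * h := by positivity
    have : -h ≤ (i:ℝ) * h - h := by linarith
    linarith [lt_of_le_of_lt (le_refl (-1:ℝ)) (show (-1:ℝ) < -h from by linarith)]
  -- full measure of the partition window
  have hsubset : Set.Icc (0:ℝ) 1 ⊆ Set.Ioc (q 0) (q N) := by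
    intro u hu
    exact ⟨lt_of_lt_of_le hq0 hu.1, le_trans hu.2 hqN⟩
  have hfullk : ∀ k, μ k (Set.Ioc (q 0) (q N))ᶜ = 0 := fun k =>
    measure_mono_null (Set.compl_subset_compl.2 hsubset) (hsupp k)
  have hfullν : ν (Set.Ioc (q 0) (q N))ᶜ = 0 := by
    refine (prob_compl_eq_zero_iff measurableSet_Ioc).2 ?_
    have : (ν (Set.Ioc (q 0) (q N))).toReal = 1 := by
      rw [hν_Ioc (q 0) (q N) (by linarith), hf1 (q N) hqN, hf0 (q 0) hq0]
      norm_num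
    have hfin : ν (Set.Ioc (q 0) (q N)) ≠ ⊤ := measure_ne_top _ _
    rw [← ENNReal.ofReal_toReal hfin, this]
    norm_num
  -- closeness hypothesis for the Riemann lemma
  have hclose : ∀ i < N, ∀ u ∈ Set.Ioc (q i) (q (i + 1)), |g u - g (q (i + 1))| ≤ ε/4 := by
    intro i hi u hu
    have hqi1 : q (i+1) < 2 := hqub (i+1) (by omega)
    have hui : -1 < u := lt_trans (hqlb i) hu.1
    have hui2 : u < 2 := lt_of_le_of_lt hu.2 hqi1
    have hdist : dist u (q (i+1)) < δ := by
      rw [Real.dist_eq, abs_of_nonpos (by linarith [hu.2])]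
      have h1 : q i < (i:ℝ) * h := (hqio i).2
      have h2 : q (i+1) < ((i:ℝ)+1) * h := by
        have := (hqio (i+1)).2
        push_cast at this
        linarith
      have h3 : (i:ℝ) * h - h < q i := by
        have := (hqio i).1
        linarith
      have : q (i+1) - u < 2 * h := by
        have := hu.1
        nlinarith
      linarith
    have := hδ' u ⟨hui.le, hui2.le⟩ (q (i+1)) ⟨by linarith [hqlb (i+1)], hqi1.le⟩ hdist
    rw [Real.dist_eq] at this
    linarith
  -- Riemann approximations
  have hriem_k : ∀ k, |∫ t, g t ∂μ k
      - ∑ i ∈ Finset.range N, g (q (i + 1)) * (μ k (Set.Ioc (q i) (q (i + 1)))).toReal| ≤ ε/4 := by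
    intro k
    haveI := hprob k
    exact riemann_approx hgc hgb (by linarith) hq_lt (hfullk k) hclose
  have hriem_ν : |∫ t, g t ∂ν
      - ∑ i ∈ Finset.range N, g (q (i + 1)) * (ν (Set.Ioc (q i) (q (i + 1)))).toReal| ≤ ε/4 :=
    riemann_approx hgc hgb (by linarith) hq_lt hfullν hclose
  -- convergence of the Riemann sums
  have hsums : Tendsto (fun k => ∑ i ∈ Finset.range N,
      g (q (i + 1)) * (μ k (Set.Ioc (q i) (q (i + 1)))).toReal) (↑U)
      (nhds (∑ i ∈ Finset.range N, g (q (i + 1)) * (ν (Set.Ioc (q i) (q (i + 1)))).toReal)) := by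
    refine tendsto_finset_sum _ fun i _ => ?_
    have hIoc_eq : (ν (Set.Ioc (q i) (q (i + 1)))).toReal = L (q (i+1)) - L (q i) := by
      rw [hν_Ioc _ _ (hq_lt i).le, hfL _ (hqc (i+1)), hfL _ (hqc i)]
    have hktend : Tendsto (fun k => (μ k (Set.Ioc (q i) (q (i + 1)))).toReal) (↑U)
        (nhds ((ν (Set.Ioc (q i) (q (i + 1)))).toReal)) := by
      rw [hIoc_eq]
      have : (fun k => (μ k (Set.Ioc (q i) (q (i + 1)))).toReal)
          = fun k => F k (q (i+1)) - F k (q i) := funext fun k => hFIoc k _ _ (hq_lt i).le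
      rw [this]
      exact (hLtend (q (i+1))).sub (hLtend (q i))
    exact hktend.const_mul _
  -- combine
  have hev : ∀ᶠ k in (↑U : Filter ℕ), dist (∑ i ∈ Finset.range N,
      g (q (i + 1)) * (μ k (Set.Ioc (q i) (q (i + 1)))).toReal)
      (∑ i ∈ Finset.range N, g (q (i + 1)) * (ν (Set.Ioc (q i) (q (i + 1)))).toReal) < ε/4 :=
    (Metric.tendsto_nhds.1 hsums) (ε/4) (by linarith)
  refine hev.mono fun k hk => ?_
  rw [Real.dist_eq]
  rw [Real.dist_eq] at hk
  have h1 := hriem_k k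
  have h2 := hriem_ν
  set Ik := ∫ t, g t ∂μ k
  set Iν := ∫ t, g t ∂ν
  set Sk := ∑ i ∈ Finset.range N, g (q (i + 1)) * (μ k (Set.Ioc (q i) (q (i + 1)))).toReal
  set Sν := ∑ i ∈ Finset.range N, g (q (i + 1)) * (ν (Set.Ioc (q i) (q (i + 1)))).toReal
  calc |Ik - Iν| ≤ |Ik - Sk| + |Sk - Sν| + |Sν - Iν| :=
        le_trans (abs_sub_le Ik Sν Iν) (by linarith [abs_sub_le Ik Sk Sν])
    _ < ε := by
        rw [abs_sub_comm Sν Iν]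
        linarith

/-- Inverse approximation theorem for Barron space: if a continuous function `f*` on
`[0,1]^d` is the pointwise limit of two-layer ReLU networks whose path norms
`(1/m) ∑_j |a_j|‖w_j‖₁` are uniformly bounded by `C`, then `f*` has a representing
probability measure `ρ*` with Barron norm `∫ |a|‖w‖₁ dρ* ≤ C`. -/
theorem barron_inverse_approximation
    (d : ℕ) (C : ℝ) (hC : 0 < C)
    (fstar : (Fin d → ℝ) → ℝ)
    (hcont : ContinuousOn fstar (Set.Icc (0 : Fin d → ℝ) 1))
    (fseq : ℕ → (Fin d → ℝ) → ℝ)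
    -- each `fseq k` is a two-layer ReLU network with path norm at most `C`
    (hnet : ∀ k : ℕ, ∃ (m : ℕ) (_ : 0 < m) (a : Fin m → ℝ) (w : Fin m → (Fin (d + 1) → ℝ)),
      (∀ x : Fin d → ℝ,
        fseq k x = (1 / m : ℝ) * ∑ j, a j * max (∑ i, w j i * tilde x i) 0) ∧
      (1 / m : ℝ) * ∑ j, |a j| * ∑ i, |w j i| ≤ C)
    (hconv : ∀ x ∈ Set.Icc (0 : Fin d → ℝ) 1,
      Filter.Tendsto (fun k => fseq k x) Filter.atTop (nhds (fstar x))) :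
    ∃ ρstar : Measure (ℝ × (Fin (d + 1) → ℝ)), IsProbabilityMeasure ρstar ∧
      (∀ x ∈ Set.Icc (0 : Fin d → ℝ) 1,
        fstar x = ∫ p, p.1 * max (∑ i, p.2 i * tilde x i) 0 ∂ρstar) ∧
      Integrable (fun p : ℝ × (Fin (d + 1) → ℝ) => |p.1| * ∑ i, |p.2 i|) ρstar ∧
      (∫ p, |p.1| * ∑ i, |p.2 i| ∂ρstar) ≤ C := by
  classical
  choose m hm a w hspec using hnet
  have hμex : ∀ k, ∃ μ : Measure ℝ, IsProbabilityMeasure μ ∧ μ (Set.Icc (0:ℝ) 1)ᶜ = 0 ∧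
      ∀ x : Fin d → ℝ, C * ∫ t, relnet d x t ∂μ
        = (1 / (m k) : ℝ) * ∑ j, a k j * max (∑ i, w k j i * tilde x i) 0 := fun k =>
    network_measure d hC (hm k) (a k) (w k) (hspec k).2
  choose μ hμprob hμsupp hμid using hμex
  set U : Ultrafilter ℕ := Ultrafilter.of (atTop : Filter ℕ) with hUdef
  have hU : (↑U : Filter ℕ) ≤ atTop := Ultrafilter.of_le _
  obtain ⟨ν, hνprob, hνtend⟩ := limit_measure μ hμprob hμsupp U
  haveI := hνprob
  -- representation of fstar over ν
  have hrep : ∀ x ∈ Set.Icc (0 : Fin d → ℝ) 1, fstar x = C * ∫ t, relnet d x t ∂ν := by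
    intro x hx
    refine tendsto_nhds_unique ((hconv x hx).mono_left hU) ?_
    have h1 : (fun k => fseq k x) = fun k => C * ∫ t, relnet d x t ∂μ k :=
      funext fun k => by rw [(hspec k).1 x, ← hμid k x]
    rw [h1]
    exact (hνtend (relnet d x) (relnet_continuous d x)
      ⟨∑ i, |tilde x i|, relnet_bdd d x⟩).const_mul C
  -- push forward
  set Φ : ℝ → ℝ × (Fin (d+1) → ℝ) := fun t => (C * (gmap d t).1, (gmap d t).2) with hΦdef
  have hΦc : Continuous Φ := by
    refine Continuous.prodMk ?_ ?_
    · exact continuous_const.mul (continuous_fst.comp (gmap_continuous d))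
    · exact continuous_snd.comp (gmap_continuous d)
  set ρ : Measure (ℝ × (Fin (d + 1) → ℝ)) := Measure.map Φ ν with hρdef
  haveI hρprob : IsProbabilityMeasure ρ := Measure.isProbabilityMeasure_map hΦc.aemeasurable
  refine ⟨ρ, hρprob, ?_, ?_, ?_⟩
  · -- representation
    intro x hx
    have hcont2 : Continuous (fun p : ℝ × (Fin (d + 1) → ℝ) =>
        p.1 * max (∑ i, p.2 i * tilde x i) 0) := by
      exact continuous_fst.mul ((continuous_finset_sum _ fun i _ =>
        ((continuous_apply i).comp continuous_snd).mul continuous_const).max continuous_const)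
    rw [hρdef, integral_map hΦc.aemeasurable hcont2.aestronglyMeasurable]
    have hcomp : (fun t => (Φ t).1 * max (∑ i, (Φ t).2 i * tilde x i) 0)
        = fun t => C * relnet d x t := by
      funext t
      rw [hΦdef]
      unfold relnet
      simp only
      ring
    rw [hcomp, integral_const_mul]
    exact hrep x hx
  · -- integrability
    have hcontB : Continuous (fun p : ℝ × (Fin (d + 1) → ℝ) => |p.1| * ∑ i, |p.2 i|) :=
      continuous_fst.abs.mul (continuous_finset_sum _ fun i _ =>
        ((continuous_apply i).comp continuous_snd).abs)
    rw [hρdef, integrable_map_measure hcontB.aestronglyMeasurable hΦc.aemeasurable]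
    refine integrable_of_bdd (B := C) (hcontB.comp hΦc) ?_
    intro t
    obtain ⟨h1, h2⟩ := gmap_mem d t
    have hnn : 0 ≤ |( Φ t).1| * ∑ i, |(Φ t).2 i| :=
      mul_nonneg (abs_nonneg _) (Finset.sum_nonneg fun i _ => abs_nonneg _)
    rw [Function.comp_apply, abs_of_nonneg hnn, hΦdef]
    simp only [abs_mul]
    calc |C| * |(gmap d t).1| * ∑ i, |(gmap d t).2 i|
        ≤ |C| * 1 * 1 := by
          refine mul_le_mul (mul_le_mul_of_nonneg_left h1 (abs_nonneg _)) h2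
            (Finset.sum_nonneg fun i _ => abs_nonneg _) (by positivity)
      _ = C := by rw [abs_of_pos hC]; ring
  · -- Barron norm bound
    have hcontB : Continuous (fun p : ℝ × (Fin (d + 1) → ℝ) => |p.1| * ∑ i, |p.2 i|) :=
      continuous_fst.abs.mul (continuous_finset_sum _ fun i _ =>
        ((continuous_apply i).comp continuous_snd).abs)
    rw [hρdef, integral_map hΦc.aemeasurable hcontB.aestronglyMeasurable]
    have hbd : ∀ t, |(Φ t).1| * ∑ i, |(Φ t).2 i| ≤ C := by
      intro t
      obtain ⟨h1, h2⟩ := gmap_mem d t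
      rw [hΦdef]
      simp only [abs_mul]
      calc |C| * |(gmap d t).1| * ∑ i, |(gmap d t).2 i|
          ≤ |C| * 1 * 1 := by
            refine mul_le_mul (mul_le_mul_of_nonneg_left h1 (abs_nonneg _)) h2
              (Finset.sum_nonneg fun i _ => abs_nonneg _) (by positivity)
        _ = C := by rw [abs_of_pos hC]; ring
    have hintc : Integrable (fun t => |(Φ t).1| * ∑ i, |(Φ t).2 i|) ν := by
      refine integrable_of_bdd (B := C) (hcontB.comp hΦc) ?_
      intro t
      have hnn : 0 ≤ |(Φ t).1| * ∑ i, |(Φ t).2 i| :=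
        mul_nonneg (abs_nonneg _) (Finset.sum_nonneg fun i _ => abs_nonneg _)
      rw [abs_of_nonneg hnn]
      exact hbd t
    calc ∫ t, |(Φ t).1| * ∑ i, |(Φ t).2 i| ∂ν ≤ ∫ _, C ∂ν :=
          integral_mono hintc (integrable_const C) hbd
      _ = C := by simp
end

section
/- Let σ(z) = max(z,0) be the ReLU activation and, for x ∈ [0,1]^d, write x̃ = (xᵀ,1)ᵀ ∈ ℝ^{d+1}. For Q > 0 let 𝓕_Q be the set of all functions f : [0,1]^d → ℝ of the form f(x) = ∫ a σ(wᵀ x̃) dρ(a,w) for some probability measure ρ on ℝ × ℝ^{d+1} with ∫ |a| ‖w‖₁ dρ(a,w) ≤ Q. Then for every n and every sample S = (x₁,…,xₙ) ∈ ([0,1]^d)ⁿ, the Rademacher complexity satisfies Rad_S(𝓕_Q) = (1/n) E_ξ[ sup_{f ∈ 𝓕_Q} Σ_{i=1}^n ξᵢ f(xᵢ) ] ≤ 2 Q √( 2 log(2(d+1)) / n ), where ξ₁,…,ξₙ are i.i.d. random signs taking values ±1 with probability 1/2. -/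
open MeasureTheory

/-- The ball of radius `Q` in the Barron norm: functions represented as
`f(x) = ∫ a σ(wᵀ x̃) dρ(a,w)` on `[0,1]^d` by some probability measure `ρ` with
`∫ |a|‖w‖₁ dρ ≤ Q`. -/
def barronBall (d : ℕ) (Q : ℝ) : Set ((Fin d → ℝ) → ℝ) :=
  {f | ∃ ρ : Measure (ℝ × (Fin (d + 1) → ℝ)), IsProbabilityMeasure ρ ∧
    (∀ x ∈ Set.Icc (0 : Fin d → ℝ) 1,
      f x = ∫ p, p.1 * max (∑ i, p.2 i * tilde x i) 0 ∂ρ) ∧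
    Integrable (fun p : ℝ × (Fin (d + 1) → ℝ) => |p.1| * ∑ i, |p.2 i|) ρ ∧
    (∫ p, |p.1| * ∑ i, |p.2 i| ∂ρ) ≤ Q}

set_option maxHeartbeats 1000000

namespace BarronAux

open Real Finset

def sgn (t : Bool) : ℝ := if t then 1 else -1

lemma abs_sgn (t : Bool) : |sgn t| = 1 := by cases t <;> simp [sgn]

lemma sgn_not (t : Bool) : sgn (!t) = - sgn t := by cases t <;> simp [sgn]

/-- the ℓ¹ unit ball in ℝ^{d+1} -/
abbrev Ball (d : ℕ) := {u : Fin (d + 1) → ℝ // ∑ j, |u j| ≤ 1}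

instance {d : ℕ} : Nonempty (Ball d) := ⟨⟨0, by simp⟩⟩

variable {d n : ℕ}

/-- dot product with sample vectors -/
def dot (v : Fin n → Fin (d + 1) → ℝ) (u : Ball d) (i : Fin n) : ℝ := ∑ j, u.1 j * v i j

lemma abs_dot_le (v : Fin n → Fin (d + 1) → ℝ) (hv : ∀ i j, v i j ∈ Set.Icc (0:ℝ) 1)
    (u : Ball d) (i : Fin n) : |dot v u i| ≤ 1 := by
  calc |dot v u i| ≤ ∑ j, |u.1 j * v i j| := Finset.abs_sum_le_sum_abs _ _
    _ ≤ ∑ j, |u.1 j| := by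
        refine Finset.sum_le_sum fun j _ => ?_
        rw [abs_mul]
        have h1 : |v i j| ≤ 1 := by
          rw [abs_of_nonneg (hv i j).1]; exact (hv i j).2
        nlinarith [abs_nonneg (u.1 j)]
    _ ≤ 1 := u.2

lemma bdd_of_le (g : Ball d → ℝ) (M : ℝ) (h : ∀ u, g u ≤ M) : BddAbove (Set.range g) :=
  ⟨M, by rintro _ ⟨u, rfl⟩; exact h u⟩

/-- the key two-point contraction lemma -/
lemma key {ι : Type*} [Nonempty ι] (A w : ι → ℝ)
    (h1 : BddAbove (Set.range fun u => A u + w u))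
    (h2 : BddAbove (Set.range fun u => A u - w u)) :
    (⨆ u, (A u + max (w u) 0)) + (⨆ u, (A u - max (w u) 0)) ≤
      (⨆ u, (A u + w u)) + (⨆ u, (A u - w u)) := by
  set C := (⨆ u, (A u + w u)) + (⨆ u, (A u - w u)) with hC
  have H : ∀ s t : ι, (A s + max (w s) 0) + (A t - max (w t) 0) ≤ C := by
    intro s t
    rcases le_total (w t) (w s) with h | h
    · have hmax : max (w s) 0 - max (w t) 0 ≤ w s - w t := by
        rcases le_total 0 (w s) with hs | hs <;> rcases le_total 0 (w t) with ht | ht <;>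
          simp [max_eq_left, max_eq_right, *] <;> linarith
      have := add_le_add (le_ciSup h1 s) (le_ciSup h2 t)
      simp only [hC]; linarith
    · have hmax : max (w s) 0 ≤ max (w t) 0 := max_le_max h le_rfl
      have := add_le_add (le_ciSup h1 t) (le_ciSup h2 s)
      simp only [hC]; linarith
  have h3 : (⨆ u, (A u + max (w u) 0)) ≤ C - ⨆ u, (A u - max (w u) 0) := by
    refine ciSup_le fun s => ?_
    rw [le_sub_iff_add_le]
    have h4 : (⨆ u, (A u - max (w u) 0)) ≤ C - (A s + max (w s) 0) := by
      refine ciSup_le fun t => ?_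
      linarith [H s t]
    linarith
  linarith

variable (v : Fin n → Fin (d + 1) → ℝ)

noncomputable def Ffun (k : ℕ) (b : Fin n → Bool) : ℝ :=
  ⨆ u : Ball d, ∑ i, sgn (b i) * (if (i : ℕ) < k then dot v u i else max (dot v u i) 0)

lemma contraction_step (hv : ∀ i j, v i j ∈ Set.Icc (0:ℝ) 1) (k : ℕ) (hk : k < n) :
    ∑ b : Fin n → Bool, Ffun v k b ≤ ∑ b : Fin n → Bool, Ffun v (k + 1) b := by
  classical
  set κ : Fin n := ⟨k, hk⟩ with hκ
  have hκval : (κ : ℕ) = k := rfl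
  set Φ : (Fin n → Bool) → (Fin n → Bool) := fun b => Function.update b κ (!(b κ)) with hΦ
  have hΦκ : ∀ b, Φ b κ = !(b κ) := fun b => Function.update_self κ _ b
  have hΦne : ∀ b (i : Fin n), i ≠ κ → Φ b i = b i := fun b i hi =>
    Function.update_of_ne hi _ b
  have hinv : Function.Involutive Φ := by
    intro b; funext i
    by_cases hi : i = κ
    · subst hi; rw [hΦκ, hΦκ, Bool.not_not]
    · rw [hΦne _ _ hi, hΦne _ _ hi]
  have hsum : ∀ G : (Fin n → Bool) → ℝ,
      (∑ b : Fin n → Bool, G (Φ b)) = ∑ b : Fin n → Bool, G b := fun G =>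
    Fintype.sum_bijective Φ hinv.bijective _ _ (fun b => rfl)
  -- term bound
  have hterm : ∀ (t : Bool) (u : Ball d) (i : Fin n) (c : ℕ),
      sgn (t) * (if (i:ℕ) < c then dot v u i else max (dot v u i) 0) ≤ 1 := by
    intro t u i c
    have h1 : |dot v u i| ≤ 1 := abs_dot_le v hv u i
    have hx : |if (i:ℕ) < c then dot v u i else max (dot v u i) 0| ≤ 1 := by
      split
      · exact h1
      · rw [abs_of_nonneg (le_max_right _ _)]
        exact max_le ((le_abs_self _).trans h1) zero_le_one
    calc sgn t * _ ≤ |sgn t * _| := le_abs_self _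
      _ = |sgn t| * |_| := abs_mul _ _
      _ ≤ 1 := by rw [abs_sgn, one_mul]; exact hx
  have main : ∀ b, Ffun v k b + Ffun v k (Φ b) ≤ Ffun v (k+1) b + Ffun v (k+1) (Φ b) := by
    intro b
    set A : Ball d → ℝ := fun u => ∑ i ∈ univ.erase κ,
      sgn (b i) * (if (i:ℕ) < k then dot v u i else max (dot v u i) 0) with hA
    set w : Ball d → ℝ := fun u => dot v u κ with hw
    -- decomposition of full sums
    have decomp : ∀ (c : ℕ) (b' : Fin n → Bool) (u : Ball d),
        (∑ i, sgn (b' i) * (if (i:ℕ) < c then dot v u i else max (dot v u i) 0))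
        = sgn (b' κ) * (if k < c then dot v u κ else max (dot v u κ) 0)
          + ∑ i ∈ univ.erase κ, sgn (b' i) * (if (i:ℕ) < c then dot v u i else max (dot v u i) 0) := by
      intro c b' u
      rw [← Finset.add_sum_erase Finset.univ _ (Finset.mem_univ κ)]
    have hΦerase : ∀ (c : ℕ) (u : Ball d),
        (∑ i ∈ univ.erase κ, sgn (Φ b i) * (if (i:ℕ) < c then dot v u i else max (dot v u i) 0))
        = ∑ i ∈ univ.erase κ, sgn (b i) * (if (i:ℕ) < c then dot v u i else max (dot v u i) 0) := by
      intro c u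
      refine Finset.sum_congr rfl fun i hi => ?_
      rw [hΦne b i (Finset.mem_erase.1 hi).1]
    have hsucc : ∀ (b' : Fin n → Bool) (u : Ball d),
        (∑ i ∈ univ.erase κ, sgn (b' i) * (if (i:ℕ) < k + 1 then dot v u i else max (dot v u i) 0))
        = ∑ i ∈ univ.erase κ, sgn (b' i) * (if (i:ℕ) < k then dot v u i else max (dot v u i) 0) := by
      intro b' u
      refine Finset.sum_congr rfl fun i hi => ?_
      have hik : (i:ℕ) ≠ k := fun h => (Finset.mem_erase.1 hi).1 (Fin.ext h)
      congr 1
      exact if_congr (by omega) rfl rfl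
    -- the four representations
    have e_kb : Ffun v k b = ⨆ u, (A u + sgn (b κ) * max (w u) 0) := by
      refine congrArg iSup (funext fun u => ?_)
      rw [decomp k b u, if_neg (lt_irrefl k), add_comm]
    have e_kΦ : Ffun v k (Φ b) = ⨆ u, (A u - sgn (b κ) * max (w u) 0) := by
      refine congrArg iSup (funext fun u => ?_)
      rw [decomp k (Φ b) u, if_neg (lt_irrefl k), hΦerase k u, hΦκ, sgn_not]
      simp only [hA, hw]; ring
    have e_k1b : Ffun v (k+1) b = ⨆ u, (A u + sgn (b κ) * w u) := by
      refine congrArg iSup (funext fun u => ?_)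
      rw [decomp (k+1) b u, if_pos (Nat.lt_succ_self k), hsucc b u, add_comm]
    have e_k1Φ : Ffun v (k+1) (Φ b) = ⨆ u, (A u - sgn (b κ) * w u) := by
      refine congrArg iSup (funext fun u => ?_)
      rw [decomp (k+1) (Φ b) u, if_pos (Nat.lt_succ_self k), hΦerase (k+1) u, hsucc b u,
        hΦκ, sgn_not]
      simp only [hA, hw]; ring
    -- boundedness
    have hAle : ∀ u, A u ≤ (n : ℝ) := by
      intro u
      calc A u ≤ ∑ _i ∈ univ.erase κ, (1:ℝ) := Finset.sum_le_sum fun i _ => hterm _ _ _ _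
        _ = ((univ.erase κ).card : ℝ) := by simp
        _ ≤ (n : ℝ) := by
            have h := Finset.card_le_univ (univ.erase κ)
            have : Fintype.card (Fin n) = n := Fintype.card_fin n
            exact_mod_cast le_trans h (le_of_eq this)
    have hwle : ∀ u : Ball d, |w u| ≤ 1 := fun u => abs_dot_le v hv u κ
    have h1 : BddAbove (Set.range fun u => A u + w u) :=
      bdd_of_le _ ((n : ℝ) + 1) fun u => by
        have := hAle u; have := (abs_le.1 (hwle u)).2; linarith
    have h2 : BddAbove (Set.range fun u => A u - w u) :=
      bdd_of_le _ ((n : ℝ) + 1) fun u => by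
        have := hAle u; have := (abs_le.1 (hwle u)).1; linarith
    rw [e_kb, e_kΦ, e_k1b, e_k1Φ]
    rcases Bool.dichotomy (b κ) with hb | hb <;> rw [hb]
    · have hs : sgn false = -1 := rfl
      rw [hs]
      simp only [neg_one_mul, ← sub_eq_add_neg, sub_neg_eq_add]
      linarith [key A w h1 h2]
    · have hs : sgn true = 1 := rfl
      rw [hs]
      simp only [one_mul]
      exact key A w h1 h2
  have e1 : (∑ b : Fin n → Bool, Ffun v k b)
      = (∑ b : Fin n → Bool, (Ffun v k b + Ffun v k (Φ b))) / 2 := by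
    rw [Finset.sum_add_distrib, hsum (Ffun v k)]; ring
  have e2 : (∑ b : Fin n → Bool, Ffun v (k+1) b)
      = (∑ b : Fin n → Bool, (Ffun v (k+1) b + Ffun v (k+1) (Φ b))) / 2 := by
    rw [Finset.sum_add_distrib, hsum (Ffun v (k+1))]; ring
  rw [e1, e2]
  have hmain := Finset.sum_le_sum (fun b (_ : b ∈ (univ : Finset (Fin n → Bool))) => main b)
  linarith

lemma contraction (hv : ∀ i j, v i j ∈ Set.Icc (0:ℝ) 1) :
    ∑ b : Fin n → Bool, Ffun v 0 b ≤ ∑ b : Fin n → Bool, Ffun v n b := by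
  have H : ∀ k, k ≤ n → ∑ b : Fin n → Bool, Ffun v 0 b ≤ ∑ b : Fin n → Bool, Ffun v k b := by
    intro k
    induction k with
    | zero => intro _; exact le_rfl
    | succ m ih =>
      intro hm
      exact (ih (Nat.le_of_succ_le hm)).trans (contraction_step v hv m hm)
  exact H n le_rfl

noncomputable def Cmax (b : Fin n → Bool) : ℝ :=
  ⨆ j : Bool × Fin (d + 1), sgn j.1 * ∑ i, sgn (b i) * v i j.2

lemma Cmax_bdd (b : Fin n → Bool) :
    BddAbove (Set.range fun j : Bool × Fin (d + 1) => sgn j.1 * ∑ i, sgn (b i) * v i j.2) :=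
  (Set.finite_range _).bddAbove

lemma abs_le_Cmax (b : Fin n → Bool) (j : Fin (d + 1)) :
    |∑ i, sgn (b i) * v i j| ≤ Cmax v b := by
  rw [Cmax]
  rcases abs_cases (∑ i, sgn (b i) * v i j) with ⟨h, _⟩ | ⟨h, _⟩
  · rw [h]
    have h1 := le_ciSup (Cmax_bdd v b) (true, j)
    rw [show sgn true = (1:ℝ) from rfl, one_mul] at h1; exact h1
  · rw [h]
    have h1 := le_ciSup (Cmax_bdd v b) (false, j)
    rw [show sgn false = (-1:ℝ) from rfl, neg_one_mul] at h1; exact h1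

lemma linear_le_Cmax (b : Fin n → Bool) :
    Ffun v n b ≤ Cmax v b := by
  have hC0 : 0 ≤ Cmax v b := le_trans (abs_nonneg _) (abs_le_Cmax v b 0)
  refine ciSup_le fun u => ?_
  have hrw : (∑ i, sgn (b i) * (if (i : ℕ) < n then dot v u i else max (dot v u i) 0))
      = ∑ j, u.1 j * ∑ i, sgn (b i) * v i j := by
    have hlt : ∀ i : Fin n, ((i:ℕ) < n) = True := fun i => eq_true i.isLt
    simp only [hlt, if_true, dot, Finset.mul_sum]
    rw [Finset.sum_comm]
    exact Finset.sum_congr rfl fun j _ => Finset.sum_congr rfl fun i _ => by ring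
  rw [hrw]
  calc (∑ j, u.1 j * ∑ i, sgn (b i) * v i j)
      ≤ ∑ j, |u.1 j| * Cmax v b := by
        refine Finset.sum_le_sum fun j _ => ?_
        calc u.1 j * ∑ i, sgn (b i) * v i j ≤ |u.1 j * ∑ i, sgn (b i) * v i j| := le_abs_self _
          _ = |u.1 j| * |∑ i, sgn (b i) * v i j| := abs_mul _ _
          _ ≤ |u.1 j| * Cmax v b :=
              mul_le_mul_of_nonneg_left (abs_le_Cmax v b j) (abs_nonneg _)
    _ = (∑ j, |u.1 j|) * Cmax v b := by rw [Finset.sum_mul]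
    _ ≤ 1 * Cmax v b := mul_le_mul_of_nonneg_right u.2 hC0
    _ = Cmax v b := one_mul _

lemma massart (hv : ∀ i j, v i j ∈ Set.Icc (0:ℝ) 1) (hn : 0 < n) :
    ((2 ^ n : ℝ))⁻¹ * ∑ b : Fin n → Bool, Cmax v b ≤
      n * Real.sqrt (2 * Real.log (2 * (d + 1)) / n) := by
  have hnR : (0:ℝ) < n := Nat.cast_pos.2 hn
  set L : ℝ := Real.log (2 * (d + 1)) with hLdef
  have hL : 0 < L := Real.log_pos (by
    have : (0:ℝ) ≤ (d:ℝ) := Nat.cast_nonneg d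
    nlinarith)
  set lam : ℝ := Real.sqrt (2 * L / n) with hlamdef
  have hlam2 : lam ^ 2 = 2 * L / n := Real.sq_sqrt (by positivity)
  have hlampos : 0 < lam := Real.sqrt_pos.2 (by positivity)
  set E : ℝ := ((2 ^ n : ℝ))⁻¹ * ∑ b : Fin n → Bool, Cmax v b with hE
  have hwpos : (0:ℝ) ≤ ((2^n : ℝ))⁻¹ := by positivity
  have hw1 : ∑ _b : Fin n → Bool, ((2^n : ℝ))⁻¹ = 1 := by
    rw [Finset.sum_const, Finset.card_univ, Fintype.card_fun, Fintype.card_bool,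
      Fintype.card_fin, nsmul_eq_mul]
    push_cast
    rw [mul_inv_cancel₀ (by positivity)]
  -- Jensen step
  have hjensen : Real.exp (lam * E) ≤
      ∑ b : Fin n → Bool, ((2^n:ℝ))⁻¹ * Real.exp (lam * Cmax v b) := by
    have h := convexOn_exp.map_sum_le (t := (Finset.univ : Finset (Fin n → Bool)))
      (w := fun _ => ((2^n:ℝ))⁻¹) (p := fun b => lam * Cmax v b)
      (fun _ _ => hwpos) hw1 (fun _ _ => Set.mem_univ _)
    have harg : (∑ b : Fin n → Bool, ((2^n:ℝ))⁻¹ • (lam * Cmax v b)) = lam * E := by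
      simp only [smul_eq_mul]
      rw [← Finset.mul_sum, hE, ← Finset.mul_sum]
      ring
    rw [harg] at h
    simpa only [smul_eq_mul] using h
  -- pointwise max-to-sum step
  have hstep2 : ∀ b : Fin n → Bool, Real.exp (lam * Cmax v b) ≤
      ∑ j : Bool × Fin (d+1), Real.exp (lam * (sgn j.1 * ∑ i, sgn (b i) * v i j.2)) := by
    intro b
    obtain ⟨j0, hj0⟩ := exists_eq_ciSup_of_finite
      (f := fun j : Bool × Fin (d+1) => sgn j.1 * ∑ i, sgn (b i) * v i j.2)
    have hCb : Cmax v b = sgn j0.1 * ∑ i, sgn (b i) * v i j0.2 := by rw [Cmax, ← hj0]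
    rw [hCb]
    exact Finset.single_le_sum
      (f := fun j : Bool × Fin (d+1) => Real.exp (lam * (sgn j.1 * ∑ i, sgn (b i) * v i j.2)))
      (fun j _ => (Real.exp_pos _).le) (Finset.mem_univ j0)
  -- MGF product step
  have hstep3 : ∀ (s : ℝ), s^2 = 1 → ∀ j : Fin (d+1),
      (∑ b : Fin n → Bool, ((2^n:ℝ))⁻¹ * Real.exp (lam * (s * ∑ i, sgn (b i) * v i j)))
        ≤ Real.exp (n * lam^2 / 2) := by
    intro s hs j
    have hexp : ∀ b : Fin n → Bool, Real.exp (lam * (s * ∑ i, sgn (b i) * v i j))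
        = ∏ i, Real.exp (lam * s * (sgn (b i) * v i j)) := by
      intro b
      rw [← Real.exp_sum]
      congr 1
      rw [Finset.mul_sum, Finset.mul_sum]
      exact Finset.sum_congr rfl fun i _ => by ring
    have hprod : (∑ b : Fin n → Bool, ∏ i, Real.exp (lam * s * (sgn (b i) * v i j)))
        = ∏ i, (Real.exp (lam * s * (sgn true * v i j))
            + Real.exp (lam * s * (sgn false * v i j))) := by
      calc (∑ b : Fin n → Bool, ∏ i, Real.exp (lam * s * (sgn (b i) * v i j)))
          = ∑ b ∈ Fintype.piFinset (fun _ : Fin n => (Finset.univ : Finset Bool)),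
              ∏ i, Real.exp (lam * s * (sgn (b i) * v i j)) := by
            rw [Fintype.piFinset_univ]
        _ = ∏ i, ∑ t ∈ (Finset.univ : Finset Bool), Real.exp (lam * s * (sgn t * v i j)) :=
            (Finset.prod_univ_sum (fun _ : Fin n => (Finset.univ : Finset Bool))
              (fun i t => Real.exp (lam * s * (sgn t * v i j)))).symm
        _ = ∏ i, (Real.exp (lam * s * (sgn true * v i j))
              + Real.exp (lam * s * (sgn false * v i j))) := by
            refine Finset.prod_congr rfl fun i _ => ?_
            simp [Fintype.sum_bool]
    have hcosh : ∀ i : Fin n, Real.exp (lam * s * (sgn true * v i j))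
        + Real.exp (lam * s * (sgn false * v i j)) = 2 * Real.cosh (lam * s * v i j) := by
      intro i
      rw [Real.cosh_eq]
      rw [show sgn true = (1:ℝ) from rfl, show sgn false = (-1:ℝ) from rfl]
      rw [show lam * s * (-1 * v i j) = -(lam * s * v i j) by ring,
        show lam * s * (1 * v i j) = lam * s * v i j by ring]
      ring
    have hcoshle : ∀ i : Fin n, Real.cosh (lam * s * v i j) ≤ Real.exp (lam^2 / 2) := by
      intro i
      refine (Real.cosh_le_exp_half_sq _).trans (Real.exp_le_exp.2 ?_)
      have hv1 := (hv i j).1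
      have hv2 := (hv i j).2
      have : (lam * s * v i j)^2 = lam^2 * (v i j)^2 := by
        rw [mul_pow, mul_pow, hs]; ring
      rw [this]
      have hv2' : (v i j)^2 ≤ 1 := by nlinarith
      have hm := mul_le_mul_of_nonneg_left hv2' (sq_nonneg lam)
      linarith
    calc (∑ b : Fin n → Bool, ((2^n:ℝ))⁻¹ * Real.exp (lam * (s * ∑ i, sgn (b i) * v i j)))
        = ((2^n:ℝ))⁻¹ * ∑ b : Fin n → Bool, ∏ i, Real.exp (lam * s * (sgn (b i) * v i j)) := by
          rw [← Finset.mul_sum]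
          congr 1
          exact Finset.sum_congr rfl fun b _ => hexp b
      _ = ((2^n:ℝ))⁻¹ * ∏ i, (2 * Real.cosh (lam * s * v i j)) := by
          rw [hprod]
          congr 1
          exact Finset.prod_congr rfl fun i _ => hcosh i
      _ = ∏ i, Real.cosh (lam * s * v i j) := by
          rw [Finset.prod_mul_distrib, Finset.prod_const, Finset.card_univ, Fintype.card_fin]
          field_simp
      _ ≤ ∏ i, Real.exp (lam^2 / 2) :=
          Finset.prod_le_prod (fun i _ => (Real.cosh_pos (x := lam * s * v i j)).le)
            (fun i _ => hcoshle i)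
      _ = Real.exp (n * lam^2 / 2) := by
          rw [Finset.prod_const, Finset.card_univ, Fintype.card_fin, ← Real.exp_nat_mul]
          ring_nf
  -- combine
  have hcomb : Real.exp (lam * E) ≤ (2*((d:ℝ)+1)) * Real.exp (n * lam^2 / 2) := by
    calc Real.exp (lam * E)
        ≤ ∑ b : Fin n → Bool, ((2^n:ℝ))⁻¹ * Real.exp (lam * Cmax v b) := hjensen
      _ ≤ ∑ b : Fin n → Bool, ((2^n:ℝ))⁻¹ *
            ∑ j : Bool × Fin (d+1), Real.exp (lam * (sgn j.1 * ∑ i, sgn (b i) * v i j.2)) :=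
          Finset.sum_le_sum fun b _ => mul_le_mul_of_nonneg_left (hstep2 b) hwpos
      _ = ∑ j : Bool × Fin (d+1), ∑ b : Fin n → Bool,
            ((2^n:ℝ))⁻¹ * Real.exp (lam * (sgn j.1 * ∑ i, sgn (b i) * v i j.2)) := by
          simp only [Finset.mul_sum]
          rw [Finset.sum_comm]
      _ ≤ ∑ _j : Bool × Fin (d+1), Real.exp (n * lam^2 / 2) :=
          Finset.sum_le_sum fun j _ => hstep3 (sgn j.1) (by cases j.1 <;> norm_num [sgn]) j.2
      _ = (2*((d:ℝ)+1)) * Real.exp (n * lam^2 / 2) := by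
          rw [Finset.sum_const, Finset.card_univ, Fintype.card_prod, Fintype.card_bool,
            Fintype.card_fin, nsmul_eq_mul]
          push_cast
          ring
  have hlog : lam * E ≤ L + n * lam^2 / 2 := by
    have h3 := (Real.le_log_iff_exp_le (by positivity :
      (0:ℝ) < (2*((d:ℝ)+1)) * Real.exp (n * lam^2 / 2))).2 hcomb
    rw [Real.log_mul (by positivity) (Real.exp_ne_zero _), Real.log_exp] at h3
    exact h3
  have h4 : (n:ℝ) * lam^2 / 2 = L := by
    rw [hlam2]
    field_simp
  have h5 : lam * ((n:ℝ) * lam) = 2 * L := by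
    have : lam * ((n:ℝ) * lam) = (n:ℝ) * lam^2 := by ring
    rw [this, hlam2]
    field_simp
  have h6 : lam * E ≤ lam * ((n:ℝ) * lam) := by rw [h5]; linarith
  exact le_of_mul_le_mul_left h6 hlampos

lemma tilde_mem (S : Fin n → (Fin d → ℝ)) (hS : ∀ i, S i ∈ Set.Icc (0 : Fin d → ℝ) 1) :
    ∀ (i : Fin n) (j : Fin (d + 1)), tilde (S i) j ∈ Set.Icc (0:ℝ) 1 := by
  intro i j
  refine Fin.lastCases ?_ ?_ j
  · simp [tilde, Fin.snoc_last]
  · intro j'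
    rw [tilde, Fin.snoc_castSucc]
    exact ⟨(hS i).1 j', (hS i).2 j'⟩

/-- sup of the ReLU process over the ℓ¹ ball -/
noncomputable def Tfun (v : Fin n → Fin (d + 1) → ℝ) (b : Fin n → Bool) : ℝ :=
  ⨆ u : Ball d, ∑ i, sgn (b i) * max (dot v u i) 0

lemma Tfun_bdd (v : Fin n → Fin (d + 1) → ℝ) (hv : ∀ i j, v i j ∈ Set.Icc (0:ℝ) 1)
    (b : Fin n → Bool) :
    BddAbove (Set.range fun u : Ball d => ∑ i, sgn (b i) * max (dot v u i) 0) := by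
  refine bdd_of_le _ (n : ℝ) fun u => ?_
  calc (∑ i, sgn (b i) * max (dot v u i) 0) ≤ ∑ _i : Fin n, (1:ℝ) := by
        refine Finset.sum_le_sum fun i _ => ?_
        have h1 : |dot v u i| ≤ 1 := abs_dot_le v hv u i
        have hx : |max (dot v u i) 0| ≤ 1 := by
          rw [abs_of_nonneg (le_max_right _ _)]
          exact max_le ((le_abs_self _).trans h1) zero_le_one
        calc sgn (b i) * max (dot v u i) 0 ≤ |sgn (b i) * max (dot v u i) 0| := le_abs_self _
          _ = |sgn (b i)| * |max (dot v u i) 0| := abs_mul _ _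
          _ ≤ 1 := by rw [abs_sgn, one_mul]; exact hx
    _ = (n : ℝ) := by simp
  
lemma Tfun_nonneg (v : Fin n → Fin (d + 1) → ℝ) (hv : ∀ i j, v i j ∈ Set.Icc (0:ℝ) 1)
    (b : Fin n → Bool) : 0 ≤ Tfun v b := by
  rw [Tfun]
  refine le_ciSup_of_le (Tfun_bdd v hv b) ⟨0, by simp⟩ (le_of_eq ?_)
  refine (Finset.sum_eq_zero fun i _ => ?_).symm
  have hz : dot v ⟨0, by simp⟩ i = 0 := by simp [dot]
  rw [hz]
  simp

lemma sup_ball_le (Q : ℝ) (hQ : 0 < Q) (S : Fin n → (Fin d → ℝ))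
    (hS : ∀ i, S i ∈ Set.Icc (0 : Fin d → ℝ) 1) (b : Fin n → Bool) :
    (⨆ f ∈ barronBall d Q, ∑ i, (if b i then (1 : ℝ) else -1) * f (S i))
      ≤ Q * (Tfun (fun i => tilde (S i)) b + Tfun (fun i => tilde (S i)) (fun i => !(b i))) := by
  classical
  set v : Fin n → Fin (d + 1) → ℝ := fun i => tilde (S i) with hvdef
  have hv : ∀ i j, v i j ∈ Set.Icc (0:ℝ) 1 := tilde_mem S hS
  set T : ℝ := Tfun v b with hT
  set T' : ℝ := Tfun v (fun i => !(b i)) with hT'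
  have hT0 : 0 ≤ T := Tfun_nonneg v hv b
  have hT'0 : 0 ≤ T' := Tfun_nonneg v hv _
  have hRHS0 : 0 ≤ Q * (T + T') := by positivity
  refine Real.iSup_le (fun f => Real.iSup_le (fun hf => ?_) hRHS0) hRHS0
  obtain ⟨ρ, hprob, hrep, hint, hQle⟩ := hf
  have hsgn : ∀ t : Bool, (if t then (1:ℝ) else -1) = sgn t := fun t => rfl
  simp only [hsgn]
  -- integrability of the neuron integrands
  have hbound : ∀ (i : Fin n) (p : ℝ × (Fin (d+1) → ℝ)),
      ‖p.1 * max (∑ j, p.2 j * tilde (S i) j) 0‖ ≤ |p.1| * ∑ j, |p.2 j| := by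
    intro i p
    rw [norm_mul, Real.norm_eq_abs, Real.norm_eq_abs]
    refine mul_le_mul_of_nonneg_left ?_ (abs_nonneg _)
    rw [abs_of_nonneg (le_max_right _ _)]
    refine max_le ?_ (Finset.sum_nonneg fun j _ => abs_nonneg _)
    calc (∑ j, p.2 j * tilde (S i) j) ≤ ∑ j, |p.2 j * tilde (S i) j| :=
          Finset.sum_le_sum fun j _ => le_abs_self _
      _ ≤ ∑ j, |p.2 j| := by
          refine Finset.sum_le_sum fun j _ => ?_
          rw [abs_mul]
          have h1 : |tilde (S i) j| ≤ 1 := by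
            rw [abs_of_nonneg (tilde_mem S hS i j).1]; exact (tilde_mem S hS i j).2
          nlinarith [abs_nonneg (p.2 j)]
  have hmeas : ∀ i : Fin n, AEStronglyMeasurable
      (fun p : ℝ × (Fin (d+1) → ℝ) => p.1 * max (∑ j, p.2 j * tilde (S i) j) 0) ρ := by
    intro i
    apply Continuous.aestronglyMeasurable
    exact continuous_fst.mul ((continuous_finset_sum _ fun j _ =>
      ((continuous_apply j).comp continuous_snd).mul continuous_const).max continuous_const)
  have hinti : ∀ i : Fin n, Integrable
      (fun p : ℝ × (Fin (d+1) → ℝ) => p.1 * max (∑ j, p.2 j * tilde (S i) j) 0) ρ :=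
    fun i => hint.mono' (hmeas i) (ae_of_all _ (hbound i))
  have hsum_eq : (∑ i, sgn (b i) * f (S i))
      = ∫ p, ∑ i, sgn (b i) * (p.1 * max (∑ j, p.2 j * tilde (S i) j) 0) ∂ρ := by
    rw [integral_finset_sum _ (fun i _ => (hinti i).const_mul _)]
    refine Finset.sum_congr rfl fun i _ => ?_
    rw [hrep _ (hS i), integral_const_mul]
  -- pointwise bound
  have hptwise : ∀ p : ℝ × (Fin (d+1) → ℝ),
      (∑ i, sgn (b i) * (p.1 * max (∑ j, p.2 j * tilde (S i) j) 0))
        ≤ |p.1| * (∑ j, |p.2 j|) * (T + T') := by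
    intro p
    have hc0 : 0 ≤ ∑ j, |p.2 j| := Finset.sum_nonneg fun j _ => abs_nonneg _
    rcases eq_or_lt_of_le hc0 with hc | hc
    · have hz : ∀ j, p.2 j = 0 := by
        intro j
        have := (Finset.sum_eq_zero_iff_of_nonneg fun j _ => abs_nonneg (p.2 j)).1 hc.symm j
          (Finset.mem_univ j)
        exact abs_eq_zero.1 this
      have hdz : ∀ i : Fin n, (∑ j, p.2 j * tilde (S i) j) = 0 :=
        fun i => Finset.sum_eq_zero fun j _ => by rw [hz j, zero_mul]
      have hL0 : (∑ i, sgn (b i) * (p.1 * max (∑ j, p.2 j * tilde (S i) j) 0)) = 0 := by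
        refine Finset.sum_eq_zero fun i _ => ?_
        rw [hdz i]
        simp
      rw [hL0, ← hc]
      simp
    · set c : ℝ := ∑ j, |p.2 j| with hcdef
      have hcpos : 0 < c := hc
      set u : Ball d := ⟨fun j => c⁻¹ * p.2 j, by
        refine le_of_eq ?_
        have : (∑ j, |c⁻¹ * p.2 j|) = c⁻¹ * ∑ j, |p.2 j| := by
          rw [Finset.mul_sum]
          refine Finset.sum_congr rfl fun j _ => ?_
          rw [abs_mul, abs_of_nonneg (by positivity : (0:ℝ) ≤ c⁻¹)]
        rw [this, ← hcdef, inv_mul_cancel₀ (ne_of_gt hcpos)]⟩ with hu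
      have hdot : ∀ i : Fin n, (∑ j, p.2 j * tilde (S i) j) = c * dot v u i := by
        intro i
        rw [dot, Finset.mul_sum]
        refine Finset.sum_congr rfl fun j _ => ?_
        rw [hu]
        field_simp
        rfl
      have hmax : ∀ i : Fin n, max (∑ j, p.2 j * tilde (S i) j) 0 = c * max (dot v u i) 0 := by
        intro i
        rw [hdot i, mul_max_of_nonneg _ _ hcpos.le, mul_zero]
      have hL : (∑ i, sgn (b i) * (p.1 * max (∑ j, p.2 j * tilde (S i) j) 0))
          = (p.1 * c) * ∑ i, sgn (b i) * max (dot v u i) 0 := by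
        rw [Finset.mul_sum]
        refine Finset.sum_congr rfl fun i _ => ?_
        rw [hmax i]; ring
      set D : ℝ := ∑ i, sgn (b i) * max (dot v u i) 0 with hD
      have hDT : D ≤ T := le_ciSup (Tfun_bdd v hv b) u
      have hDT' : -D ≤ T' := by
        have hnegD : -D = ∑ i, sgn ((fun i => !(b i)) i) * max (dot v u i) 0 := by
          rw [hD, ← Finset.sum_neg_distrib]
          refine Finset.sum_congr rfl fun i _ => ?_
          rw [sgn_not]
          ring
        rw [hnegD]
        exact le_ciSup (Tfun_bdd v hv _) u
      rw [hL]
      have habs : p.1 ≤ |p.1| ∧ -p.1 ≤ |p.1| := ⟨le_abs_self _, neg_le_abs _⟩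
      rcases le_or_gt 0 p.1 with ha | ha
      · calc (p.1 * c) * D ≤ (p.1 * c) * T :=
            mul_le_mul_of_nonneg_left hDT (by positivity)
          _ ≤ |p.1| * c * (T + T') := by
              rw [abs_of_nonneg ha]
              nlinarith [mul_nonneg (mul_nonneg ha hcpos.le) hT'0]
      · have : (p.1 * c) * D = ((-p.1) * c) * (-D) := by ring
        rw [this]
        calc ((-p.1) * c) * (-D) ≤ ((-p.1) * c) * T' := by
              refine mul_le_mul_of_nonneg_left hDT'
                (mul_nonneg (by linarith) hcpos.le)
          _ ≤ |p.1| * c * (T + T') := by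
              rw [abs_of_neg ha]
              nlinarith [mul_nonneg (mul_nonneg (show (0:ℝ) ≤ -p.1 by linarith) hcpos.le) hT0]
  -- integrate
  have hintL : Integrable
      (fun p : ℝ × (Fin (d+1) → ℝ) => ∑ i, sgn (b i) * (p.1 * max (∑ j, p.2 j * tilde (S i) j) 0)) ρ :=
    integrable_finset_sum _ fun i _ => (hinti i).const_mul _
  have hintR : Integrable
      (fun p : ℝ × (Fin (d+1) → ℝ) => |p.1| * (∑ j, |p.2 j|) * (T + T')) ρ := hint.mul_const _
  calc (∑ i, sgn (b i) * f (S i))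
      = ∫ p, ∑ i, sgn (b i) * (p.1 * max (∑ j, p.2 j * tilde (S i) j) 0) ∂ρ := hsum_eq
    _ ≤ ∫ p, |p.1| * (∑ j, |p.2 j|) * (T + T') ∂ρ := integral_mono hintL hintR hptwise
    _ = (∫ p, |p.1| * (∑ j, |p.2 j|) ∂ρ) * (T + T') := integral_mul_const _ _
    _ ≤ Q * (T + T') := mul_le_mul_of_nonneg_right hQle (by positivity)


lemma Tfun_eq_Ffun_zero (v : Fin n → Fin (d + 1) → ℝ) (b : Fin n → Bool) :
    Tfun v b = Ffun v 0 b := by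
  refine congrArg iSup (funext fun u => Finset.sum_congr rfl fun i _ => ?_)
  rw [if_neg (Nat.not_lt_zero _)]

end BarronAux

open BarronAux in
/-- Rademacher complexity bound for the Barron ball:
`Rad_S(𝓕_Q) ≤ 2Q√(2 log(2(d+1))/n)` for any sample `S ⊆ [0,1]^d`. The random signs are
modeled by uniform random booleans. -/
theorem barron_ball_rademacher
    (d : ℕ) (Q : ℝ) (hQ : 0 < Q) (n : ℕ) (hn : 0 < n)
    (S : Fin n → (Fin d → ℝ)) (hS : ∀ i, S i ∈ Set.Icc (0 : Fin d → ℝ) 1) :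
    (1 / n : ℝ) * ∫ b : Fin n → Bool,
        (⨆ f ∈ barronBall d Q, ∑ i, (if b i then (1 : ℝ) else -1) * f (S i))
      ∂((PMF.uniformOfFintype (Fin n → Bool)).toMeasure)
      ≤ 2 * Q * Real.sqrt (2 * Real.log (2 * (d + 1)) / n) := by
  classical
  set v : Fin n → Fin (d + 1) → ℝ := fun i => tilde (S i) with hvdef
  have hv : ∀ i j, v i j ∈ Set.Icc (0:ℝ) 1 := tilde_mem S hS
  set G : (Fin n → Bool) → ℝ :=
    fun b => ⨆ f ∈ barronBall d Q, ∑ i, (if b i then (1 : ℝ) else -1) * f (S i) with hG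
  set s : ℝ := Real.sqrt (2 * Real.log (2 * (d + 1)) / n) with hs
  have hInt : (∫ b : Fin n → Bool, G b ∂((PMF.uniformOfFintype (Fin n → Bool)).toMeasure))
      = ∑ b : Fin n → Bool, ((2 ^ n : ℝ))⁻¹ * G b := by
    rw [MeasureTheory.integral_fintype (Integrable.of_finite)]
    refine Finset.sum_congr rfl fun b _ => ?_
    rw [measureReal_def, PMF.toMeasure_apply_singleton _ _ (measurableSet_singleton b),
      PMF.uniformOfFintype_apply, smul_eq_mul]
    congr 1
    rw [ENNReal.toReal_inv, ENNReal.toReal_natCast]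
    congr 1
    rw [Fintype.card_fun, Fintype.card_bool, Fintype.card_fin]
    push_cast
    ring
  have h1 : ∀ b : Fin n → Bool, G b ≤ Q * (Tfun v b + Tfun v (fun i => !(b i))) :=
    fun b => sup_ball_le Q hQ S hS b
  have hsum_not : (∑ b : Fin n → Bool, Tfun v (fun i => !(b i)))
      = ∑ b : Fin n → Bool, Tfun v b := by
    have hinv : Function.Involutive (fun b : Fin n → Bool => fun i => !(b i)) := by
      intro b; funext i; simp
    exact Fintype.sum_bijective _ hinv.bijective _ _ (fun b => rfl)
  have h2 : (∑ b : Fin n → Bool, G b) ≤ 2 * Q * ∑ b : Fin n → Bool, Tfun v b := by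
    calc (∑ b : Fin n → Bool, G b)
        ≤ ∑ b : Fin n → Bool, Q * (Tfun v b + Tfun v (fun i => !(b i))) :=
          Finset.sum_le_sum fun b _ => h1 b
      _ = Q * ((∑ b : Fin n → Bool, Tfun v b) + ∑ b : Fin n → Bool, Tfun v (fun i => !(b i))) := by
          rw [← Finset.mul_sum, Finset.sum_add_distrib]
      _ = 2 * Q * ∑ b : Fin n → Bool, Tfun v b := by rw [hsum_not]; ring
  have h3 : (∑ b : Fin n → Bool, Tfun v b) ≤ ∑ b : Fin n → Bool, Cmax v b := by
    calc (∑ b : Fin n → Bool, Tfun v b)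
        = ∑ b : Fin n → Bool, Ffun v 0 b :=
          Finset.sum_congr rfl fun b _ => Tfun_eq_Ffun_zero v b
      _ ≤ ∑ b : Fin n → Bool, Ffun v n b := contraction v hv
      _ ≤ ∑ b : Fin n → Bool, Cmax v b :=
          Finset.sum_le_sum fun b _ => linear_le_Cmax v b
  have h4 : ((2 ^ n : ℝ))⁻¹ * ∑ b : Fin n → Bool, Cmax v b ≤ (n : ℝ) * s :=
    massart v hv hn
  have hw0 : (0:ℝ) ≤ ((2 ^ n : ℝ))⁻¹ := by positivity
  have hchain : ((2 ^ n : ℝ))⁻¹ * ∑ b : Fin n → Bool, G b ≤ 2 * Q * ((n : ℝ) * s) := by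
    calc ((2 ^ n : ℝ))⁻¹ * ∑ b : Fin n → Bool, G b
        ≤ ((2 ^ n : ℝ))⁻¹ * (2 * Q * ∑ b : Fin n → Bool, Tfun v b) :=
          mul_le_mul_of_nonneg_left h2 hw0
      _ = 2 * Q * (((2 ^ n : ℝ))⁻¹ * ∑ b : Fin n → Bool, Tfun v b) := by ring
      _ ≤ 2 * Q * (((2 ^ n : ℝ))⁻¹ * ∑ b : Fin n → Bool, Cmax v b) :=
          mul_le_mul_of_nonneg_left (mul_le_mul_of_nonneg_left h3 hw0) (by positivity)
      _ ≤ 2 * Q * ((n : ℝ) * s) := mul_le_mul_of_nonneg_left h4 (by positivity)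
  have hnR : (0:ℝ) < n := Nat.cast_pos.2 hn
  calc (1 / n : ℝ) * ∫ b : Fin n → Bool, G b ∂((PMF.uniformOfFintype (Fin n → Bool)).toMeasure)
      = (1 / n : ℝ) * (((2 ^ n : ℝ))⁻¹ * ∑ b : Fin n → Bool, G b) := by
        rw [hInt, ← Finset.mul_sum]
    _ ≤ (1 / n : ℝ) * (2 * Q * ((n : ℝ) * s)) :=
        mul_le_mul_of_nonneg_left hchain (by positivity)
    _ = 2 * Q * s := by field_simp
end

section
/- Let (Ω₂, π²), (Ω₁, π¹), (Ω₀, π⁰) be probability spaces and let a² ∈ L²(π²), a¹ ∈ L²(π² ⊗ π¹), a⁰ ∈ L²(π¹ ⊗ π⁰) be measurable functions (a² : Ω₂ → ℝ, a¹ : Ω₂ × Ω₁ → ℝ, a⁰ : Ω₁ × Ω₀ → ℝ). Then ∫_{Ω₂×Ω₁×Ω₀} | a²(θ₂) a¹(θ₂,θ₁) a⁰(θ₁,θ₀) | d(π²⊗π¹⊗π⁰)(θ₂,θ₁,θ₀) ≤ ‖a²‖_{L²(π²)} ‖a¹‖_{L²(π²⊗π¹)} ‖a⁰‖_{L²(π¹⊗π⁰)}.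 -/
open MeasureTheory

/-- The path-norm proxy of a network with two hidden layers is controlled by the product of
the `L²`-norms of the weight functions across layers:
`∫ |a²(θ₂) a¹(θ₂,θ₁) a⁰(θ₁,θ₀)| ≤ ‖a²‖_{L²(π₂)} ‖a¹‖_{L²(π₂⊗π₁)} ‖a⁰‖_{L²(π₁⊗π₀)}`. -/
theorem path_norm_le_prod_L2_norms
    {Ω₂ Ω₁ Ω₀ : Type*} [MeasurableSpace Ω₂] [MeasurableSpace Ω₁] [MeasurableSpace Ω₀]
    (π₂ : Measure Ω₂) (π₁ : Measure Ω₁) (π₀ : Measure Ω₀)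
    [IsProbabilityMeasure π₂] [IsProbabilityMeasure π₁] [IsProbabilityMeasure π₀]
    (a2 : Ω₂ → ℝ) (a1 : Ω₂ × Ω₁ → ℝ) (a0 : Ω₁ × Ω₀ → ℝ)
    (ha2m : Measurable a2) (ha1m : Measurable a1) (ha0m : Measurable a0)
    (ha2 : MemLp a2 2 π₂) (ha1 : MemLp a1 2 (π₂.prod π₁)) (ha0 : MemLp a0 2 (π₁.prod π₀)) :
    (∫ θ : Ω₂ × Ω₁ × Ω₀, |a2 θ.1 * a1 (θ.1, θ.2.1) * a0 (θ.2.1, θ.2.2)|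
        ∂(π₂.prod (π₁.prod π₀)))
      ≤ Real.sqrt (∫ θ₂, (a2 θ₂) ^ 2 ∂π₂)
        * Real.sqrt (∫ θ, (a1 θ) ^ 2 ∂(π₂.prod π₁))
        * Real.sqrt (∫ θ, (a0 θ) ^ 2 ∂(π₁.prod π₀)) := by
  set μ : Measure (Ω₂ × Ω₁ × Ω₀) := π₂.prod (π₁.prod π₀) with hμ
  -- the measure-preserving projection (θ₂, θ₁, θ₀) ↦ (θ₂, θ₁)
  have hmp : MeasurePreserving (fun θ : Ω₂ × Ω₁ × Ω₀ => (θ.1, θ.2.1)) μ (π₂.prod π₁) :=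
    (MeasurePreserving.id π₂).prod
      ⟨measurable_fst, by simp [Measure.map_fst_prod]⟩
  set f : Ω₂ × Ω₁ × Ω₀ → ℝ := fun θ => |a2 θ.1| * |a0 θ.2| with hf
  set g : Ω₂ × Ω₁ × Ω₀ → ℝ := fun θ => |a1 (θ.1, θ.2.1)| with hg
  have ha2sq : Integrable (fun θ₂ => a2 θ₂ ^ 2) π₂ :=
    (memLp_two_iff_integrable_sq ha2.1).mp ha2
  have ha1sq : Integrable (fun θ => a1 θ ^ 2) (π₂.prod π₁) :=
    (memLp_two_iff_integrable_sq ha1.1).mp ha1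
  have ha0sq : Integrable (fun θ => a0 θ ^ 2) (π₁.prod π₀) :=
    (memLp_two_iff_integrable_sq ha0.1).mp ha0
  have hfmes : Measurable f := ((ha2m.comp measurable_fst).abs.mul
    (ha0m.comp measurable_snd).abs)
  have hfsq : Integrable (fun θ => f θ ^ 2) μ := by
    have : Integrable (fun θ : Ω₂ × (Ω₁ × Ω₀) => (a2 θ.1 ^ 2) * (a0 θ.2 ^ 2)) μ :=
      ha2sq.mul_prod ha0sq
    refine this.congr (Filter.Eventually.of_forall fun θ => ?_)
    simp [hf, mul_pow, sq_abs]
  have hfL2 : MemLp f 2 μ :=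
    (memLp_two_iff_integrable_sq hfmes.aestronglyMeasurable).mpr hfsq
  have hgL2 : MemLp g 2 μ := by
    have := (ha1.abs).comp_measurePreserving hmp
    exact this
  have hconj : (2 : ℝ).HolderConjugate 2 := Real.holderConjugate_iff_eq_conjExponent (by norm_num) |>.mpr (by norm_num)
  have key := integral_mul_le_Lp_mul_Lq_of_nonneg (μ := μ) hconj
      (Filter.Eventually.of_forall fun θ => mul_nonneg (abs_nonneg _) (abs_nonneg _))
      (Filter.Eventually.of_forall fun θ => abs_nonneg _)
      (by simpa using hfL2) (by simpa using hgL2)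
  -- rewrite the LHS
  have hLHS : (∫ θ : Ω₂ × Ω₁ × Ω₀, |a2 θ.1 * a1 (θ.1, θ.2.1) * a0 (θ.2.1, θ.2.2)| ∂μ)
      = ∫ θ, f θ * g θ ∂μ := by
    refine integral_congr_ae (Filter.Eventually.of_forall fun θ => ?_)
    simp only [hf, hg, abs_mul]
    ring
  -- compute ∫ f ^ 2
  have hf2 : (∫ θ, f θ ^ (2 : ℝ) ∂μ)
      = (∫ θ₂, a2 θ₂ ^ 2 ∂π₂) * (∫ θ, a0 θ ^ 2 ∂(π₁.prod π₀)) := by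
    have h1 : (∫ θ, f θ ^ (2 : ℝ) ∂μ)
        = ∫ θ : Ω₂ × (Ω₁ × Ω₀), (a2 θ.1 ^ 2) * (a0 θ.2 ^ 2) ∂μ := by
      refine integral_congr_ae (Filter.Eventually.of_forall fun θ => ?_)
      simp [hf, Real.rpow_two, mul_pow, sq_abs]
    exact h1.trans (integral_prod_mul (fun θ₂ => a2 θ₂ ^ 2) (fun θ => a0 θ ^ 2))
  have hg2 : (∫ θ, g θ ^ (2 : ℝ) ∂μ) = ∫ θ, a1 θ ^ 2 ∂(π₂.prod π₁) := by
    have hφm : Measurable (fun θ : Ω₂ × Ω₁ × Ω₀ => (θ.1, θ.2.1)) :=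
      measurable_fst.prodMk (measurable_fst.comp measurable_snd)
    have h1 : (∫ θ, g θ ^ (2 : ℝ) ∂μ)
        = ∫ θ, (fun p => a1 p ^ 2) ((fun θ : Ω₂ × Ω₁ × Ω₀ => (θ.1, θ.2.1)) θ) ∂μ := by
      refine integral_congr_ae (Filter.Eventually.of_forall fun θ => ?_)
      simp [hg, Real.rpow_two, sq_abs]
    rw [h1, ← integral_map hφm.aemeasurable
      ((ha1m.pow_const 2).aestronglyMeasurable (μ := Measure.map _ μ)), hmp.map_eq]
  rw [hLHS]
  refine key.trans (le_of_eq ?_)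
  rw [hf2, hg2]
  have h2nn : (0:ℝ) ≤ ∫ θ₂, a2 θ₂ ^ 2 ∂π₂ := integral_nonneg fun _ => sq_nonneg _
  have h0nn : (0:ℝ) ≤ ∫ θ, a0 θ ^ 2 ∂(π₁.prod π₀) := integral_nonneg fun _ => sq_nonneg _
  rw [← Real.sqrt_eq_rpow, ← Real.sqrt_eq_rpow, Real.sqrt_mul h2nn]
  ring
end

section
/- Let a₁, …, aₙ ≥ 0, let a = (1/n) Σ_{i=1}^n a_i and s² = (1/n) Σ_{i=1}^n a_i² − a². Fix a learning rate η > 0 and x₀ ∈ ℝ, and define the stochastic gradient descent iteration x_{t+1} = (1 − η a_{ξ_t}) x_t for t ≥ 0, where ξ₀, ξ₁, ξ₂, … are i.i.d. random indices uniform on {1,…,n}, independent of everything else. Then for every t ≥ 0, E[x_t] = (1 − η a)^t x₀ and E[x_t²] = ( (1 − η a)² + η² s² )^t x₀². -/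
open MeasureTheory ProbabilityTheory

section Aux
variable {Ω : Type*} [MeasurableSpace Ω] (Q : Measure Ω) [IsProbabilityMeasure Q]

lemma sgd_aux_prod (Y : ℕ → Ω → ℝ) (hYmeas : ∀ k, Measurable (Y k))
    (hYint : ∀ k, Integrable (Y k) Q)
    (hYindep : iIndepFun Y Q) :
    ∀ t : ℕ, Integrable (∏ k ∈ Finset.range t, Y k) Q ∧
      (∫ ω, (∏ k ∈ Finset.range t, Y k) ω ∂Q)
        = ∏ k ∈ Finset.range t, ∫ ω, Y k ω ∂Q := by
  intro t
  induction t with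
  | zero =>
    refine ⟨by rw [Finset.prod_range_zero]; exact integrable_const (1:ℝ), by simp⟩
  | succ t ih =>
    have hInd := hYindep.indepFun_prod_range_succ hYmeas t
    rw [Finset.prod_range_succ, Finset.prod_range_succ]
    refine ⟨hInd.integrable_mul ih.1 (hYint t), ?_⟩
    have := hInd.integral_mul_eq_mul_integral ih.1.aestronglyMeasurable (hYint t).aestronglyMeasurable
    rw [show (∫ ω, ((∏ k ∈ Finset.range t, Y k) * Y t) ω ∂Q) = integral Q ((∏ k ∈ Finset.range t, Y k) * Y t) from rfl, this, ih.2]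

end Aux

/-- First and second moments of SGD on the one-dimensional quadratic objective
`f(x) = (1/(2n)) ∑ a_i x²`: with i.i.d. uniform indices `ξ_t` and iteration
`x_{t+1} = (1 - η a_{ξ_t}) x_t`, one has `E[x_t] = (1 - ηa)^t x₀` and
`E[x_t²] = ((1 - ηa)² + η²s²)^t x₀²`, where `a` is the sharpness and `s²` the
non-uniformity. -/
theorem sgd_sharpness_nonuniformity_moments
    (n : ℕ) (hn : 0 < n) (a : Fin n → ℝ) (ha : ∀ i, 0 ≤ a i)
    (η : ℝ) (hη : 0 < η) (x₀ : ℝ)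
    {Ω : Type*} [MeasurableSpace Ω] (Q : Measure Ω) [IsProbabilityMeasure Q]
    (ξ : ℕ → Ω → Fin n) (hξmeas : ∀ t, Measurable (ξ t))
    (hindep : iIndepFun ξ Q)
    (hunif : ∀ t, Measure.map (ξ t) Q =
      (@PMF.uniformOfFintype (Fin n) _ ⟨⟨0, hn⟩⟩).toMeasure)
    (x : ℕ → Ω → ℝ)
    (hx0 : ∀ ω, x 0 ω = x₀)
    (hxrec : ∀ t ω, x (t + 1) ω = (1 - η * a (ξ t ω)) * x t ω) :
    ∀ t : ℕ,
      (∫ ω, x t ω ∂Q) = (1 - η * ((1 / n : ℝ) * ∑ i, a i)) ^ t * x₀ ∧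
      (∫ ω, (x t ω) ^ 2 ∂Q)
        = ((1 - η * ((1 / n : ℝ) * ∑ i, a i)) ^ 2
            + η ^ 2 * ((1 / n : ℝ) * ∑ i, (a i) ^ 2
                - ((1 / n : ℝ) * ∑ i, a i) ^ 2)) ^ t * x₀ ^ 2 := by
  haveI : Nonempty (Fin n) := ⟨⟨0, hn⟩⟩
  have hn' : (n : ℝ) ≠ 0 := Nat.cast_ne_zero.mpr hn.ne'
  -- generic facts for a function g of ξ k
  have key : ∀ g : Fin n → ℝ,
      (∀ k, Integrable (fun ω => g (ξ k ω)) Q) ∧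
      (∀ k, (∫ ω, g (ξ k ω) ∂Q) = (1 / n : ℝ) * ∑ i, g i) := by
    intro g
    have hmg : Measurable g := measurable_of_countable g
    constructor
    · intro k
      have : Integrable g (Measure.map (ξ k) Q) := by
        rw [hunif k]; exact .of_finite
      exact (integrable_map_measure hmg.aestronglyMeasurable
        (hξmeas k).aemeasurable).mp this
    · intro k
      rw [show (∫ ω, g (ξ k ω) ∂Q) = ∫ i, g i ∂(Measure.map (ξ k) Q) from
        (integral_map (hξmeas k).aemeasurable hmg.aestronglyMeasurable).symm,
        hunif k, PMF.integral_eq_sum]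
      simp only [PMF.uniformOfFintype_apply, Fintype.card_fin, smul_eq_mul]
      rw [Finset.mul_sum]
      congr 1; ext i
      rw [ENNReal.toReal_inv]
      norm_num
  -- closed form for x t
  have hxform : ∀ t ω, x t ω = (∏ k ∈ Finset.range t, (1 - η * a (ξ k ω))) * x₀ := by
    intro t
    induction t with
    | zero => intro ω; simp [hx0 ω]
    | succ t ih =>
      intro ω
      rw [hxrec t ω, ih ω, Finset.prod_range_succ]; ring
  intro t
  -- first moment
  have h1 : (∫ ω, x t ω ∂Q) = (1 - η * ((1 / n : ℝ) * ∑ i, a i)) ^ t * x₀ := by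
    set g : Fin n → ℝ := fun i => 1 - η * a i with hg
    have hmg : Measurable g := measurable_of_countable g
    have hprod := sgd_aux_prod Q (fun k ω => g (ξ k ω))
      (fun k => hmg.comp (hξmeas k)) ((key g).1)
      (hindep.comp (fun _ => g) (fun _ => hmg)) t
    have : (∫ ω, x t ω ∂Q)
        = (∫ ω, (∏ k ∈ Finset.range t, fun ω => g (ξ k ω)) ω ∂Q) * x₀ := by
      rw [← integral_mul_const]
      congr 1; ext ω
      rw [hxform t ω]
      simp [hg]
    rw [this, hprod.2]
    congr 1
    rw [Finset.prod_congr rfl (fun k _ => (key g).2 k), Finset.prod_const,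
      Finset.card_range]
    congr 1
    simp only [hg, Finset.sum_sub_distrib, Finset.sum_const, Finset.card_univ,
      Fintype.card_fin, nsmul_eq_mul, mul_one, ← Finset.mul_sum]
    field_simp
  refine ⟨h1, ?_⟩
  -- second moment
  set g : Fin n → ℝ := fun i => (1 - η * a i) ^ 2 with hg
  have hmg : Measurable g := measurable_of_countable g
  have hprod := sgd_aux_prod Q (fun k ω => g (ξ k ω))
    (fun k => hmg.comp (hξmeas k)) ((key g).1)
    (hindep.comp (fun _ => g) (fun _ => hmg)) t
  have : (∫ ω, (x t ω) ^ 2 ∂Q)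
      = (∫ ω, (∏ k ∈ Finset.range t, fun ω => g (ξ k ω)) ω ∂Q) * x₀ ^ 2 := by
    rw [← integral_mul_const]
    congr 1; ext ω
    rw [hxform t ω]
    simp [hg, mul_pow, Finset.prod_pow]
  rw [this, hprod.2]
  congr 1
  rw [Finset.prod_congr rfl (fun k _ => (key g).2 k), Finset.prod_const,
    Finset.card_range]
  congr 1
  have expand : ∑ i, g i = ∑ i, (1 - 2 * η * a i + η ^ 2 * (a i) ^ 2) := by
    apply Finset.sum_congr rfl; intro i _; simp [hg]; ring
  rw [expand]
  simp only [Finset.sum_add_distrib, Finset.sum_sub_distrib, Finset.sum_const,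
    Finset.card_univ, Fintype.card_fin, nsmul_eq_mul, mul_one, ← Finset.mul_sum]
  field_simp
  ring
end
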